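/- arXiv:1810.03178 — 12 statements merged into one kernel-verified Lean document; each statement's English description precedes it below -/
import Mathlib

section
/- Let A be a type, let S be the free semiring on A, and let E be a set of elements of S. For all p, q ∈ S, the pair (p, q) belongs to the semiring congruence on S generated by the set of pairs {(e, 1) : e ∈ E} if and only if there exists r ∈ S which is an expansion of both p and q. -/
/-- The free semiring on the alphabet `A`, realized as the monoid algebra of the
free monoid on `A` with natural number coefficients. -/
abbrev FreeSemiring' (A : Type*) := MonoidAlgebra ℕ (FreeMonoid A)

/-- The monomial corresponding to a word `u`. -/
noncomputable def mono {A : Type*} (u : FreeMonoid A) : FreeSemiring' A :=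
  MonoidAlgebra.of ℕ (FreeMonoid A) u

/-- `x` is a single expansion of the monomial `[u]`: it has the form `[v] * e * [w]`
with `e ∈ E` and `u = v * w`. -/
def IsSingleExpansionOfMonomial {A : Type*} (E : Set (FreeSemiring' A))
    (u : FreeMonoid A) (x : FreeSemiring' A) : Prop :=
  ∃ (v w : FreeMonoid A) (e : FreeSemiring' A),
    e ∈ E ∧ u = v * w ∧ x = mono v * e * mono w

/-- `q` is a single expansion of `p`: one monomial summand of `p` is replaced by
one of its single expansions. -/
def IsSingleExpansion {A : Type*} (E : Set (FreeSemiring' A))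
    (p q : FreeSemiring' A) : Prop :=
  ∃ (u : FreeMonoid A) (s x : FreeSemiring' A),
    p = mono u + s ∧ IsSingleExpansionOfMonomial E u x ∧ q = x + s

/-- `q` is an expansion of `p`: `q` is obtained from `p` by a finite (possibly empty)
sequence of single expansion steps. -/
def IsExpansion {A : Type*} (E : Set (FreeSemiring' A)) :
    FreeSemiring' A → FreeSemiring' A → Prop :=
  Relation.ReflTransGen (IsSingleExpansion E)

namespace StmtAux

open Relation

attribute [local instance] Classical.decEq

variable {A : Type*} {E : Set (FreeSemiring' A)}

lemma mono_mul (u v : FreeMonoid A) : mono (u * v) = mono u * mono v :=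
  map_mul (MonoidAlgebra.of ℕ (FreeMonoid A)) u v

lemma mono_one : (mono (1 : FreeMonoid A) : FreeSemiring' A) = 1 :=
  map_one (MonoidAlgebra.of ℕ (FreeMonoid A))

lemma sum_map_mono (m : Multiset (FreeMonoid A)) :
    ((m.map mono).sum : FreeSemiring' A) = MonoidAlgebra.ofCoeff (Multiset.toFinsupp m) := by
  induction m using Multiset.induction with
  | empty => simp
  | cons a s ih =>
    rw [Multiset.map_cons, Multiset.sum_cons, ih, ← Multiset.singleton_add,
      Multiset.toFinsupp_add, Multiset.toFinsupp_singleton]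
    rfl

lemma sum_map_mono_inj {m₁ m₂ : Multiset (FreeMonoid A)}
    (h : ((m₁.map mono).sum : FreeSemiring' A) = (m₂.map mono).sum) : m₁ = m₂ := by
  rw [sum_map_mono, sum_map_mono] at h
  exact Multiset.toFinsupp.injective (MonoidAlgebra.ofCoeff_injective h)

/-- The multiset of monomials of `p`. -/
noncomputable def M (p : FreeSemiring' A) : Multiset (FreeMonoid A) :=
  Multiset.toFinsupp.symm p.coeff

lemma M_spec (p : FreeSemiring' A) : ((M p).map mono).sum = p := by
  rw [sum_map_mono, M]
  exact congrArg MonoidAlgebra.ofCoeff (Multiset.toFinsupp.apply_symm_apply p.coeff)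

/-- A pair `(u, x)` is good if `x` is `[u]` or a single expansion of `[u]`. -/
def Good (E : Set (FreeSemiring' A)) (a : FreeMonoid A × FreeSemiring' A) : Prop :=
  a.2 = mono a.1 ∨ IsSingleExpansionOfMonomial E a.1 a.2

/-- Parallel expansion: replace each monomial of `p` simultaneously, by itself or
by a single expansion. -/
def Par (E : Set (FreeSemiring' A)) (p q : FreeSemiring' A) : Prop :=
  ∃ m : Multiset (FreeMonoid A × FreeSemiring' A),
    p = ((m.map Prod.fst).map mono).sum ∧ q = (m.map Prod.snd).sum ∧ ∀ a ∈ m, Good E a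

lemma par_zero : Par E 0 0 := ⟨0, by simp⟩

lemma par_refl (p : FreeSemiring' A) : Par E p p := by
  refine ⟨(M p).map fun u => (u, mono u), ?_, ?_, ?_⟩
  · simp [Multiset.map_map, Function.comp_def, M_spec]
  · simp [Multiset.map_map, Function.comp_def, M_spec]
  · intro a ha
    simp only [Multiset.mem_map] at ha
    obtain ⟨u, -, rfl⟩ := ha
    exact Or.inl rfl

lemma par_add {p q p' q' : FreeSemiring' A} (h : Par E p q) (h' : Par E p' q') :
    Par E (p + p') (q + q') := by
  obtain ⟨m, hp, hq, hg⟩ := h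
  obtain ⟨m', hp', hq', hg'⟩ := h'
  refine ⟨m + m', ?_, ?_, ?_⟩
  · simp [hp, hp']
  · simp [hq, hq']
  · intro a ha
    rcases Multiset.mem_add.mp ha with ha | ha
    exacts [hg a ha, hg' a ha]

lemma par_of_mono_exp {u : FreeMonoid A} {x : FreeSemiring' A}
    (h : IsSingleExpansionOfMonomial E u x) : Par E (mono u) x := by
  refine ⟨{(u, x)}, by simp, by simp, ?_⟩
  intro a ha
  rw [Multiset.mem_singleton] at ha
  subst ha
  exact Or.inr h

lemma par_of_single {p q : FreeSemiring' A} (h : IsSingleExpansion E p q) : Par E p q := by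
  obtain ⟨u, s, x, rfl, hx, rfl⟩ := h
  exact par_add (par_of_mono_exp hx) (par_refl s)

lemma single_add_left {p q : FreeSemiring' A} (t : FreeSemiring' A)
    (h : IsSingleExpansion E p q) : IsSingleExpansion E (t + p) (t + q) := by
  obtain ⟨u, s, x, rfl, hx, rfl⟩ := h
  exact ⟨u, t + s, x, by rw [add_left_comm], hx, by rw [add_left_comm]⟩

lemma exp_add_left {p q : FreeSemiring' A} (t : FreeSemiring' A)
    (h : IsExpansion E p q) : IsExpansion E (t + p) (t + q) :=
  ReflTransGen.lift (t + ·) (fun _ _ h => single_add_left t h) _ _ h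

lemma exp_add_right {p q : FreeSemiring' A} (t : FreeSemiring' A)
    (h : IsExpansion E p q) : IsExpansion E (p + t) (q + t) := by
  rw [add_comm p t, add_comm q t]; exact exp_add_left t h

lemma exp_add {p q p' q' : FreeSemiring' A} (h : IsExpansion E p q)
    (h' : IsExpansion E p' q') : IsExpansion E (p + p') (q + q') :=
  (exp_add_right p' h).trans (exp_add_left q h')

lemma exp_of_mono_exp {u : FreeMonoid A} {x : FreeSemiring' A}
    (h : IsSingleExpansionOfMonomial E u x) : IsExpansion E (mono u) x :=
  ReflTransGen.single ⟨u, 0, x, by simp, h, by simp⟩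

lemma exp_of_par {p q : FreeSemiring' A} (h : Par E p q) : IsExpansion E p q := by
  obtain ⟨m, rfl, rfl, hg⟩ := h
  induction m using Multiset.induction with
  | empty =>
    simp only [Multiset.map_zero, Multiset.sum_zero]
    exact ReflTransGen.refl
  | cons a s ih =>
    simp only [Multiset.map_cons, Multiset.sum_cons]
    refine exp_add ?_ (ih fun b hb => hg b (Multiset.mem_cons_of_mem hb))
    rcases hg a (Multiset.mem_cons_self a s) with h | h
    · rw [h]
      exact ReflTransGen.refl
    · exact exp_of_mono_exp h


lemma rtg_par_iff_exp {p q : FreeSemiring' A} :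
    Relation.ReflTransGen (Par E) p q ↔ IsExpansion E p q := by
  constructor
  · intro h
    induction h with
    | refl => exact ReflTransGen.refl
    | tail _ h ih => exact ih.trans (exp_of_par h)
  · exact fun h => ReflTransGen.mono (fun _ _ h => par_of_single h) _ _ h

lemma par_mul_mono_right {p q : FreeSemiring' A} (h : Par E p q) (w : FreeMonoid A) :
    Par E (p * mono w) (q * mono w) := by
  obtain ⟨m, rfl, rfl, hg⟩ := h
  refine ⟨m.map fun a => (a.1 * w, a.2 * mono w), ?_, ?_, ?_⟩
  · simp only [Multiset.map_map, Function.comp_def, mono_mul]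
    rw [← Multiset.sum_map_mul_right]
  · rw [← Multiset.sum_map_mul_right]
    simp [Multiset.map_map, Function.comp_def]
  · intro a ha
    simp only [Multiset.mem_map] at ha
    obtain ⟨b, hb, rfl⟩ := ha
    rcases hg b hb with h | h
    · exact Or.inl (by simp [h, mono_mul])
    · obtain ⟨v, w', e, he, h1, h2⟩ := h
      exact Or.inr ⟨v, w' * w, e, he, by rw [h1, mul_assoc],
        by rw [h2, mono_mul, mul_assoc]⟩

lemma par_mul_mono_left {p q : FreeSemiring' A} (h : Par E p q) (v : FreeMonoid A) :
    Par E (mono v * p) (mono v * q) := by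
  obtain ⟨m, rfl, rfl, hg⟩ := h
  refine ⟨m.map fun a => (v * a.1, mono v * a.2), ?_, ?_, ?_⟩
  · simp only [Multiset.map_map, Function.comp_def, mono_mul]
    rw [← Multiset.sum_map_mul_left]
  · rw [← Multiset.sum_map_mul_left]
    simp [Multiset.map_map, Function.comp_def]
  · intro a ha
    simp only [Multiset.mem_map] at ha
    obtain ⟨b, hb, rfl⟩ := ha
    rcases hg b hb with h | h
    · exact Or.inl (by simp [h, mono_mul])
    · obtain ⟨v', w', e, he, h1, h2⟩ := h
      exact Or.inr ⟨v * v', w', e, he, by rw [h1, mul_assoc], by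
        rw [h2, mono_mul, mul_assoc, mul_assoc, mul_assoc]⟩

lemma par_mul_right {p q : FreeSemiring' A} (h : Par E p q) (t : FreeSemiring' A) :
    Par E (p * t) (q * t) := by
  have key : ∀ m : Multiset (FreeMonoid A),
      Par E (p * (m.map mono).sum) (q * (m.map mono).sum) := by
    intro m
    induction m using Multiset.induction with
    | empty => simpa using par_zero
    | cons a s ih =>
      simp only [Multiset.map_cons, Multiset.sum_cons, mul_add]
      exact par_add (par_mul_mono_right h a) ih
  have := key (M t)
  rwa [M_spec] at this

lemma par_mul_left {p q : FreeSemiring' A} (h : Par E p q) (t : FreeSemiring' A) :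
    Par E (t * p) (t * q) := by
  have key : ∀ m : Multiset (FreeMonoid A),
      Par E ((m.map mono).sum * p) ((m.map mono).sum * q) := by
    intro m
    induction m using Multiset.induction with
    | empty => simpa using par_zero
    | cons a s ih =>
      simp only [Multiset.map_cons, Multiset.sum_cons, add_mul]
      exact par_add (par_mul_mono_left h a) ih
  have := key (M t)
  rwa [M_spec] at this

lemma par_insert_right {e : FreeSemiring' A} (he : e ∈ E) (p : FreeSemiring' A)
    (w : FreeMonoid A) : Par E (p * mono w) (p * e * mono w) := by
  refine ⟨(M p).map fun s => (s * w, mono s * e * mono w), ?_, ?_, ?_⟩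
  · simp only [Multiset.map_map, Function.comp_def, mono_mul]
    rw [Multiset.sum_map_mul_right]
    simp [Multiset.map_map, Function.comp_def, M_spec]
  · simp only [Multiset.map_map, Function.comp_def]
    rw [Multiset.sum_map_mul_right, Multiset.sum_map_mul_right]
    simp [Multiset.map_map, Function.comp_def, M_spec]
  · intro a ha
    simp only [Multiset.mem_map] at ha
    obtain ⟨s, -, rfl⟩ := ha
    exact Or.inr ⟨s, w, e, he, rfl, rfl⟩

lemma par_insert_left {e : FreeSemiring' A} (he : e ∈ E) (v : FreeMonoid A)
    (p : FreeSemiring' A) : Par E (mono v * p) (mono v * e * p) := by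
  refine ⟨(M p).map fun s => (v * s, mono v * e * mono s), ?_, ?_, ?_⟩
  · simp only [Multiset.map_map, Function.comp_def, mono_mul]
    rw [Multiset.sum_map_mul_left]
    simp [Multiset.map_map, Function.comp_def, M_spec]
  · simp only [Multiset.map_map, Function.comp_def]
    rw [Multiset.sum_map_mul_left]
    simp [Multiset.map_map, Function.comp_def, M_spec]
  · intro a ha
    simp only [Multiset.mem_map] at ha
    obtain ⟨s, -, rfl⟩ := ha
    exact Or.inr ⟨v, s, e, he, rfl, rfl⟩

lemma freeMonoid_split {v w v' w' : FreeMonoid A} (h : v * w = v' * w') :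
    (∃ t, v' = v * t ∧ w = t * w') ∨ ∃ t, v = v' * t ∧ w' = t * w := by
  have h' : v.toList ++ w.toList = v'.toList ++ w'.toList := by
    rw [← FreeMonoid.toList_mul, ← FreeMonoid.toList_mul, h]
  rcases List.append_eq_append_iff.mp h' with ⟨t, h1, h2⟩ | ⟨t, h1, h2⟩
  · refine Or.inl ⟨FreeMonoid.ofList t, FreeMonoid.toList.injective ?_,
      FreeMonoid.toList.injective ?_⟩
    · rw [FreeMonoid.toList_mul, FreeMonoid.toList_ofList]; exact h1
    · rw [FreeMonoid.toList_mul, FreeMonoid.toList_ofList]; exact h2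
  · refine Or.inr ⟨FreeMonoid.ofList t, FreeMonoid.toList.injective ?_,
      FreeMonoid.toList.injective ?_⟩
    · rw [FreeMonoid.toList_mul, FreeMonoid.toList_ofList]; exact h1
    · rw [FreeMonoid.toList_mul, FreeMonoid.toList_ofList]; exact h2

lemma diamond_aux {e e' : FreeSemiring' A} (he : e ∈ E) (he' : e' ∈ E)
    (v t w' : FreeMonoid A) :
    ∃ d, Par E (mono v * e * mono (t * w')) d ∧ Par E (mono (v * t) * e' * mono w') d := by
  refine ⟨mono v * e * mono t * e' * mono w', ?_, ?_⟩
  · have := par_insert_right he' (mono v * e * mono t) w'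
    simp only [mono_mul, ← mul_assoc] at this ⊢
    exact this
  · have := par_mul_right (par_insert_left he v (mono t)) (e' * mono w')
    simp only [mono_mul, ← mul_assoc] at this ⊢
    exact this

lemma mono_diamond {u : FreeMonoid A} {y z : FreeSemiring' A}
    (hy : Good E (u, y)) (hz : Good E (u, z)) : ∃ d, Par E y d ∧ Par E z d := by
  rcases hy with hy | hy
  · replace hy : y = mono u := hy
    refine ⟨z, ?_, par_refl z⟩
    rcases hz with hz | hz
    · replace hz : z = mono u := hz
      rw [hy, hz]; exact par_refl _
    · replace hz : IsSingleExpansionOfMonomial E u z := hz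
      rw [hy]; exact par_of_mono_exp hz
  replace hy : IsSingleExpansionOfMonomial E u y := hy
  rcases hz with hz | hz
  · replace hz : z = mono u := hz
    refine ⟨y, par_refl y, ?_⟩
    rw [hz]; exact par_of_mono_exp hy
  replace hz : IsSingleExpansionOfMonomial E u z := hz
  obtain ⟨v, w, e, he, huv, rfl⟩ := hy
  obtain ⟨v', w'', e', he', huv', rfl⟩ := hz
  rcases freeMonoid_split (huv ▸ huv' : v * w = v' * w'') with ⟨t, rfl, rfl⟩ | ⟨t, rfl, rfl⟩
  · obtain ⟨d, h1, h2⟩ := diamond_aux he he' v t w''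
    exact ⟨d, h1, h2⟩
  · obtain ⟨d, h1, h2⟩ := diamond_aux he' he v' t w
    exact ⟨d, h2, h1⟩

lemma rel_join {m₁ m₂ : Multiset (FreeMonoid A × FreeSemiring' A)}
    (h : Multiset.Rel (fun a b => a.1 = b.1) m₁ m₂)
    (hg₁ : ∀ a ∈ m₁, Good E a) (hg₂ : ∀ a ∈ m₂, Good E a) :
    ∃ d, Par E (m₁.map Prod.snd).sum d ∧ Par E (m₂.map Prod.snd).sum d := by
  induction h with
  | zero => exact ⟨0, by simpa using par_zero, by simpa using par_zero⟩
  | @cons a b s t hab h ih =>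
    have ha : Good E a := hg₁ a (Multiset.mem_cons_self a s)
    have hb : Good E b := hg₂ b (Multiset.mem_cons_self b t)
    have hb' : Good E (a.1, b.2) := by rwa [show (a.1, b.2) = (b.1, b.2) from by rw [hab]]
    obtain ⟨d₀, hd₁, hd₂⟩ := mono_diamond (u := a.1) (y := a.2) (z := b.2) ha hb'
    obtain ⟨d', hd₁', hd₂'⟩ := ih (fun x hx => hg₁ x (Multiset.mem_cons_of_mem hx))
      (fun x hx => hg₂ x (Multiset.mem_cons_of_mem hx))
    refine ⟨d₀ + d', ?_, ?_⟩
    · simpa using par_add hd₁ hd₁'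
    · simpa using par_add hd₂ hd₂'

lemma par_diamond {p q₁ q₂ : FreeSemiring' A} (h₁ : Par E p q₁) (h₂ : Par E p q₂) :
    ∃ d, Par E q₁ d ∧ Par E q₂ d := by
  obtain ⟨m₁, hp₁, rfl, hg₁⟩ := h₁
  obtain ⟨m₂, hp₂, rfl, hg₂⟩ := h₂
  have hfst : m₁.map Prod.fst = m₂.map Prod.fst :=
    sum_map_mono_inj (hp₁ ▸ hp₂)
  have hrel : Multiset.Rel (fun a b => a.1 = b.1) m₁ m₂ :=
    Multiset.rel_map.mp (Multiset.rel_eq.mpr hfst)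
  exact rel_join hrel hg₁ hg₂

lemma equiv_join : Equivalence (Join (Relation.ReflTransGen (Par E))) := by
  refine equivalence_join_reflTransGen fun a b c hab hac => ?_
  obtain ⟨d, h1, h2⟩ := par_diamond hab hac
  exact ⟨d, ReflGen.single h1, ReflTransGen.single h2⟩

/-- Joinability by expansions. -/
def J (E : Set (FreeSemiring' A)) (p q : FreeSemiring' A) : Prop :=
  ∃ r : FreeSemiring' A, IsExpansion E p r ∧ IsExpansion E q r

lemma J_eq_join : J E = Join (Relation.ReflTransGen (Par E)) := by
  ext p q
  unfold J Join
  simp_rw [rtg_par_iff_exp]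

lemma J_equiv : Equivalence (J E) := by rw [J_eq_join]; exact equiv_join

lemma exp_mul {p q p' q' : FreeSemiring' A} (h : IsExpansion E p q)
    (h' : IsExpansion E p' q') : IsExpansion E (p * p') (q * q') := by
  rw [← rtg_par_iff_exp] at h h' ⊢
  have h1 : Relation.ReflTransGen (Par E) (p * p') (q * p') :=
    ReflTransGen.lift (· * p') (fun a b hab => par_mul_right hab p') _ _ h
  have h2 : Relation.ReflTransGen (Par E) (q * p') (q * q') :=
    ReflTransGen.lift (q * ·) (fun a b hab => par_mul_left hab q) _ _ h'
  exact h1.trans h2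

lemma exp_one_of_mem {e : FreeSemiring' A} (he : e ∈ E) : IsExpansion E 1 e := by
  refine ReflTransGen.single ⟨1, 0, e, by rw [mono_one, add_zero], ⟨1, 1, e, he, by simp, by
    rw [mono_one, one_mul, mul_one]⟩, by rw [add_zero]⟩

lemma ringCon_of_single {p q : FreeSemiring' A} (h : IsSingleExpansion E p q) :
    ringConGen (fun a b => a ∈ E ∧ b = 1) p q := by
  obtain ⟨u, s, x, rfl, ⟨v, w, e, he, rfl, rfl⟩, rfl⟩ := h
  set c := ringConGen (fun a b : FreeSemiring' A => a ∈ E ∧ b = 1) with hc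
  have h1 : c e 1 := RingConGen.Rel.of _ _ ⟨he, rfl⟩
  have h2 : c (mono v * e * mono w) (mono v * 1 * mono w) :=
    c.mul (c.mul (c.refl (mono v)) h1) (c.refl (mono w))
  have h3 : mono v * 1 * mono w = mono (v * w) := by rw [mul_one, mono_mul]
  rw [h3] at h2
  exact c.symm (c.add h2 (c.refl s))

theorem main {p q : FreeSemiring' A} :
    ringConGen (fun a b => a ∈ E ∧ b = 1) p q ↔ J E p q := by
  constructor
  · intro h
    have h' : RingConGen.Rel (fun a b => a ∈ E ∧ b = 1) p q := h
    clear h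
    induction h' with
    | of a b hab =>
      obtain ⟨ha, rfl⟩ := hab
      exact ⟨a, ReflTransGen.refl, exp_one_of_mem ha⟩
    | refl a => exact J_equiv.refl a
    | symm _ ih => exact J_equiv.symm ih
    | trans _ _ ih₁ ih₂ => exact J_equiv.trans ih₁ ih₂
    | add _ _ ih₁ ih₂ =>
      obtain ⟨r₁, hr₁, hr₁'⟩ := ih₁
      obtain ⟨r₂, hr₂, hr₂'⟩ := ih₂
      exact ⟨r₁ + r₂, exp_add hr₁ hr₂, exp_add hr₁' hr₂'⟩
    | mul _ _ ih₁ ih₂ =>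
      obtain ⟨r₁, hr₁, hr₁'⟩ := ih₁
      obtain ⟨r₂, hr₂, hr₂'⟩ := ih₂
      exact ⟨r₁ * r₂, exp_mul hr₁ hr₂, exp_mul hr₁' hr₂'⟩
  · rintro ⟨r, hpr, hqr⟩
    set c := ringConGen (fun a b : FreeSemiring' A => a ∈ E ∧ b = 1) with hc
    have key : ∀ {x y : FreeSemiring' A}, IsExpansion E x y → c x y := by
      intro x y h
      induction h with
      | refl => exact c.refl _
      | tail _ h ih => exact c.trans ih (ringCon_of_single h)
    exact c.trans (key hpr) (c.symm (key hqr))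

end StmtAux

theorem stmt_0 {A : Type*} (E : Set (FreeSemiring' A)) (p q : FreeSemiring' A) :
    ringConGen (fun a b => a ∈ E ∧ b = 1) p q ↔
      ∃ r : FreeSemiring' A, IsExpansion E p r ∧ IsExpansion E q r :=
  StmtAux.main
end

section
/- Let A be a type, S the free semiring on A, and E a set of elements of S. For all p, q, r ∈ S, if r ≼ p and r ≼ q, then there exists s ∈ S such that p ≼ s and q ≼ s. -/
/-- `p ≼ q`: `q` is obtained from `p` by applying a single expansion step to a subset
of the summands of `p`; i.e. `p = Σᵢ pᵢ` is a sum of monomials and `q = Σᵢ qᵢ` where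
each `qᵢ` equals `pᵢ` or is a single expansion of `pᵢ`. -/
def Preexp {A : Type*} (E : Set (FreeSemiring' A)) (p q : FreeSemiring' A) : Prop :=
  ∃ (N : ℕ) (u : Fin N → FreeMonoid A) (x : Fin N → FreeSemiring' A),
    p = ∑ i, mono (u i) ∧ q = ∑ i, x i ∧
    ∀ i, x i = mono (u i) ∨ IsSingleExpansionOfMonomial E (u i) (x i)

namespace Stmt2Aux

variable {A : Type*}

lemma mono_mul (a b : FreeMonoid A) : mono (a * b) = mono a * mono b := by
  simp [mono]

/-- Multiset version of `Preexp`. -/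
def PreexpM (E : Set (FreeSemiring' A)) (p q : FreeSemiring' A) : Prop :=
  ∃ m : Multiset (FreeMonoid A × FreeSemiring' A),
    p = (m.map fun z => mono z.1).sum ∧ q = (m.map Prod.snd).sum ∧
    ∀ z ∈ m, z.2 = mono z.1 ∨ IsSingleExpansionOfMonomial E z.1 z.2

lemma preexp_iff_preexpM {E : Set (FreeSemiring' A)} {p q : FreeSemiring' A} :
    Preexp E p q ↔ PreexpM E p q := by
  constructor
  · rintro ⟨N, u, x, hp, hq, hcond⟩
    refine ⟨(List.ofFn fun i => (u i, x i) : List _), ?_, ?_, ?_⟩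
    · rw [Multiset.map_coe, Multiset.sum_coe, List.map_ofFn, List.sum_ofFn, hp]
      rfl
    · rw [Multiset.map_coe, Multiset.sum_coe, List.map_ofFn, List.sum_ofFn, hq]
      rfl
    · intro z hz
      rw [Multiset.mem_coe, List.mem_ofFn] at hz
      obtain ⟨i, rfl⟩ := hz
      exact hcond i
  · rintro ⟨m, hp, hq, hcond⟩
    induction m using Quotient.inductionOn with
    | h l =>
      rw [show (⟦l⟧ : Multiset (FreeMonoid A × FreeSemiring' A)) = (l : Multiset _) from rfl]
        at hp hq hcond
      refine ⟨l.length, fun i => (l.get i).1, fun i => (l.get i).2, ?_, ?_, ?_⟩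
      · rw [hp, Multiset.map_coe, Multiset.sum_coe, ← List.sum_ofFn]
        congr 1
        exact (List.ofFn_getElem_eq_map l (fun z => mono z.1)).symm
      · rw [hq, Multiset.map_coe, Multiset.sum_coe, ← List.sum_ofFn]
        congr 1
        exact (List.ofFn_getElem_eq_map l Prod.snd).symm
      · intro i
        exact hcond _ (Multiset.mem_coe.mpr (List.get_mem l i))

lemma preexpM_add {E : Set (FreeSemiring' A)} {p₁ q₁ p₂ q₂ : FreeSemiring' A}
    (h₁ : PreexpM E p₁ q₁) (h₂ : PreexpM E p₂ q₂) : PreexpM E (p₁ + p₂) (q₁ + q₂) := by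
  obtain ⟨m₁, hp₁, hq₁, hc₁⟩ := h₁
  obtain ⟨m₂, hp₂, hq₂, hc₂⟩ := h₂
  refine ⟨m₁ + m₂, ?_, ?_, ?_⟩
  · rw [Multiset.map_add, Multiset.sum_add, hp₁, hp₂]
  · rw [Multiset.map_add, Multiset.sum_add, hq₁, hq₂]
  · intro z hz
    rcases Multiset.mem_add.mp hz with h | h
    exacts [hc₁ z h, hc₂ z h]

/-- Every element of the free semiring is a sum of monomials. -/
lemma exists_mono_rep (q : FreeSemiring' A) :
    ∃ m : Multiset (FreeMonoid A), q = (m.map mono).sum := by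
  induction q using MonoidAlgebra.induction with
  | zero => exact ⟨0, by simp⟩
  | single_add a n f _ _ ih =>
    obtain ⟨m, hm⟩ := ih
    refine ⟨Multiset.replicate n a + m, ?_⟩
    rw [Multiset.map_add, Multiset.sum_add, ← hm, Multiset.map_replicate,
      Multiset.sum_replicate]
    congr 1
    rw [mono, MonoidAlgebra.of_apply]
    ext b
    simp [MonoidAlgebra.coeff_single, Finsupp.single_apply]

lemma preexpM_refl (E : Set (FreeSemiring' A)) (q : FreeSemiring' A) : PreexpM E q q := by
  obtain ⟨m, hm⟩ := exists_mono_rep q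
  refine ⟨m.map fun a => (a, mono a), ?_, ?_, ?_⟩
  · rw [Multiset.map_map, hm]; rfl
  · rw [Multiset.map_map, hm]; rfl
  · intro z hz
    rw [Multiset.mem_map] at hz
    obtain ⟨a, _, rfl⟩ := hz
    exact Or.inl rfl

lemma preexpM_expand {E : Set (FreeSemiring' A)} {a : FreeMonoid A} {x : FreeSemiring' A}
    (h : IsSingleExpansionOfMonomial E a x) : PreexpM E (mono a) x :=
  ⟨{(a, x)}, by simp, by simp, by simpa using Or.inr h⟩

lemma apply_sum_map_mono [DecidableEq (FreeMonoid A)]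
    (m : Multiset (FreeMonoid A)) (a : FreeMonoid A) :
    ((m.map mono).sum : FreeSemiring' A).coeff a = m.count a := by
  induction m using Multiset.induction with
  | empty => simp
  | cons b m ih =>
    rw [Multiset.map_cons, Multiset.sum_cons, Multiset.count_cons]
    have : ((mono b + (m.map mono).sum : FreeSemiring' A)).coeff a
        = (mono b : FreeSemiring' A).coeff a + ((m.map mono).sum : FreeSemiring' A).coeff a := by
      rw [MonoidAlgebra.coeff_add]; rfl
    rw [this, ih, mono, MonoidAlgebra.of_apply]
    by_cases hab : a = b
    · subst hab
      simp [MonoidAlgebra.coeff_single, Finsupp.single_apply, add_comm]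
    · simp [MonoidAlgebra.coeff_single, Finsupp.single_apply, hab, Ne.symm hab]

lemma sum_map_mono_inj {m m' : Multiset (FreeMonoid A)}
    (h : (m.map mono).sum = (m'.map mono).sum) : m = m' := by
  classical
  ext a
  rw [← apply_sum_map_mono m a, ← apply_sum_map_mono m' a, h]

/-- Coupling lemma : two multisets of pairs with the same first projections
can be merged into a multiset of triples. -/
lemma coupling {α β γ : Type*} (m : Multiset (α × β)) :
    ∀ m' : Multiset (α × γ), m.map Prod.fst = m'.map Prod.fst →
    ∃ t : Multiset (α × β × γ),
      t.map (fun z => (z.1, z.2.1)) = m ∧ t.map (fun z => (z.1, z.2.2)) = m' := by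
  classical
  induction m using Multiset.induction with
  | empty =>
    intro m' h
    simp only [Multiset.map_zero] at h
    rw [eq_comm, Multiset.map_eq_zero] at h
    exact ⟨0, by simp, by simp [h]⟩
  | cons z m ih =>
    intro m' h
    rw [Multiset.map_cons] at h
    have hz1 : z.1 ∈ m'.map Prod.fst := by rw [← h]; exact Multiset.mem_cons_self _ _
    rw [Multiset.mem_map] at hz1
    obtain ⟨z', hz'm, hz'1⟩ := hz1
    have hm' : m' = z' ::ₘ m'.erase z' := (Multiset.cons_erase hz'm).symm
    rw [hm', Multiset.map_cons, hz'1] at h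
    have h' : m.map Prod.fst = (m'.erase z').map Prod.fst :=
      (Multiset.cons_inj_right _).mp h
    obtain ⟨t, ht1, ht2⟩ := ih (m'.erase z') h'
    refine ⟨(z.1, z.2, z'.2) ::ₘ t, ?_, ?_⟩
    · rw [Multiset.map_cons, ht1]
    · rw [Multiset.map_cons, ht2, ← hz'1, Prod.mk.eta]
      exact Multiset.cons_erase hz'm

lemma sum_map_mul {γ : Type*} (me : Multiset γ) (f : γ → FreeSemiring' A)
    (a b : FreeSemiring' A) :
    (me.map fun m => a * f m * b).sum = a * (me.map f).sum * b := by
  induction me using Multiset.induction with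
  | empty => simp
  | cons c me ih => simp [Multiset.map_cons, Multiset.sum_cons, ih, mul_add, add_mul]

/-- One-sided diamond: expand the left factor then the right, vs. the other order. -/
lemma diamond_L1 {E : Set (FreeSemiring' A)} {e e' : FreeSemiring' A}
    (he' : e' ∈ E) (v t w' : FreeMonoid A) :
    PreexpM E (mono v * e * mono t * mono w') (mono v * e * mono t * e' * mono w') := by
  obtain ⟨me, hme⟩ := exists_mono_rep e
  refine ⟨me.map fun m => (v * m * t * w', mono (v * m * t) * e' * mono w'), ?_, ?_, ?_⟩
  · rw [Multiset.map_map]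
    have : ((fun z : FreeMonoid A × FreeSemiring' A => mono z.1) ∘
        fun m => (v * m * t * w', mono (v * m * t) * e' * mono w'))
        = fun m => mono v * mono m * (mono t * mono w') := by
      funext m
      simp [mono_mul, mul_assoc]
    rw [this, sum_map_mul, ← hme]
    simp only [mul_assoc]
  · rw [Multiset.map_map]
    have : (Prod.snd ∘ fun m =>
        ((v * m * t * w' : FreeMonoid A), mono (v * m * t) * e' * mono w'))
        = fun m => mono v * mono m * (mono t * e' * mono w') := by
      funext m
      simp [mono_mul, mul_assoc]
    rw [this, sum_map_mul, ← hme]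
    simp only [mul_assoc]
  · intro z hz
    rw [Multiset.mem_map] at hz
    obtain ⟨m, _, rfl⟩ := hz
    exact Or.inr ⟨v * m * t, w', e', he', by simp [mul_assoc], rfl⟩

lemma diamond_L2 {E : Set (FreeSemiring' A)} {e e' : FreeSemiring' A}
    (he : e ∈ E) (v t w' : FreeMonoid A) :
    PreexpM E (mono (v * t) * e' * mono w') (mono v * e * mono t * e' * mono w') := by
  obtain ⟨me', hme'⟩ := exists_mono_rep e'
  refine ⟨me'.map fun m => (v * t * m * w', mono v * e * mono (t * m * w')), ?_, ?_, ?_⟩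
  · rw [Multiset.map_map]
    have : ((fun z : FreeMonoid A × FreeSemiring' A => mono z.1) ∘
        fun m => (v * t * m * w', mono v * e * mono (t * m * w')))
        = fun m => mono (v * t) * mono m * mono w' := by
      funext m
      simp [mono_mul, mul_assoc]
    rw [this, sum_map_mul, ← hme']
  · rw [Multiset.map_map]
    have : (Prod.snd ∘ fun m =>
        ((v * t * m * w' : FreeMonoid A), mono v * e * mono (t * m * w')))
        = fun m => (mono v * e * mono t) * mono m * mono w' := by
      funext m
      simp [mono_mul, mul_assoc]
    rw [this, sum_map_mul, ← hme']
  · intro z hz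
    rw [Multiset.mem_map] at hz
    obtain ⟨m, _, rfl⟩ := hz
    exact Or.inr ⟨v, t * m * w', e, he, by simp [mul_assoc], by simp [mul_assoc]⟩

/-- Diamond for two expansions of the same monomial. -/
lemma diamond_exp {E : Set (FreeSemiring' A)} {a : FreeMonoid A} {x y : FreeSemiring' A}
    (hx : IsSingleExpansionOfMonomial E a x) (hy : IsSingleExpansionOfMonomial E a y) :
    ∃ z, PreexpM E x z ∧ PreexpM E y z := by
  obtain ⟨v, w, e, he, hvw, rfl⟩ := hx
  obtain ⟨v', w', e', he', hvw', rfl⟩ := hy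
  have hl : v.toList ++ w.toList = v'.toList ++ w'.toList := by
    have := hvw.symm.trans hvw'
    exact congrArg FreeMonoid.toList this
  rcases List.append_eq_append_iff.mp hl with ⟨t, hv', hw⟩ | ⟨t, hv, hw'⟩
  · -- v' = v * t, w = t * w'
    have hv'2 : v' = v * FreeMonoid.ofList t := FreeMonoid.toList.injective (by simpa using hv')
    have hw2 : w = FreeMonoid.ofList t * w' := FreeMonoid.toList.injective (by simpa using hw)
    subst hv'2 hw2
    refine ⟨mono v * e * mono (FreeMonoid.ofList t) * e' * mono w', ?_, ?_⟩
    · have h1 := diamond_L1 (E := E) (e := e) he' v (FreeMonoid.ofList t) w'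
      rw [mono_mul, ← mul_assoc]
      exact h1
    · exact diamond_L2 he v (FreeMonoid.ofList t) w'
  · -- v = v' * t, w' = t * w
    have hv2 : v = v' * FreeMonoid.ofList t := FreeMonoid.toList.injective (by simpa using hv)
    have hw'2 : w' = FreeMonoid.ofList t * w := FreeMonoid.toList.injective (by simpa using hw')
    subst hv2 hw'2
    refine ⟨mono v' * e' * mono (FreeMonoid.ofList t) * e * mono w, ?_, ?_⟩
    · exact diamond_L2 he' v' (FreeMonoid.ofList t) w
    · have h1 := diamond_L1 (E := E) (e := e') he v' (FreeMonoid.ofList t) w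
      rw [mono_mul, ← mul_assoc]
      exact h1

lemma diamond {E : Set (FreeSemiring' A)} {a : FreeMonoid A} {x y : FreeSemiring' A}
    (hx : x = mono a ∨ IsSingleExpansionOfMonomial E a x)
    (hy : y = mono a ∨ IsSingleExpansionOfMonomial E a y) :
    ∃ z, PreexpM E x z ∧ PreexpM E y z := by
  rcases hx with rfl | hx
  · rcases hy with rfl | hy
    · exact ⟨mono a, preexpM_refl E _, preexpM_refl E _⟩
    · exact ⟨y, preexpM_expand hy, preexpM_refl E _⟩
  · rcases hy with rfl | hy
    · exact ⟨x, preexpM_refl E _, preexpM_expand hx⟩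
    · exact diamond_exp hx hy

lemma combine {γ : Type*} {E : Set (FreeSemiring' A)} (t : Multiset γ)
    (f g : γ → FreeSemiring' A)
    (h : ∀ z ∈ t, ∃ w, PreexpM E (f z) w ∧ PreexpM E (g z) w) :
    ∃ s, PreexpM E ((t.map f).sum) s ∧ PreexpM E ((t.map g).sum) s := by
  induction t using Multiset.induction with
  | empty => exact ⟨0, ⟨0, by simp⟩, ⟨0, by simp⟩⟩
  | cons c t ih =>
    obtain ⟨w, hw1, hw2⟩ := h c (Multiset.mem_cons_self _ _)
    obtain ⟨s, hs1, hs2⟩ := ih fun z hz => h z (Multiset.mem_cons_of_mem hz)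
    exact ⟨w + s, by simpa using preexpM_add hw1 hs1, by simpa using preexpM_add hw2 hs2⟩

end Stmt2Aux

theorem stmt_2 {A : Type*} (E : Set (FreeSemiring' A)) (p q r : FreeSemiring' A)
    (hp : Preexp E r p) (hq : Preexp E r q) :
    ∃ s : FreeSemiring' A, Preexp E p s ∧ Preexp E q s := by
  open Stmt2Aux in
  rw [preexp_iff_preexpM] at hp hq
  obtain ⟨m₁, hr₁, hp₁, hc₁⟩ := hp
  obtain ⟨m₂, hr₂, hp₂, hc₂⟩ := hq
  have hfst : m₁.map Prod.fst = m₂.map Prod.fst := by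
    apply Stmt2Aux.sum_map_mono_inj
    rw [Multiset.map_map, Multiset.map_map]
    simp only [Function.comp_def]
    rw [← hr₁, ← hr₂]
  obtain ⟨t, ht₁, ht₂⟩ := Stmt2Aux.coupling m₁ m₂ hfst
  have hpt : p = (t.map fun z => z.2.1).sum := by
    rw [hp₁, ← ht₁, Multiset.map_map]
    simp only [Function.comp_def]
  have hqt : q = (t.map fun z => z.2.2).sum := by
    rw [hp₂, ← ht₂, Multiset.map_map]
    simp only [Function.comp_def]
  obtain ⟨s, hs1, hs2⟩ := Stmt2Aux.combine t (fun z => z.2.1) (fun z => z.2.2)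
    (fun z hz => Stmt2Aux.diamond
      (hc₁ (z.1, z.2.1) (ht₁ ▸ Multiset.mem_map_of_mem _ hz))
      (hc₂ (z.1, z.2.2) (ht₂ ▸ Multiset.mem_map_of_mem _ hz)))
  exact ⟨s, by rw [Stmt2Aux.preexp_iff_preexpM, hpt]; exact hs1,
    by rw [Stmt2Aux.preexp_iff_preexpM, hqt]; exact hs2⟩
end

section
/- Let n ≥ 2 and m ≥ 1. In the free semiring S on the alphabet Fin n × Fin (n+1) × Fin m, for every generator b_{i,j,k}, the elements (n−1)·1 and (n−1)·1 + b_{i,j,k} are related by the congruence ∼ generated by the row and column equations. -/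
/-- The free semiring on the alphabet `Fin n × Fin (n+1) × Fin m`, realized as the
monoid algebra of the free monoid with natural number coefficients. -/
abbrev GridSemiring (n m : ℕ) := MonoidAlgebra ℕ (FreeMonoid (Fin n × Fin (n + 1) × Fin m))

/-- The generator `b_{i,j,k}`: the monomial given by the single letter `(i,j,k)`. -/
noncomputable def bgen (n m : ℕ) (i : Fin n) (j : Fin (n + 1)) (k : Fin m) :
    GridSemiring n m :=
  MonoidAlgebra.of ℕ (FreeMonoid (Fin n × Fin (n + 1) × Fin m)) (FreeMonoid.of (i, j, k))

/-- The generating pairs of the congruence `∼`: the column equations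
`Σ_i Σ_k b_{i,j,k} ∼ 1` for each `j`, and the row equations
`Σ_j Σ_k b_{i,j,k} ∼ 1` for each `i`. -/
def gridRel (n m : ℕ) : GridSemiring n m → GridSemiring n m → Prop := fun a b =>
  b = 1 ∧
    ((∃ j : Fin (n + 1), a = ∑ i : Fin n, ∑ k : Fin m, bgen n m i j k) ∨
     (∃ i : Fin n, a = ∑ j : Fin (n + 1), ∑ k : Fin m, bgen n m i j k))

open Finset

/-- The state of the resource-shuffling derivation after `t` rounds. -/
def gridState {Q : Type*} [Semiring Q] (n : ℕ) (D : ℕ → ℕ → Q) (A δ J : Q) (t : ℕ) : Q :=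
  A + (∑ i ∈ Ico t (n - 1), (∑ x ∈ Ico 0 (n + 1), D i x))
    + δ + (∑ x ∈ Ico 1 (t + 1), D 0 x)
    + (∑ x ∈ Ico (t + 1) (n + 1), D 0 x * J)
    + (∑ i ∈ Ico 1 t, ∑ x ∈ Ico 0 (t + 1), D i x)
    + (∑ i ∈ Ico 1 t, ∑ x ∈ Ico (t + 1) (n + 1), D i x * J)
    + (∑ i ∈ Ico t n, ∑ x ∈ Ico 0 (t + 1), D i x * A)

section CoreLemmas

variable {Q : Type*} [Semiring Q] (n : ℕ) (D : ℕ → ℕ → Q) (A δ J : Q)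

theorem grid_L1 (hn : 2 ≤ n)
    (hrow : ∀ i < n, ∑ x ∈ Ico 0 (n + 1), D i x = 1)
    (hsplit : D 0 0 = A + δ)
    (hE1 : ∀ y < n + 1, A = ∑ i ∈ Ico 0 n, D i y * A)
    (hC1 : ∀ i < n, ∑ x ∈ Ico 0 (n + 1), D i x * A = A)
    (hE2 : ∀ i x, D i x = D i x * A + D i x * J) :
    (n - 1) • (1 : Q) + A = gridState n D A δ J 1 := by
  unfold gridState
  rw [Finset.Ico_self, Finset.sum_empty, Finset.sum_empty]
  have hs11 : ∀ f : ℕ → Q, ∑ x ∈ Ico 1 (1+1), f x = f 1 := by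
    intro f
    rw [Finset.sum_Ico_succ_top le_rfl, Finset.Ico_self, Finset.sum_empty, zero_add]
  have h02 : ∀ f : ℕ → Q, ∑ x ∈ Ico 0 (1+1), f x = f 0 + f 1 := by
    intro f
    rw [Finset.sum_Ico_succ_top (by omega), Finset.sum_Ico_succ_top (by omega),
      Finset.Ico_self, Finset.sum_empty, zero_add]
  rw [hs11]
  have e0 : A = D 0 0 * A + ∑ i ∈ Ico 1 n, D i 0 * A := by
    have h := hE1 0 (by omega)
    rwa [Finset.sum_eq_sum_Ico_succ_bot (by omega : (0:ℕ) < n), Nat.zero_add] at h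
  have e1 : A = D 0 1 * A + ∑ i ∈ Ico 1 n, D i 1 * A := by
    have h := hE1 1 (by omega)
    rwa [Finset.sum_eq_sum_Ico_succ_bot (by omega : (0:ℕ) < n), Nat.zero_add] at h
  have hC : D 0 0 * A + (D 0 1 * A + ∑ x ∈ Ico (1+1) (n+1), D 0 x * A) = A := by
    have h := hC1 0 (by omega)
    rwa [Finset.sum_eq_sum_Ico_succ_bot (by omega : (0:ℕ) < n + 1), Nat.zero_add,
      Finset.sum_eq_sum_Ico_succ_bot (by omega : (1:ℕ) < n + 1)] at h
  calc (n - 1) • (1:Q) + A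
      = (∑ i ∈ Ico 0 (n-1), (1:Q)) + A := by
        rw [Finset.sum_const, Nat.card_Ico, Nat.sub_zero]
    _ = (∑ i ∈ Ico 0 (n-1), ∑ x ∈ Ico 0 (n+1), D i x) + A := by
        rw [Finset.sum_congr rfl (fun i hi => hrow i (by
          have := (Finset.mem_Ico.mp hi).2; omega))]
    _ = ((∑ x ∈ Ico 0 (n+1), D 0 x) + (∑ i ∈ Ico 1 (n-1), ∑ x ∈ Ico 0 (n+1), D i x)) + A := by
        rw [Finset.sum_eq_sum_Ico_succ_bot (by omega : (0:ℕ) < n-1), Nat.zero_add]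
    _ = A + δ + D 0 1 + (∑ x ∈ Ico (1+1) (n+1), D 0 x)
        + (∑ i ∈ Ico 1 (n-1), ∑ x ∈ Ico 0 (n+1), D i x) + A := by
        rw [Finset.sum_eq_sum_Ico_succ_bot (by omega : (0:ℕ) < n+1) (D 0 ·), Nat.zero_add,
          Finset.sum_eq_sum_Ico_succ_bot (by omega : (1:ℕ) < n+1) (D 0 ·), hsplit]
        abel
    _ = (D 0 1 * A + ∑ i ∈ Ico 1 n, D i 1 * A) + δ + D 0 1
        + (∑ x ∈ Ico (1+1) (n+1), D 0 x)
        + (∑ i ∈ Ico 1 (n-1), ∑ x ∈ Ico 0 (n+1), D i x)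
        + (D 0 0 * A + ∑ i ∈ Ico 1 n, D i 0 * A) := by
        rw [← e0, ← e1]
    _ = (D 0 1 * A + ∑ i ∈ Ico 1 n, D i 1 * A) + δ + D 0 1
        + ((∑ x ∈ Ico (1+1) (n+1), D 0 x * A) + (∑ x ∈ Ico (1+1) (n+1), D 0 x * J))
        + (∑ i ∈ Ico 1 (n-1), ∑ x ∈ Ico 0 (n+1), D i x)
        + (D 0 0 * A + ∑ i ∈ Ico 1 n, D i 0 * A) := by
        rw [← Finset.sum_add_distrib,
          ← Finset.sum_congr rfl (fun x (_ : x ∈ Ico (1+1) (n+1)) => hE2 0 x)]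
    _ = (D 0 0 * A + (D 0 1 * A + ∑ x ∈ Ico (1+1) (n+1), D 0 x * A))
        + δ + D 0 1 + (∑ x ∈ Ico (1+1) (n+1), D 0 x * J)
        + (∑ i ∈ Ico 1 (n-1), ∑ x ∈ Ico 0 (n+1), D i x)
        + ((∑ i ∈ Ico 1 n, D i 0 * A) + (∑ i ∈ Ico 1 n, D i 1 * A)) := by
        abel
    _ = A + δ + D 0 1 + (∑ x ∈ Ico (1+1) (n+1), D 0 x * J)
        + (∑ i ∈ Ico 1 (n-1), ∑ x ∈ Ico 0 (n+1), D i x)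
        + (∑ i ∈ Ico 1 n, (D i 0 * A + D i 1 * A)) := by
        rw [hC, Finset.sum_add_distrib]
    _ = A + (∑ i ∈ Ico 1 (n-1), ∑ x ∈ Ico 0 (n+1), D i x) + δ + D 0 1
        + (∑ x ∈ Ico (1+1) (n+1), D 0 x * J) + 0 + 0
        + (∑ i ∈ Ico 1 n, ∑ x ∈ Ico 0 (1+1), D i x * A) := by
        rw [Finset.sum_congr rfl
          (fun i (_ : i ∈ Ico 1 n) => (h02 (fun x => D i x * A)).symm)]
        abel

theorem grid_L2 (hn : 2 ≤ n)
    (hE1 : ∀ y < n + 1, A = ∑ i ∈ Ico 0 n, D i y * A)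
    (hC1 : ∀ i < n, ∑ x ∈ Ico 0 (n + 1), D i x * A = A)
    (hE2 : ∀ i x, D i x = D i x * A + D i x * J)
    (t : ℕ) (ht1 : 1 ≤ t) (ht2 : t ≤ n - 2) :
    gridState n D A δ J t = gridState n D A δ J (t + 1) := by
  unfold gridState
  have htn : t + 1 < n := by omega
  have eA : A = D 0 (t+1) * A + ((∑ i ∈ Ico 1 t, D i (t+1) * A)
      + (D t (t+1) * A + ∑ i ∈ Ico (t+1) n, D i (t+1) * A)) := by
    have h := hE1 (t+1) (by omega)
    rwa [Finset.sum_eq_sum_Ico_succ_bot (by omega : (0:ℕ) < n), Nat.zero_add,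
      ← Finset.sum_Ico_consecutive _ (by omega : 1 ≤ t) (by omega : t ≤ n),
      Finset.sum_eq_sum_Ico_succ_bot (by omega : t < n)] at h
  have hCt : (∑ x ∈ Ico 0 (t+1), D t x * A) + D t (t+1) * A
      + (∑ x ∈ Ico (t+1+1) (n+1), D t x * A) = A := by
    have h := hC1 t (by omega)
    rwa [← Finset.sum_Ico_consecutive _ (by omega : 0 ≤ t+1+1) (by omega : t+1+1 ≤ n+1),
      Finset.sum_Ico_succ_top (by omega : 0 ≤ t+1)] at h
  have hrowt : ∑ i ∈ Ico t (n-1), (∑ x ∈ Ico 0 (n + 1), D i x)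
      = (∑ x ∈ Ico 0 (t+1+1), D t x)
        + ((∑ x ∈ Ico (t+1+1) (n+1), D t x * A) + (∑ x ∈ Ico (t+1+1) (n+1), D t x * J))
        + (∑ i ∈ Ico (t+1) (n-1), (∑ x ∈ Ico 0 (n + 1), D i x)) := by
    rw [Finset.sum_eq_sum_Ico_succ_bot (by omega : t < n - 1),
      ← Finset.sum_Ico_consecutive (D t ·) (by omega : 0 ≤ t+1+1) (by omega : t+1+1 ≤ n+1),
      Finset.sum_congr rfl (fun x (_ : x ∈ Ico (t+1+1) (n+1)) => hE2 t x),
      Finset.sum_add_distrib, add_assoc]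
  have hj0 : ∑ x ∈ Ico (t+1) (n+1), D 0 x * J
      = D 0 (t+1) * J + ∑ x ∈ Ico (t+1+1) (n+1), D 0 x * J :=
    Finset.sum_eq_sum_Ico_succ_bot (by omega : t + 1 < n + 1) _
  have hjp : ∑ i ∈ Ico 1 t, ∑ x ∈ Ico (t+1) (n+1), D i x * J
      = (∑ i ∈ Ico 1 t, D i (t+1) * J)
        + ∑ i ∈ Ico 1 t, ∑ x ∈ Ico (t+1+1) (n+1), D i x * J := by
    rw [← Finset.sum_add_distrib]
    exact Finset.sum_congr rfl
      (fun i _ => Finset.sum_eq_sum_Ico_succ_bot (by omega : t + 1 < n + 1) _)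
  have hsup : ∑ i ∈ Ico t n, ∑ x ∈ Ico 0 (t+1), D i x * A
      = (∑ x ∈ Ico 0 (t+1), D t x * A)
        + ∑ i ∈ Ico (t+1) n, ∑ x ∈ Ico 0 (t+1), D i x * A :=
    Finset.sum_eq_sum_Ico_succ_bot (by omega : t < n) _
  have hr0 : D 0 (t+1) * A + D 0 (t+1) * J = D 0 (t+1) := (hE2 0 (t+1)).symm
  have hrp : (∑ i ∈ Ico 1 t, D i (t+1) * A) + (∑ i ∈ Ico 1 t, D i (t+1) * J)
      = ∑ i ∈ Ico 1 t, D i (t+1) := by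
    rw [← Finset.sum_add_distrib]
    exact Finset.sum_congr rfl (fun i _ => (hE2 i (t+1)).symm)
  have hb0 : (∑ x ∈ Ico 1 (t+1), D 0 x) + D 0 (t+1) = ∑ x ∈ Ico 1 (t+1+1), D 0 x :=
    (Finset.sum_Ico_succ_top (by omega : 1 ≤ t+1) _).symm
  have hbp : (∑ i ∈ Ico 1 t, ∑ x ∈ Ico 0 (t+1), D i x) + (∑ i ∈ Ico 1 t, D i (t+1))
      = ∑ i ∈ Ico 1 t, ∑ x ∈ Ico 0 (t+1+1), D i x := by
    rw [← Finset.sum_add_distrib]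
    exact Finset.sum_congr rfl
      (fun i _ => (Finset.sum_Ico_succ_top (by omega : 0 ≤ t+1) _).symm)
  have hap : (∑ i ∈ Ico 1 t, ∑ x ∈ Ico 0 (t+1+1), D i x) + (∑ x ∈ Ico 0 (t+1+1), D t x)
      = ∑ i ∈ Ico 1 (t+1), ∑ x ∈ Ico 0 (t+1+1), D i x :=
    (Finset.sum_Ico_succ_top (by omega : 1 ≤ t) _).symm
  have haj : (∑ i ∈ Ico 1 t, ∑ x ∈ Ico (t+1+1) (n+1), D i x * J)
      + (∑ x ∈ Ico (t+1+1) (n+1), D t x * J)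
      = ∑ i ∈ Ico 1 (t+1), ∑ x ∈ Ico (t+1+1) (n+1), D i x * J :=
    (Finset.sum_Ico_succ_top (by omega : 1 ≤ t) _).symm
  have hns : (∑ i ∈ Ico (t+1) n, ∑ x ∈ Ico 0 (t+1), D i x * A)
      + (∑ i ∈ Ico (t+1) n, D i (t+1) * A)
      = ∑ i ∈ Ico (t+1) n, ∑ x ∈ Ico 0 (t+1+1), D i x * A := by
    rw [← Finset.sum_add_distrib]
    exact Finset.sum_congr rfl
      (fun i _ => (Finset.sum_Ico_succ_top (by omega : 0 ≤ t+1) _).symm)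
  nth_rewrite 1 [eA]
  rw [hrowt, hj0, hjp, hsup]
  calc D 0 (t+1) * A + ((∑ i ∈ Ico 1 t, D i (t+1) * A)
          + (D t (t+1) * A + ∑ i ∈ Ico (t+1) n, D i (t+1) * A))
        + ((∑ x ∈ Ico 0 (t+1+1), D t x)
          + ((∑ x ∈ Ico (t+1+1) (n+1), D t x * A) + (∑ x ∈ Ico (t+1+1) (n+1), D t x * J))
          + (∑ i ∈ Ico (t+1) (n-1), (∑ x ∈ Ico 0 (n + 1), D i x)))
        + δ + (∑ x ∈ Ico 1 (t+1), D 0 x)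
        + (D 0 (t+1) * J + ∑ x ∈ Ico (t+1+1) (n+1), D 0 x * J)
        + (∑ i ∈ Ico 1 t, ∑ x ∈ Ico 0 (t+1), D i x)
        + ((∑ i ∈ Ico 1 t, D i (t+1) * J)
          + ∑ i ∈ Ico 1 t, ∑ x ∈ Ico (t+1+1) (n+1), D i x * J)
        + ((∑ x ∈ Ico 0 (t+1), D t x * A)
          + ∑ i ∈ Ico (t+1) n, ∑ x ∈ Ico 0 (t+1), D i x * A)
      = ((∑ x ∈ Ico 0 (t+1), D t x * A) + D t (t+1) * A
          + (∑ x ∈ Ico (t+1+1) (n+1), D t x * A))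
        + (∑ i ∈ Ico (t+1) (n-1), (∑ x ∈ Ico 0 (n + 1), D i x))
        + δ
        + ((∑ x ∈ Ico 1 (t+1), D 0 x) + (D 0 (t+1) * A + D 0 (t+1) * J))
        + (∑ x ∈ Ico (t+1+1) (n+1), D 0 x * J)
        + ((∑ i ∈ Ico 1 t, ∑ x ∈ Ico 0 (t+1), D i x)
          + ((∑ i ∈ Ico 1 t, D i (t+1) * A) + (∑ i ∈ Ico 1 t, D i (t+1) * J)))
        + ((∑ i ∈ Ico 1 t, ∑ x ∈ Ico (t+1+1) (n+1), D i x * J)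
          + (∑ x ∈ Ico (t+1+1) (n+1), D t x * J))
        + ((∑ x ∈ Ico 0 (t+1+1), D t x)
          + ((∑ i ∈ Ico (t+1) n, ∑ x ∈ Ico 0 (t+1), D i x * A)
            + (∑ i ∈ Ico (t+1) n, D i (t+1) * A))) := by abel
    _ = A + (∑ i ∈ Ico (t+1) (n-1), (∑ x ∈ Ico 0 (n + 1), D i x))
        + δ
        + ((∑ x ∈ Ico 1 (t+1), D 0 x) + D 0 (t+1))
        + (∑ x ∈ Ico (t+1+1) (n+1), D 0 x * J)
        + ((∑ i ∈ Ico 1 t, ∑ x ∈ Ico 0 (t+1), D i x) + (∑ i ∈ Ico 1 t, D i (t+1)))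
        + (∑ i ∈ Ico 1 (t+1), ∑ x ∈ Ico (t+1+1) (n+1), D i x * J)
        + ((∑ x ∈ Ico 0 (t+1+1), D t x)
          + (∑ i ∈ Ico (t+1) n, ∑ x ∈ Ico 0 (t+1+1), D i x * A)) := by
        rw [hCt, hr0, hrp, haj, hns]
    _ = A + (∑ i ∈ Ico (t+1) (n-1), (∑ x ∈ Ico 0 (n + 1), D i x))
        + δ + (∑ x ∈ Ico 1 (t+1+1), D 0 x)
        + (∑ x ∈ Ico (t+1+1) (n+1), D 0 x * J)
        + ((∑ i ∈ Ico 1 t, ∑ x ∈ Ico 0 (t+1+1), D i x) + (∑ x ∈ Ico 0 (t+1+1), D t x))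
        + (∑ i ∈ Ico 1 (t+1), ∑ x ∈ Ico (t+1+1) (n+1), D i x * J)
        + (∑ i ∈ Ico (t+1) n, ∑ x ∈ Ico 0 (t+1+1), D i x * A) := by
        rw [hb0, hbp]
        abel
    _ = A + (∑ i ∈ Ico (t+1) (n-1), (∑ x ∈ Ico 0 (n + 1), D i x))
        + δ + (∑ x ∈ Ico 1 (t+1+1), D 0 x)
        + (∑ x ∈ Ico (t+1+1) (n+1), D 0 x * J)
        + (∑ i ∈ Ico 1 (t+1), ∑ x ∈ Ico 0 (t+1+1), D i x)
        + (∑ i ∈ Ico 1 (t+1), ∑ x ∈ Ico (t+1+1) (n+1), D i x * J)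
        + (∑ i ∈ Ico (t+1) n, ∑ x ∈ Ico 0 (t+1+1), D i x * A) := by
        rw [hap]

theorem grid_L3 (hn : 2 ≤ n)
    (hrow : ∀ i < n, ∑ x ∈ Ico 0 (n + 1), D i x = 1)
    (hsplit : D 0 0 = A + δ)
    (hE1 : ∀ y < n + 1, A = ∑ i ∈ Ico 0 n, D i y * A)
    (hC1 : ∀ i < n, ∑ x ∈ Ico 0 (n + 1), D i x * A = A)
    (hE2 : ∀ i x, D i x = D i x * A + D i x * J) :
    gridState n D A δ J (n - 1) = (n - 1) • 1 := by
  unfold gridState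
  have hn1 : (n - 1) + 1 = n := by omega
  rw [hn1, Finset.Ico_self, Finset.sum_empty]
  have hsing : ∀ f : ℕ → Q, ∑ x ∈ Ico n (n + 1), f x = f n := by
    intro f
    rw [Finset.sum_Ico_succ_top le_rfl, Finset.Ico_self, Finset.sum_empty, zero_add]
  have hsingJ : ∑ i ∈ Ico 1 (n-1), ∑ x ∈ Ico n (n + 1), D i x * J
      = ∑ i ∈ Ico 1 (n-1), D i n * J :=
    Finset.sum_congr rfl (fun i _ => hsing _)
  rw [hsing, hsingJ]
  have hsup : ∑ i ∈ Ico (n-1) n, ∑ x ∈ Ico 0 n, D i x * A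
      = ∑ x ∈ Ico 0 n, D (n-1) x * A := by
    rw [Finset.sum_eq_sum_Ico_succ_bot (by omega : n - 1 < n), hn1, Finset.Ico_self,
      Finset.sum_empty, add_zero]
  rw [hsup]
  have hsplitTop : ∀ f : ℕ → Q,
      ∑ i ∈ Ico 1 n, f i = (∑ i ∈ Ico 1 (n-1), f i) + f (n-1) := by
    intro f
    conv_lhs => rw [← hn1]
    exact Finset.sum_Ico_succ_top (by omega) f
  have e1 : A = D 0 n * A + ((∑ i ∈ Ico 1 (n-1), D i n * A) + D (n-1) n * A) := by
    have h := hE1 n (by omega)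
    rw [Finset.sum_eq_sum_Ico_succ_bot (by omega : (0:ℕ) < n), Nat.zero_add,
      hsplitTop (fun i => D i n * A)] at h
    exact h
  nth_rewrite 1 [e1]
  calc D 0 n * A + ((∑ i ∈ Ico 1 (n-1), D i n * A) + D (n-1) n * A) + 0 + δ
        + (∑ x ∈ Ico 1 n, D 0 x)
        + (D 0 n * J)
        + (∑ i ∈ Ico 1 (n-1), ∑ x ∈ Ico 0 n, D i x)
        + (∑ i ∈ Ico 1 (n-1), D i n * J)
        + (∑ x ∈ Ico 0 n, D (n-1) x * A)
      = ((∑ x ∈ Ico 0 n, D (n-1) x * A) + D (n-1) n * A)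
        + (D 0 n * A + D 0 n * J) + δ + (∑ x ∈ Ico 1 n, D 0 x)
        + (∑ i ∈ Ico 1 (n-1), (∑ x ∈ Ico 0 n, D i x))
        + ((∑ i ∈ Ico 1 (n-1), D i n * A) + (∑ i ∈ Ico 1 (n-1), D i n * J)) := by
        abel
    _ = A + D 0 n + δ + (∑ x ∈ Ico 1 n, D 0 x)
        + (∑ i ∈ Ico 1 (n-1), (∑ x ∈ Ico 0 n, D i x))
        + (∑ i ∈ Ico 1 (n-1), (D i n * A + D i n * J)) := by
        rw [← Finset.sum_add_distrib,
          show (∑ x ∈ Ico 0 n, D (n-1) x * A) + D (n-1) n * A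
              = ∑ x ∈ Ico 0 (n+1), D (n-1) x * A from
            (Finset.sum_Ico_succ_top (by omega : 0 ≤ n) _).symm,
          hC1 (n-1) (by omega), ← hE2 0 n]
    _ = A + δ + ((∑ x ∈ Ico 1 n, D 0 x) + D 0 n)
        + ((∑ i ∈ Ico 1 (n-1), ∑ x ∈ Ico 0 n, D i x) + (∑ i ∈ Ico 1 (n-1), D i n)) := by
        rw [Finset.sum_congr rfl (fun i (_ : i ∈ Ico 1 (n-1)) => (hE2 i n).symm)]
        abel
    _ = (A + δ + ∑ x ∈ Ico 1 (n+1), D 0 x)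
        + (∑ i ∈ Ico 1 (n-1), ∑ x ∈ Ico 0 (n+1), D i x) := by
        rw [← Finset.sum_Ico_succ_top (by omega : 1 ≤ n) (D 0 ·), ← Finset.sum_add_distrib,
          Finset.sum_congr rfl
            (fun i (_ : i ∈ Ico 1 (n-1)) =>
              (Finset.sum_Ico_succ_top (by omega : 0 ≤ n) (D i ·)).symm)]
    _ = (∑ x ∈ Ico 0 (n+1), D 0 x) + (∑ i ∈ Ico 1 (n-1), ∑ x ∈ Ico 0 (n+1), D i x) := by
        rw [Finset.sum_eq_sum_Ico_succ_bot (by omega : 0 < n + 1) (D 0 ·), hsplit]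
    _ = ∑ i ∈ Ico 0 (n-1), ∑ x ∈ Ico 0 (n+1), D i x := by
        rw [Finset.sum_eq_sum_Ico_succ_bot (by omega : 0 < n - 1)]
    _ = ∑ i ∈ Ico 0 (n-1), (1 : Q) :=
        Finset.sum_congr rfl (fun i hi => hrow i (by
          have := (Finset.mem_Ico.mp hi).2; omega))
    _ = (n - 1) • 1 := by rw [Finset.sum_const, Nat.card_Ico, Nat.sub_zero]

/-- Core absorption lemma: in any semiring in which a grid of elements has all `n + 1`
column sums and all `n` row sums equal to `1`, the element `(n-1) • 1` absorbs the
summand `A` of the corner entry. -/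
theorem grid_core (hn : 2 ≤ n)
    (hcol : ∀ y < n + 1, ∑ i ∈ Ico 0 n, D i y = 1)
    (hrow : ∀ i < n, ∑ x ∈ Ico 0 (n + 1), D i x = 1)
    (hsplit : D 0 0 = A + δ) :
    (n - 1) • (1 : Q) + A = (n - 1) • 1 := by
  have hn0 : 0 < n := by omega
  set J : Q := δ + ∑ i ∈ Ico 1 n, D i 0 with hJ
  have hAJ : A + J = 1 := by
    have h0 := hcol 0 (by omega)
    rw [Finset.sum_eq_sum_Ico_succ_bot hn0, Nat.zero_add] at h0
    rw [hJ, ← add_assoc, ← hsplit, h0]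
  have hE1 : ∀ y < n + 1, A = ∑ i ∈ Ico 0 n, D i y * A := by
    intro y hy
    rw [← Finset.sum_mul, hcol y hy, one_mul]
  have hC1 : ∀ i < n, ∑ x ∈ Ico 0 (n + 1), D i x * A = A := by
    intro i hi
    rw [← Finset.sum_mul, hrow i hi, one_mul]
  have hE2 : ∀ i x, D i x = D i x * A + D i x * J := by
    intro i x
    rw [← mul_add, hAJ, mul_one]
  have chain : ∀ t, 1 ≤ t → t ≤ n - 1 → gridState n D A δ J 1 = gridState n D A δ J t := by
    intro t
    induction t with
    | zero => omega
    | succ s ih =>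
      intro h1 h2
      rcases Nat.eq_or_lt_of_le h1 with h | h
      · rw [← h]
      · have hs1 : 1 ≤ s := by omega
        rw [ih hs1 (by omega), grid_L2 n D A δ J hn hE1 hC1 hE2 s hs1 (by omega)]
  rw [grid_L1 n D A δ J hn hrow hsplit hE1 hC1 hE2, chain (n-1) (by omega) le_rfl,
    grid_L3 n D A δ J hn hrow hsplit hE1 hC1 hE2]

theorem stmt_4 (n m : ℕ) (hn : 2 ≤ n) (hm : 1 ≤ m)
    (i : Fin n) (j : Fin (n + 1)) (k : Fin m) :
    ringConGen (gridRel n m) ((n - 1) • (1 : GridSemiring n m))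
      ((n - 1) • (1 : GridSemiring n m) + bgen n m i j k) := by
  haveI : NeZero n := ⟨by omega⟩
  set c : RingCon (GridSemiring n m) := ringConGen (gridRel n m) with hc
  let q : GridSemiring n m →+* c.Quotient := c.mk'
  have hcolS : ∀ jj : Fin (n + 1),
      (∑ ii : Fin n, ∑ kk : Fin m, (q (bgen n m ii jj kk) : c.Quotient)) = 1 := by
    intro jj
    have hrel : c (∑ ii : Fin n, ∑ kk : Fin m, bgen n m ii jj kk) 1 := by
      rw [hc]
      exact RingConGen.Rel.of _ _ ⟨rfl, Or.inl ⟨jj, rfl⟩⟩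
    have h1 : q (∑ ii : Fin n, ∑ kk : Fin m, bgen n m ii jj kk) = q 1 := c.eq.mpr hrel
    rw [map_one] at h1
    rw [← h1, map_sum]
    exact Finset.sum_congr rfl fun ii _ => (map_sum q _ _).symm
  have hrowS : ∀ ii : Fin n,
      (∑ jj : Fin (n + 1), ∑ kk : Fin m, (q (bgen n m ii jj kk) : c.Quotient)) = 1 := by
    intro ii
    have hrel : c (∑ jj : Fin (n + 1), ∑ kk : Fin m, bgen n m ii jj kk) 1 := by
      rw [hc]
      exact RingConGen.Rel.of _ _ ⟨rfl, Or.inr ⟨ii, rfl⟩⟩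
    have h1 : q (∑ jj : Fin (n + 1), ∑ kk : Fin m, bgen n m ii jj kk) = q 1 := c.eq.mpr hrel
    rw [map_one] at h1
    rw [← h1, map_sum]
    exact Finset.sum_congr rfl fun jj _ => (map_sum q _ _).symm
  -- the grid, re-indexed over ℕ so that the target entry sits at (0,0)
  set D : ℕ → ℕ → c.Quotient := fun x y =>
    if hx : x < n then
      if hy : y < n + 1 then
        ∑ kk : Fin m, q (bgen n m (Equiv.swap 0 i ⟨x, hx⟩) (Equiv.swap 0 j ⟨y, hy⟩) kk)
      else 0
    else 0 with hD
  have hDval : ∀ (x y : ℕ) (hx : x < n) (hy : y < n + 1),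
      D x y = ∑ kk : Fin m,
        q (bgen n m (Equiv.swap 0 i ⟨x, hx⟩) (Equiv.swap 0 j ⟨y, hy⟩) kk) := by
    intro x y hx hy
    simp only [hD]
    rw [dif_pos hx, dif_pos hy]
  have hcolD : ∀ y < n + 1, ∑ x ∈ Ico 0 n, D x y = 1 := by
    intro y hy
    have step : ∑ x ∈ Ico 0 n, D x y
        = ∑ x : Fin n, ∑ kk : Fin m,
            q (bgen n m (Equiv.swap 0 i x) (Equiv.swap 0 j ⟨y, hy⟩) kk) := by
      rw [← Finset.range_eq_Ico, ← Fin.sum_univ_eq_sum_range (fun x => D x y)]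
      refine Finset.sum_congr rfl fun x _ => ?_
      rw [hDval x y x.isLt hy, Fin.eta]
    rw [step, Equiv.sum_comp (Equiv.swap 0 i)
      (fun ii => ∑ kk : Fin m, q (bgen n m ii (Equiv.swap 0 j ⟨y, hy⟩) kk))]
    exact hcolS _
  have hrowD : ∀ x < n, ∑ y ∈ Ico 0 (n + 1), D x y = 1 := by
    intro x hx
    have step : ∑ y ∈ Ico 0 (n + 1), D x y
        = ∑ y : Fin (n + 1), ∑ kk : Fin m,
            q (bgen n m (Equiv.swap 0 i ⟨x, hx⟩) (Equiv.swap 0 j y) kk) := by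
      rw [← Finset.range_eq_Ico, ← Fin.sum_univ_eq_sum_range (fun y => D x y)]
      refine Finset.sum_congr rfl fun y _ => ?_
      rw [hDval x y hx y.isLt, Fin.eta]
    rw [step, Equiv.sum_comp (Equiv.swap 0 j)
      (fun jj => ∑ kk : Fin m, q (bgen n m (Equiv.swap 0 i ⟨x, hx⟩) jj kk))]
    exact hrowS _
  have hsplitD : D 0 0 = q (bgen n m i j k)
      + ∑ kk ∈ Finset.univ.erase k, q (bgen n m i j kk) := by
    rw [hDval 0 0 (by omega) (by omega)]
    have hz1 : (⟨0, by omega⟩ : Fin n) = 0 := by ext; simp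
    have hz2 : (⟨0, by omega⟩ : Fin (n + 1)) = 0 := by ext; simp
    rw [hz1, hz2, Equiv.swap_apply_left, Equiv.swap_apply_left]
    exact (Finset.add_sum_erase _ _ (Finset.mem_univ k)).symm
  have key := grid_core n D (q (bgen n m i j k))
    (∑ kk ∈ Finset.univ.erase k, q (bgen n m i j kk)) hn hcolD hrowD hsplitD
  have keyS : q ((n - 1) • (1 : GridSemiring n m))
      = q ((n - 1) • (1 : GridSemiring n m) + bgen n m i j k) := by
    rw [map_add, map_nsmul, map_one]
    exact key.symm
  exact c.eq.mp keyS
end CoreLemmas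
end

section
/- Let n ≥ 2 and m ≥ 1. In the free semiring S on the alphabet Fin n × Fin (n+1) × Fin m, the elements (n−1)·1 and n·1 are related by the congruence ∼ generated by the row and column equations. -/
section Aux

variable {S : Type*} [Semiring S] (c : RingCon S)

private lemma smul_lemma1 (k : ℕ) (A B C : S) :
    (k + 2) • B + (k + 1) • (A + C) = ((k + 1) • A + (B + C)) + ((k + 1) • B + k • C) := by
  module

private lemma smul_lemma2 (k : ℕ) (A B C : S) :
    (k + 2) • (A + B) + (k + 1) • C = ((k + 2) • A + (B + C)) + ((k + 1) • B + k • C) := by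
  module

private lemma rc_nsmul (k : ℕ) {x y : S} (h : c x y) : c (k • x) (k • y) := by
  induction k with
  | zero => simpa using c.refl 0
  | succ t ih => rw [succ_nsmul, succ_nsmul]; exact c.add ih h

/-- The key abstract lemma: if an `(p+2) × (p+3)` matrix over a semiring has all row sums
and all column sums related to `1` by a ring congruence `c`, then `c ((p+1)•1) ((p+2)•1)`. -/
private theorem key (p : ℕ) (a : Fin (p + 2) → Fin (p + 2 + 1) → S)
    (hcol : ∀ j, c (∑ i, a i j) 1) (hrow : ∀ i, c (∑ j, a i j) 1) :
    c ((p + 1) • (1 : S)) ((p + 2) • (1 : S)) := by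
  classical
  set s : Fin (p + 2) → S := fun i => a i 0 with hs
  set t : Fin (p + 2) → S := fun v => ∑ u ∈ Finset.univ.erase v, a u 0 with ht
  set K : S := ∑ i, a i 0 with hKdef
  have hK : c K 1 := hcol 0
  have hKsplit : ∀ v : Fin (p + 2), K = s v + t v := fun v =>
    (Finset.add_sum_erase _ _ (Finset.mem_univ v)).symm
  -- the pump step: (p+1) • s v + t v  ∼  (p+2) • s v + t v
  have pump : ∀ v : Fin (p + 2), c ((p + 1) • s v + t v) ((p + 2) • s v + t v) := by
    intro v
    have h1 : ∀ u : Fin (p + 2), c (s v) ((∑ j, a u j) * s v) := fun u => by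
      simpa using c.mul (c.symm (hrow u)) (c.refl (s v))
    have h2 : c (t v) (K * t v) := by
      simpa using c.mul (c.symm hK) (c.refl (t v))
    have e01 : c ((p + 1) • s v + t v) ((p • s v + (∑ j, a v j) * s v) + K * t v) := by
      have h := c.add (c.add (c.refl (p • s v)) (h1 v)) h2
      rw [succ_nsmul]
      exact h
    set W : S := ∑ j ∈ Finset.univ.erase 0, a v j * s v with hW
    have hRv : (∑ j, a v j) * s v = s v * s v + W := by
      rw [Finset.sum_mul, ← Finset.add_sum_erase _ _ (Finset.mem_univ (0 : Fin (p + 2 + 1)))]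
    have hKt : K * t v = s v * t v + t v * t v := by
      rw [hKsplit v, add_mul]
    have e1eq : (p • s v + (∑ j, a v j) * s v) + K * t v
        = (p • s v + (W + t v * t v)) + s v * (s v + t v) := by
      rw [hRv, hKt, mul_add]; abel
    have h3 : c (s v * (s v + t v)) (s v) := by
      have h := c.mul (c.refl (s v)) hK
      rw [hKsplit v, mul_one] at h
      exact h
    have hcard : (Finset.univ.erase v).card = p + 1 := by
      simp [Finset.card_erase_of_mem]
    have e2eq : (p • s v + (W + t v * t v)) + s v
        = (∑ _u ∈ Finset.univ.erase v, s v) + (W + t v * t v) := by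
      rw [Finset.sum_const, hcard, succ_nsmul]; abel
    have h4 : c (∑ _u ∈ Finset.univ.erase v, s v)
        (∑ u ∈ Finset.univ.erase v, (∑ j, a u j) * s v) :=
      c.finsetSum _ fun u _ => h1 u
    have e3eq : (∑ u ∈ Finset.univ.erase v, (∑ j, a u j) * s v) + (W + t v * t v)
        = (∑ j ∈ Finset.univ.erase 0, (∑ i, a i j) * s v) + (t v * s v + t v * t v) := by
      have expand : ∀ u : Fin (p + 2), (∑ j, a u j) * s v
          = a u 0 * s v + ∑ j ∈ Finset.univ.erase 0, a u j * s v := by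
        intro u
        rw [Finset.sum_mul, ← Finset.add_sum_erase _ _ (Finset.mem_univ (0 : Fin (p + 2 + 1)))]
      have lhs1 : (∑ u ∈ Finset.univ.erase v, (∑ j, a u j) * s v)
          = t v * s v + ∑ u ∈ Finset.univ.erase v, ∑ j ∈ Finset.univ.erase 0, a u j * s v := by
        rw [ht]
        simp only [expand]
        rw [Finset.sum_add_distrib, Finset.sum_mul]
      have rhs1 : (∑ j ∈ Finset.univ.erase 0, (∑ i, a i j) * s v)
          = W + ∑ u ∈ Finset.univ.erase v, ∑ j ∈ Finset.univ.erase 0, a u j * s v := by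
        rw [hW, Finset.sum_comm, ← Finset.sum_add_distrib]
        refine Finset.sum_congr rfl fun j _ => ?_
        rw [Finset.sum_mul, ← Finset.add_sum_erase _ (fun u => a u j * s v) (Finset.mem_univ v)]
      rw [lhs1, rhs1]; abel
    have h5 : c (∑ j ∈ Finset.univ.erase 0, (∑ i, a i j) * s v) ((p + 2) • s v) := by
      have h := c.finsetSum (Finset.univ.erase (0 : Fin (p + 2 + 1)))
        (f := fun j => (∑ i, a i j) * s v) (g := fun _ => s v)
        (fun j _ => by simpa using c.mul (hcol j) (c.refl (s v)))
      have hcard2 : (Finset.univ.erase (0 : Fin (p + 2 + 1))).card = p + 2 := by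
        simp [Finset.card_erase_of_mem]
      rwa [Finset.sum_const, hcard2] at h
    have h6 : c (t v * s v + t v * t v) (t v) := by
      have h := c.mul (c.refl (t v)) hK
      rw [hKsplit v, mul_one, mul_add] at h
      exact h
    refine c.trans e01 ?_
    rw [e1eq]
    refine c.trans (c.add (c.refl _) h3) ?_
    rw [e2eq]
    refine c.trans (c.add h4 (c.refl _)) ?_
    rw [e3eq]
    exact c.add h5 h6
  -- outer induction: raise the coefficient of each s i from p+1 to p+2
  have houter : ∀ F : Finset (Fin (p + 2)),
      c ((p + 1) • K) ((p + 2) • (∑ i ∈ F, s i) + (p + 1) • (∑ i ∈ Fᶜ, s i)) := by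
    intro F
    induction F using Finset.induction_on with
    | empty =>
      simp only [Finset.compl_empty, Finset.sum_empty, smul_zero, zero_add]
      exact c.refl ((p + 1) • K)
    | @insert v F hv ih =>
      refine c.trans ih ?_
      have hvc : v ∈ Fᶜ := Finset.mem_compl.mpr hv
      have hsplitc : (∑ i ∈ Fᶜ, s i) = s v + ∑ i ∈ Fᶜ.erase v, s i :=
        (Finset.add_sum_erase _ _ hvc).symm
      have hinsert : (∑ i ∈ insert v F, s i) = s v + ∑ i ∈ F, s i := Finset.sum_insert hv
      have hcompl : (insert v F)ᶜ = Fᶜ.erase v := by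
        rw [Finset.compl_insert]
      have htv : t v = (∑ i ∈ F, s i) + ∑ i ∈ Fᶜ.erase v, s i := by
        show (∑ u ∈ Finset.univ.erase v, a u 0) = _
        have hun : Finset.univ.erase v = F ∪ Fᶜ.erase v := by
          ext x
          simp only [Finset.mem_erase, Finset.mem_univ, and_true, Finset.mem_union,
            Finset.mem_compl]
          constructor
          · intro hx
            by_cases hxF : x ∈ F
            · exact Or.inl hxF
            · exact Or.inr ⟨hx, hxF⟩
          · rintro (hx | ⟨hx, _⟩)
            · rintro rfl; exact hv hx
            · exact hx
        have hdisj : Disjoint F (Fᶜ.erase v) :=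
          Finset.disjoint_left.mpr fun x hx hx' =>
            (Finset.mem_compl.mp (Finset.mem_of_mem_erase hx')) hx
        rw [hun, Finset.sum_union hdisj]
      have lhs_eq : (p + 2) • (∑ i ∈ F, s i) + (p + 1) • (∑ i ∈ Fᶜ, s i)
          = ((p + 1) • s v + t v)
            + ((p + 1) • (∑ i ∈ F, s i) + p • (∑ i ∈ Fᶜ.erase v, s i)) := by
        rw [hsplitc, htv]
        exact smul_lemma1 p (s v) (∑ i ∈ F, s i) (∑ i ∈ Fᶜ.erase v, s i)
      have rhs_eq : (p + 2) • (∑ i ∈ insert v F, s i) + (p + 1) • (∑ i ∈ (insert v F)ᶜ, s i)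
          = ((p + 2) • s v + t v)
            + ((p + 1) • (∑ i ∈ F, s i) + p • (∑ i ∈ Fᶜ.erase v, s i)) := by
        rw [hcompl, hinsert, htv]
        exact smul_lemma2 p (s v) (∑ i ∈ F, s i) (∑ i ∈ Fᶜ.erase v, s i)
      rw [lhs_eq, rhs_eq]
      exact c.add (pump v) (c.refl _)
  have h1 := houter Finset.univ
  rw [Finset.compl_univ] at h1
  simp only [Finset.sum_empty, smul_zero, add_zero] at h1
  have hKuniv : (∑ i ∈ Finset.univ, s i) = K := rfl
  rw [hKuniv] at h1
  exact c.trans (c.trans (rc_nsmul c (p + 1) (c.symm hK)) h1) (rc_nsmul c (p + 2) hK)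

end Aux

theorem stmt_5 (n m : ℕ) (hn : 2 ≤ n) (hm : 1 ≤ m) :
    ringConGen (gridRel n m) ((n - 1) • (1 : GridSemiring n m))
      (n • (1 : GridSemiring n m)) := by
  obtain ⟨p, rfl⟩ := Nat.exists_eq_add_of_le' hn
  have hcol : ∀ j, ringConGen (gridRel (p + 2) m)
      (∑ i, (∑ k, bgen (p + 2) m i j k)) 1 := fun j =>
    RingConGen.Rel.of _ _ ⟨rfl, Or.inl ⟨j, rfl⟩⟩
  have hrow : ∀ i, ringConGen (gridRel (p + 2) m)
      (∑ j, (∑ k, bgen (p + 2) m i j k)) 1 := fun i =>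
    RingConGen.Rel.of _ _ ⟨rfl, Or.inr ⟨i, rfl⟩⟩
  have h := key (ringConGen (gridRel (p + 2) m)) p
    (fun i j => ∑ k, bgen (p + 2) m i j k) hcol hrow
  simpa using h
end

section
/- Let L be a first-order language and M a nonempty L-structure. Let n ≥ 1 and let φ : [2n] → [2n] be a bracketing involution. If M has bracket terms b₁,…,b₂ₙ with respect to φ, then M has n×(n+1)×3-terms. -/
open FirstOrder Language

/-- `M` has `n×(n+1)×m`-terms: idempotent `(n+1)·m`-ary term operations `f i`
(variables indexed by pairs `(j,k) ∈ Fin (n+1) × Fin m`) for `i ∈ Fin n`, and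
idempotent `n·m`-ary term operations `g j` (variables indexed by pairs
`(i,k) ∈ Fin n × Fin m`) for `j ∈ Fin (n+1)`, such that `f i` applied to the tuple
which is `y` at position `(j,k)` and `x` elsewhere equals `g j` applied to the tuple
which is `y` at position `(i,k)` and `x` elsewhere. -/
def HasGridTerms (L : Language) (M : Type*) [L.Structure M] (n m : ℕ) : Prop :=
  ∃ (f : Fin n → L.Term (Fin (n + 1) × Fin m)) (g : Fin (n + 1) → L.Term (Fin n × Fin m)),
    (∀ (i : Fin n) (x : M), (f i).realize (fun _ => x) = x) ∧
    (∀ (j : Fin (n + 1)) (x : M), (g j).realize (fun _ => x) = x) ∧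
    (∀ (i : Fin n) (j : Fin (n + 1)) (k : Fin m) (x y : M),
      (f i).realize (fun p => if p = (j, k) then y else x) =
      (g j).realize (fun p => if p = (i, k) then y else x))

/-- `φ : [2n] → [2n]` is a bracketing involution: a self-inverse bijection without
fixed points such that `i < j < φ(i)` implies `i < φ(j) < φ(i)`. (Indices range
over `1,…,2n`.) -/
def IsBracketingInvolution (n : ℕ) (φ : ℕ → ℕ) : Prop :=
  (∀ i, 1 ≤ i → i ≤ 2 * n → 1 ≤ φ i ∧ φ i ≤ 2 * n) ∧
  (∀ i, 1 ≤ i → i ≤ 2 * n → φ (φ i) = i) ∧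
  (∀ i, 1 ≤ i → i ≤ 2 * n → φ i ≠ i) ∧
  (∀ i j, 1 ≤ i → j ≤ 2 * n → i < j → j < φ i → i < φ j ∧ φ j < φ i)

/-- `b 1, …, b (2n)` are bracket terms for `M` with respect to `φ`: idempotent ternary
term operations satisfying `b₁(x,y,z) = x`, `b₂ₙ(x,y,z) = z`,
`b₂ᵢ(y,x,x) = b₂ᵢ₋₁(y,x,x)`, `b₂ᵢ(x,x,y) = b₂ᵢ₊₁(x,x,y)` (whenever the indices lie
in `[2n]`), and `bᵢ(x,y,x) = b_{φ(i)}(x,y,x)`. -/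
def HasBracketTerms (L : Language) (M : Type*) [L.Structure M] (n : ℕ) (φ : ℕ → ℕ)
    (b : ℕ → L.Term (Fin 3)) : Prop :=
  (∀ i, 1 ≤ i → i ≤ 2 * n → ∀ x : M, (b i).realize (fun _ => x) = x) ∧
  (∀ x y z : M, (b 1).realize ![x, y, z] = x) ∧
  (∀ x y z : M, (b (2 * n)).realize ![x, y, z] = z) ∧
  (∀ i, 1 ≤ i → i ≤ n → ∀ x y : M,
    (b (2 * i)).realize ![y, x, x] = (b (2 * i - 1)).realize ![y, x, x]) ∧
  (∀ i, 1 ≤ i → 2 * i + 1 ≤ 2 * n → ∀ x y : M,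
    (b (2 * i)).realize ![x, x, y] = (b (2 * i + 1)).realize ![x, x, y]) ∧
  (∀ i, 1 ≤ i → i ≤ 2 * n → ∀ x y : M,
    (b i).realize ![x, y, x] = (b (φ i)).realize ![x, y, x])


private lemma realize_pt_pos {L : Language} {M : Type*} [L.Structure M]
    (t : L.Term (Fin 3)) {α : Type*} [DecidableEq α]
    (c : Fin 3 → α) (j : α) (k : Fin 3) (x y : M) (h : c k = j)
    {w : Fin 3 → M} (hv : (fun kk : Fin 3 => if kk = k then y else x) = w) :
    (Term.relabel (fun kk => (c kk, kk)) t).realize (fun p => if p = (j, k) then y else x)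
      = t.realize w := by
  rw [Term.realize_relabel, ← hv]
  congr 1
  funext kk
  by_cases h1 : kk = k
  · subst h1
    simp [Function.comp, h]
  · simp [Function.comp, Prod.ext_iff, h1]

private lemma realize_pt_neg {L : Language} {M : Type*} [L.Structure M]
    (t : L.Term (Fin 3)) {α : Type*} [DecidableEq α]
    (c : Fin 3 → α) (j : α) (k : Fin 3) (x y : M) (h : ¬ (c k = j)) :
    (Term.relabel (fun kk => (c kk, kk)) t).realize (fun p => if p = (j, k) then y else x)
      = t.realize (fun _ => x) := by
  rw [Term.realize_relabel]
  congr 1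
  funext kk
  by_cases h1 : kk = k
  · subst h1
    simp [Function.comp, Prod.ext_iff, h]
  · simp [Function.comp, Prod.ext_iff, h1]

private lemma if_vec0 {M : Type*} (x y : M) :
    (fun kk : Fin 3 => if kk = (0 : Fin 3) then y else x) = ![y, x, x] := by
  funext kk; fin_cases kk <;> rfl

private lemma if_vec1 {M : Type*} (x y : M) :
    (fun kk : Fin 3 => if kk = (1 : Fin 3) then y else x) = ![x, y, x] := by
  funext kk; fin_cases kk <;> rfl

private lemma if_vec2 {M : Type*} (x y : M) :
    (fun kk : Fin 3 => if kk = (2 : Fin 3) then y else x) = ![x, x, y] := by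
  funext kk; fin_cases kk <;> rfl

private lemma interval_even (n : ℕ) (φ : ℕ → ℕ) (hφ : IsBracketingInvolution n φ) :
    ∀ d a b, b - a ≤ d → 1 ≤ a → b ≤ 2*n+1 → a < b →
      (∀ c, a < c → c < b → a < φ c ∧ φ c < b) → (b - a) % 2 = 1 := by
  obtain ⟨hr, hinv, hfix, hnest⟩ := hφ
  intro d
  induction d with
  | zero => intro a b h1 _ _ h4 _; omega
  | succ d ih =>
    intro a b hd ha hb hab hI
    by_cases hm : a + 1 = b
    · omega
    have hm1 : a + 1 < b := by omega
    obtain ⟨hφm1, hφm2⟩ := hI (a+1) (by omega) hm1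
    have hne : φ (a+1) ≠ a+1 := hfix (a+1) (by omega) (by omega)
    have hmm : a+1 < φ (a+1) := by omega
    have e1 : (φ (a+1) - (a+1)) % 2 = 1 := by
      apply ih (a+1) (φ (a+1)) (by omega) (by omega) (by omega) hmm
      intro c hc1 hc2
      exact hnest (a+1) c (by omega) (by omega) hc1 hc2
    have e2 : (b - φ (a+1)) % 2 = 1 := by
      rcases eq_or_lt_of_le (show φ (a+1) + 1 ≤ b from by omega) with hend | hend
      · omega
      apply ih (φ (a+1)) b (by omega) (by omega) hb (by omega)
      intro c hc1 hc2
      obtain ⟨hq1, hq2⟩ := hI c (by omega) hc2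
      have hφφc : φ (φ c) = c := hinv c (by omega) (by omega)
      have hφφm : φ (φ (a+1)) = a+1 := hinv (a+1) (by omega) (by omega)
      have hne1 : φ c ≠ a+1 := by
        intro h
        have h6 := congrArg φ h
        rw [hφφc] at h6
        omega
      have hnotin : ¬ (a+1 < φ c ∧ φ c < φ (a+1)) := by
        rintro ⟨u1, u2⟩
        have h5 := hnest (a+1) (φ c) (by omega) (by omega) u1 u2
        omega
      have hne2 : φ c ≠ φ (a+1) := by
        intro h
        have h6 := congrArg φ h
        rw [hφφc, hφφm] at h6
        omega
      omega
    omega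

private lemma phi_odd (n : ℕ) (φ : ℕ → ℕ) (hφ : IsBracketingInvolution n φ) :
    ∀ l, 1 ≤ l → l ≤ 2*n → (l + φ l) % 2 = 1 := by
  intro l h1 h2
  have hr := hφ.1
  have hinv := hφ.2.1
  have hfix := hφ.2.2.1
  have hnest := hφ.2.2.2
  obtain ⟨g1, g2⟩ := hr l h1 h2
  have hne := hfix l h1 h2
  rcases Nat.lt_or_ge l (φ l) with hlt | hge
  · have := interval_even n φ hφ (φ l - l) l (φ l) le_rfl h1 (by omega) hlt
      (fun c hc1 hc2 => hnest l c h1 (by omega) hc1 hc2)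
    omega
  · have hlt' : φ l < l := by omega
    have hφφ : φ (φ l) = l := hinv l h1 h2
    have := interval_even n φ hφ (l - φ l) (φ l) l le_rfl g1 (by omega) hlt'
      (fun c hc1 hc2 => by
        have h5 := hnest (φ l) c g1 (by omega) hc1 (by omega)
        rw [hφφ] at h5
        exact h5)
    omega

theorem stmt_7 {L : Language} (M : Type*) [L.Structure M] [Nonempty M]
    (n : ℕ) (hn : 1 ≤ n) (φ : ℕ → ℕ) (hφ : IsBracketingInvolution n φ)
    (b : ℕ → L.Term (Fin 3)) (hb : HasBracketTerms L M n φ b) :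
    HasGridTerms L M n 3 := by
  have hodd := phi_odd n φ hφ
  obtain ⟨hr, hinv, hfix, hnest⟩ := hφ
  obtain ⟨hid, hb1, hb2n, hA, hC, hBm⟩ := hb
  refine ⟨fun i => Term.relabel (fun kk => ((![Fin.castSucc i,
      ⟨(φ (2*i.1+2) - 1)/2, by
        have h2 := (hr (2*i.1+2) (by omega) (by have := i.2; omega)).2; omega⟩,
      Fin.succ i] : Fin 3 → Fin (n+1)) kk, kk)) (b (2*i.1+2)),
    fun j => if hj : j.1 < n then
      Term.relabel (fun kk => ((![⟨j.1, hj⟩,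
        ⟨φ (2*j.1+1)/2 - 1, by
          have h2 := (hr (2*j.1+1) (by omega) (by omega)).2; omega⟩,
        ⟨j.1 - 1, by omega⟩] : Fin 3 → Fin n) kk, kk)) (b (2*j.1+1))
    else
      Term.relabel (fun kk => ((![(⟨0, by omega⟩ : Fin n), ⟨0, by omega⟩,
        ⟨n-1, by omega⟩] : Fin 3 → Fin n) kk, kk)) (b (2*n)),
    ?_, ?_, ?_⟩
  · intro i x
    dsimp only
    rw [Term.realize_relabel]
    exact hid (2*i.1+2) (by omega) (by have := i.2; omega) x
  · intro j x
    dsimp only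
    by_cases hj : j.1 < n
    · rw [dif_pos hj, Term.realize_relabel]
      exact hid (2*j.1+1) (by omega) (by omega) x
    · rw [dif_neg hj, Term.realize_relabel]
      exact hid (2*n) (by omega) le_rfl x
  · intro i j k x y
    have hi2 := i.2
    have hj2 := j.2
    dsimp only
    by_cases hjn : j.1 < n
    · rw [dif_pos hjn]
      fin_cases k
      · -- k = 0
        by_cases hij : j.1 = i.1
        · refine (realize_pt_pos _ _ _ _ x y ?_ (if_vec0 x y)).trans
            (Eq.trans ?_ (realize_pt_pos _ _ _ _ x y ?_ (if_vec0 x y)).symm)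
          · exact Fin.ext (show i.1 = j.1 by omega)
          · have h := hA (i.1+1) (by omega) (by omega) x y
            rw [show 2*(i.1+1) - 1 = 2*i.1+1 from by omega,
              show 2*(i.1+1) = 2*i.1+2 from by omega] at h
            rw [show 2*j.1+1 = 2*i.1+1 from by omega]
            exact h
          · exact Fin.ext (show j.1 = i.1 from hij)
        · refine (realize_pt_neg _ _ _ _ x y ?_).trans
            (Eq.trans ?_ (realize_pt_neg _ _ _ _ x y ?_).symm)
          · exact fun h => (show ¬(i.1 = j.1) by omega) (congrArg Fin.val h)
          · rw [hid (2*i.1+2) (by omega) (by omega) x,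
              hid (2*j.1+1) (by omega) (by omega) x]
          · exact fun h => (show ¬(j.1 = i.1) by omega) (congrArg Fin.val h)
      · -- k = 1
        have hPb := hr (2*i.1+2) (by omega) (by omega)
        have hPo := hodd (2*i.1+2) (by omega) (by omega)
        have hPinv := hinv (2*i.1+2) (by omega) (by omega)
        have hQb := hr (2*j.1+1) (by omega) (by omega)
        have hQo := hodd (2*j.1+1) (by omega) (by omega)
        have hQinv := hinv (2*j.1+1) (by omega) (by omega)
        by_cases hm : φ (2*i.1+2) = 2*j.1+1
        · have hQQ : φ (2*j.1+1) = 2*i.1+2 := by rw [← hm]; exact hPinv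
          refine (realize_pt_pos _ _ _ _ x y ?_ (if_vec1 x y)).trans
            (Eq.trans ?_ (realize_pt_pos _ _ _ _ x y ?_ (if_vec1 x y)).symm)
          · exact Fin.ext (show (φ (2*i.1+2) - 1)/2 = j.1 by omega)
          · have h := hBm (2*i.1+2) (by omega) (by omega) x y
            rw [hm] at h
            exact h
          · exact Fin.ext (show φ (2*j.1+1)/2 - 1 = i.1 by omega)
        · refine (realize_pt_neg _ _ _ _ x y ?_).trans
            (Eq.trans ?_ (realize_pt_neg _ _ _ _ x y ?_).symm)
          · exact fun h => (show ¬((φ (2*i.1+2) - 1)/2 = j.1) by omega)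
              (congrArg Fin.val h)
          · rw [hid (2*i.1+2) (by omega) (by omega) x,
              hid (2*j.1+1) (by omega) (by omega) x]
          · intro h
            have hv : φ (2*j.1+1)/2 - 1 = i.1 := congrArg Fin.val h
            have hQ2 : φ (2*j.1+1) = 2*i.1+2 := by omega
            have h6 := congrArg φ hQ2
            rw [hQinv] at h6
            exact hm h6.symm
      · -- k = 2
        by_cases hij2 : j.1 = i.1 + 1
        · refine (realize_pt_pos _ _ _ _ x y ?_ (if_vec2 x y)).trans
            (Eq.trans ?_ (realize_pt_pos _ _ _ _ x y ?_ (if_vec2 x y)).symm)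
          · exact Fin.ext (show i.1 + 1 = j.1 by omega)
          · have h := hC (i.1+1) (by omega) (by omega) x y
            rw [show 2*(i.1+1) + 1 = 2*j.1+1 from by omega,
              show 2*(i.1+1) = 2*i.1+2 from by omega] at h
            exact h
          · exact Fin.ext (show j.1 - 1 = i.1 by omega)
        · by_cases hz : j.1 = 0 ∧ i.1 = 0
          · refine (realize_pt_neg _ _ _ _ x y ?_).trans
              (Eq.trans ?_ (realize_pt_pos _ _ _ _ x y ?_ (if_vec2 x y)).symm)
            · exact fun h => (show ¬(i.1 + 1 = j.1) by omega) (congrArg Fin.val h)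
            · rw [hid (2*i.1+2) (by omega) (by omega) x,
                show 2*j.1+1 = 1 from by omega]
              exact (hb1 x x y).symm
            · exact Fin.ext (show j.1 - 1 = i.1 by omega)
          · refine (realize_pt_neg _ _ _ _ x y ?_).trans
              (Eq.trans ?_ (realize_pt_neg _ _ _ _ x y ?_).symm)
            · exact fun h => (show ¬(i.1 + 1 = j.1) by omega) (congrArg Fin.val h)
            · rw [hid (2*i.1+2) (by omega) (by omega) x,
                hid (2*j.1+1) (by omega) (by omega) x]
            · exact fun h => (show ¬(j.1 - 1 = i.1) by omega) (congrArg Fin.val h)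
    · rw [dif_neg hjn]
      have hjn' : j.1 = n := by omega
      fin_cases k
      · -- k = 0
        by_cases hz : i.1 = 0
        · refine (realize_pt_neg _ _ _ _ x y ?_).trans
            (Eq.trans ?_ (realize_pt_pos _ _ _ _ x y ?_ (if_vec0 x y)).symm)
          · exact fun h => (show ¬(i.1 = j.1) by omega) (congrArg Fin.val h)
          · rw [hid (2*i.1+2) (by omega) (by omega) x]
            exact (hb2n y x x).symm
          · exact Fin.ext (show 0 = i.1 by omega)
        · refine (realize_pt_neg _ _ _ _ x y ?_).trans
            (Eq.trans ?_ (realize_pt_neg _ _ _ _ x y ?_).symm)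
          · exact fun h => (show ¬(i.1 = j.1) by omega) (congrArg Fin.val h)
          · rw [hid (2*i.1+2) (by omega) (by omega) x,
              hid (2*n) (by omega) le_rfl x]
          · exact fun h => (show ¬((0:ℕ) = i.1) by omega) (congrArg Fin.val h)
      · -- k = 1
        have hPb := hr (2*i.1+2) (by omega) (by omega)
        have hPo := hodd (2*i.1+2) (by omega) (by omega)
        by_cases hz : i.1 = 0
        · refine (realize_pt_neg _ _ _ _ x y ?_).trans
            (Eq.trans ?_ (realize_pt_pos _ _ _ _ x y ?_ (if_vec1 x y)).symm)
          · exact fun h => (show ¬((φ (2*i.1+2) - 1)/2 = j.1) by omega)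
              (congrArg Fin.val h)
          · rw [hid (2*i.1+2) (by omega) (by omega) x]
            exact (hb2n x y x).symm
          · exact Fin.ext (show 0 = i.1 by omega)
        · refine (realize_pt_neg _ _ _ _ x y ?_).trans
            (Eq.trans ?_ (realize_pt_neg _ _ _ _ x y ?_).symm)
          · exact fun h => (show ¬((φ (2*i.1+2) - 1)/2 = j.1) by omega)
              (congrArg Fin.val h)
          · rw [hid (2*i.1+2) (by omega) (by omega) x,
              hid (2*n) (by omega) le_rfl x]
          · exact fun h => (show ¬((0:ℕ) = i.1) by omega) (congrArg Fin.val h)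
      · -- k = 2
        by_cases hz : i.1 + 1 = n
        · refine (realize_pt_pos _ _ _ _ x y ?_ (if_vec2 x y)).trans
            (Eq.trans ?_ (realize_pt_pos _ _ _ _ x y ?_ (if_vec2 x y)).symm)
          · exact Fin.ext (show i.1 + 1 = j.1 by omega)
          · rw [show 2*i.1+2 = 2*n from by omega]
          · exact Fin.ext (show n - 1 = i.1 by omega)
        · refine (realize_pt_neg _ _ _ _ x y ?_).trans
            (Eq.trans ?_ (realize_pt_neg _ _ _ _ x y ?_).symm)
          · exact fun h => (show ¬(i.1 + 1 = j.1) by omega) (congrArg Fin.val h)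
          · rw [hid (2*i.1+2) (by omega) (by omega) x,
              hid (2*n) (by omega) le_rfl x]
          · exact fun h => (show ¬(n - 1 = i.1) by omega) (congrArg Fin.val h)
end

section
/- Let K be a field and M a nontrivial K-module (there exists y ∈ M with y ≠ 0). Let m₁, m₂ ≥ 1. Then there do not exist coefficients a : Fin (m₁+m₂) → K, b : Fin m₁ → K, c : Fin m₂ → K such that the linear-combination operations f(x) = Σᵢ aᵢ • xᵢ on M^(m₁+m₂), g₁(x) = Σᵢ bᵢ • xᵢ on M^(m₁), g₂(x) = Σᵢ cᵢ • xᵢ on M^(m₂) are all idempotent and satisfy, for all x, y ∈ M: for each 1 ≤ i ≤ m₁, f applied to the tuple with y in position i and x in all other positions equals g₁ applied to the tuple with y in position i and x elsewhere; and for each 1 ≤ i ≤ m₂, f applied to the tuple with y in position m₁+i and x elsewhere equals g₂ applied to the tuple with y in position i and x elsewhere. -/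
theorem stmt_10 {K : Type*} [Field K] {M : Type*} [AddCommGroup M] [Module K M]
    (hM : ∃ y : M, y ≠ 0) (m₁ m₂ : ℕ) (hm₁ : 1 ≤ m₁) (hm₂ : 1 ≤ m₂) :
    ¬ ∃ (a : Fin (m₁ + m₂) → K) (b : Fin m₁ → K) (c : Fin m₂ → K),
      -- idempotence of f, g₁, g₂
      (∀ x : M, ∑ p : Fin (m₁ + m₂), a p • x = x) ∧
      (∀ x : M, ∑ p : Fin m₁, b p • x = x) ∧
      (∀ x : M, ∑ p : Fin m₂, c p • x = x) ∧
      -- f with y at position i (i ≤ m₁) and x elsewhere equals g₁ with y at position i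
      (∀ (i : Fin m₁) (x y : M),
        (∑ p : Fin (m₁ + m₂), a p • (if p = Fin.castAdd m₂ i then y else x)) =
        (∑ p : Fin m₁, b p • (if p = i then y else x))) ∧
      -- f with y at position m₁+i and x elsewhere equals g₂ with y at position i
      (∀ (i : Fin m₂) (x y : M),
        (∑ p : Fin (m₁ + m₂), a p • (if p = Fin.natAdd m₁ i then y else x)) =
        (∑ p : Fin m₂, c p • (if p = i then y else x))) := by
  rintro ⟨a, b, c, hf, hg1, hg2, h1, h2⟩
  obtain ⟨y, hy⟩ := hM
  have key : ∀ {n : ℕ} (d : Fin n → K) (j : Fin n),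
      (∑ p : Fin n, d p • (if p = j then y else (0 : M))) = d j • y := by
    intro n d j
    rw [Finset.sum_eq_single j]
    · simp
    · intro p _ hp; simp [hp]
    · simp
  have scal : ∀ r s : K, r • y = s • y → r = s := by
    intro r s h
    have h0 : (r - s) • y = 0 := by rw [sub_smul, h, sub_self]
    rcases smul_eq_zero.mp h0 with h' | h'
    · exact sub_eq_zero.mp h'
    · exact absurd h' hy
  have hab : ∀ i : Fin m₁, a (Fin.castAdd m₂ i) = b i := by
    intro i
    have := h1 i 0 y
    rw [key, key] at this
    exact scal _ _ this
  have hac : ∀ i : Fin m₂, a (Fin.natAdd m₁ i) = c i := by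
    intro i
    have := h2 i 0 y
    rw [key, key] at this
    exact scal _ _ this
  have suma : (∑ p : Fin (m₁ + m₂), a p) = 1 := by
    have := hf y
    rw [← Finset.sum_smul] at this
    exact scal _ _ (by rw [this, one_smul])
  have sumb : (∑ p : Fin m₁, b p) = 1 := by
    have := hg1 y
    rw [← Finset.sum_smul] at this
    exact scal _ _ (by rw [this, one_smul])
  have sumc : (∑ p : Fin m₂, c p) = 1 := by
    have := hg2 y
    rw [← Finset.sum_smul] at this
    exact scal _ _ (by rw [this, one_smul])
  rw [Fin.sum_univ_add] at suma
  simp only [hab, hac] at suma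
  rw [sumb, sumc] at suma
  exact one_ne_zero (by linear_combination suma : (1 : K) = 0)
end

section
/- Let x₁,…,xₙ and y₁,…,yₙ be rational numbers with xᵢ ≤ yᵢ for all i. Let x'₁ ≤ … ≤ x'ₙ be the increasing rearrangement of x₁,…,xₙ and y'₁ ≤ … ≤ y'ₙ the increasing rearrangement of y₁,…,yₙ. Then x'ᵢ ≤ y'ᵢ for all i, and the number of indices i with x'ᵢ < y'ᵢ is at least the number of indices i with xᵢ < yᵢ. -/
open Finset

private lemma card_filter_perm {n : ℕ} (σ : Equiv.Perm (Fin n)) (P : Fin n → Prop)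
    [DecidablePred P] :
    (univ.filter (fun i => P (σ i))).card = (univ.filter P).card := by
  rw [← Fintype.card_subtype, ← Fintype.card_subtype]
  exact Fintype.card_congr (σ.subtypeEquiv fun _ => Iff.rfl)

private lemma sorted_le_sorted {n : ℕ} (x y : Fin n → ℚ) (h : ∀ i, x i ≤ y i) (i : Fin n) :
    x (Tuple.sort x i) ≤ y (Tuple.sort y i) := by
  set a := y (Tuple.sort y i) with ha
  have hx : Monotone (x ∘ Tuple.sort x) := Tuple.monotone_sort x
  have hy : Monotone (y ∘ Tuple.sort y) := Tuple.monotone_sort y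
  have h1 : (i : Fin n) < Fintype.card {j // (y ∘ Tuple.sort y) j ≤ a} :=
    by rw [Fintype.card_subtype]; exact (Tuple.lt_card_le_iff_apply_le_of_monotone (a := a) (j := i) hy).2 le_rfl
  have h2 : Fintype.card {j // (y ∘ Tuple.sort y) j ≤ a} = Fintype.card {j // y j ≤ a} :=
    Fintype.card_congr ((Tuple.sort y).subtypeEquiv fun _ => Iff.rfl)
  have h3 : Fintype.card {j // y j ≤ a} ≤ Fintype.card {j // x j ≤ a} :=
    Fintype.card_subtype_mono _ _ fun j hj => (h j).trans hj
  have h4 : Fintype.card {j // x j ≤ a} = Fintype.card {j // (x ∘ Tuple.sort x) j ≤ a} :=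
    (Fintype.card_congr ((Tuple.sort x).subtypeEquiv fun _ => Iff.rfl)).symm
  have : (i : Fin n) < Fintype.card {j // (x ∘ Tuple.sort x) j ≤ a} := by omega
  rw [Fintype.card_subtype] at this
  exact (Tuple.lt_card_le_iff_apply_le_of_monotone (a := a) (j := i) hx).1 this

private lemma eq_count_le {n : ℕ} (x y : Fin n → ℚ) (h : ∀ i, x i ≤ y i) :
    (univ.filter (fun i : Fin n =>
        x (Tuple.sort x i) = y (Tuple.sort y i))).card ≤
      (univ.filter (fun i : Fin n => x i = y i)).card := by
  set σ := Tuple.sort x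
  set τ := Tuple.sort y
  set x' : Fin n → ℚ := fun i => x (σ i) with hx'
  set y' : Fin n → ℚ := fun i => y (τ i) with hy'
  have hmx : Monotone x' := Tuple.monotone_sort x
  have hmy : Monotone y' := Tuple.monotone_sort y
  -- image of x' equals image of x
  have himg : (univ.image x') = univ.image x := by
    have : univ.image x' = (univ.image (fun i => σ i)).image x := by
      rw [Finset.image_image]; rfl
    rw [this, Finset.image_univ_equiv]
  have fib1 : (univ.filter (fun i : Fin n => x' i = y' i)).card =
      ∑ t ∈ univ.image x,
        ((univ.filter (fun i : Fin n => x' i = y' i)).filter (fun i => x' i = t)).card := by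
    apply Finset.card_eq_sum_card_fiberwise
    intro i _
    rw [← himg]
    exact Finset.mem_image_of_mem x' (Finset.mem_univ i)
  have fib2 : (univ.filter (fun i : Fin n => x i = y i)).card =
      ∑ t ∈ univ.image x,
        ((univ.filter (fun i : Fin n => x i = y i)).filter (fun i => x i = t)).card := by
    apply Finset.card_eq_sum_card_fiberwise
    intro i _
    exact Finset.mem_image_of_mem x (Finset.mem_univ i)
  rw [fib1, fib2]
  apply Finset.sum_le_sum
  intro t _
  -- per value comparison
  set p := (univ.filter (fun i : Fin n => x' i < t)).card with hp
  set q := (univ.filter (fun i : Fin n => y' i ≤ t)).card with hq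
  have step1 : ((univ.filter (fun i : Fin n => x' i = y' i)).filter (fun i => x' i = t)).card
      ≤ q - p := by
    rw [← Nat.card_Ico p q]
    apply Finset.card_le_card_of_injOn (f := fun i : Fin n => (i : ℕ))
    · intro i hi
      simp only [Finset.mem_coe, Finset.mem_filter, Finset.mem_univ, true_and] at hi
      obtain ⟨hxy, hxt⟩ := hi
      have hyt : y' i = t := hxy ▸ hxt
      rw [Finset.mem_coe, Finset.mem_Ico]
      constructor
      · -- p ≤ i
        have hsub : (univ.filter (fun j : Fin n => x' j < t)) ⊆ Finset.Iio i := by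
          intro j hj
          simp only [Finset.mem_filter, Finset.mem_univ, true_and] at hj
          rw [Finset.mem_Iio]
          by_contra hc
          exact absurd (hxt ▸ hmx (le_of_not_gt hc)) (not_le.2 hj)
        calc p ≤ (Finset.Iio i).card := Finset.card_le_card hsub
          _ = (i : ℕ) := Fin.card_Iio i
      · -- i < q
        have hsub : Finset.Iic i ⊆ univ.filter (fun j : Fin n => y' j ≤ t) := by
          intro j hj
          rw [Finset.mem_Iic] at hj
          simp only [Finset.mem_filter, Finset.mem_univ, true_and]
          exact hyt ▸ hmy hj
        calc (i : ℕ) < (i : ℕ) + 1 := Nat.lt_succ_self _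
          _ = (Finset.Iic i).card := (Fin.card_Iic i).symm
          _ ≤ q := Finset.card_le_card hsub
    · intro i _ j _ hij
      exact Fin.val_injective hij
  have step2 : q - p ≤
      ((univ.filter (fun i : Fin n => x i = y i)).filter (fun i => x i = t)).card := by
    have hqe : q = (univ.filter (fun i : Fin n => y i ≤ t)).card :=
      card_filter_perm τ (fun i => y i ≤ t)
    have hpe : p = (univ.filter (fun i : Fin n => x i < t)).card :=
      card_filter_perm σ (fun i => x i < t)
    have hsub : (univ.filter (fun i : Fin n => y i ≤ t)) ⊆
        ((univ.filter (fun i : Fin n => x i = y i)).filter (fun i => x i = t)) ∪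
          (univ.filter (fun i : Fin n => x i < t)) := by
      intro i hi
      simp only [Finset.mem_filter, Finset.mem_univ, true_and] at hi
      rcases lt_or_ge (x i) t with hlt | hge
      · exact Finset.mem_union_right _ (by simp [hlt])
      · have hxt : x i = t := le_antisymm ((h i).trans hi) hge
        have hyt : y i = t := le_antisymm hi (hxt ▸ h i)
        exact Finset.mem_union_left _ (by simp [Finset.mem_filter, hxt, hyt])
    have := (Finset.card_le_card hsub).trans (Finset.card_union_le _ _)
    omega
  exact step1.trans step2

theorem stmt_12 (n : ℕ) (x y : Fin n → ℚ) (h : ∀ i, x i ≤ y i) :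
    (∀ i : Fin n, x (Tuple.sort x i) ≤ y (Tuple.sort y i)) ∧
    (Finset.univ.filter (fun i : Fin n => x i < y i)).card ≤
      (Finset.univ.filter
        (fun i : Fin n => x (Tuple.sort x i) < y (Tuple.sort y i))).card := by
  have h1 : ∀ i : Fin n, x (Tuple.sort x i) ≤ y (Tuple.sort y i) := sorted_le_sorted x y h
  refine ⟨h1, ?_⟩
  have key : ∀ (u v : Fin n → ℚ), (∀ i, u i ≤ v i) →
      (univ.filter (fun i : Fin n => u i < v i)).card =
        n - (univ.filter (fun i : Fin n => u i = v i)).card := by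
    intro u v huv
    have : (univ.filter (fun i : Fin n => u i < v i)) =
        univ \ (univ.filter (fun i : Fin n => u i = v i)) := by
      ext i
      simp only [Finset.mem_filter, Finset.mem_univ, true_and, Finset.mem_sdiff]
      constructor
      · exact fun hlt => ne_of_lt hlt
      · exact fun hne => lt_of_le_of_ne (huv i) hne
    rw [this, Finset.card_sdiff_of_subset (Finset.filter_subset _ _), Finset.card_univ, Fintype.card_fin]
  rw [key x y h, key _ _ h1]
  exact Nat.sub_le_sub_left (eq_count_le x y h) n
end

section
/- Let n ≥ 5 and m ≥ 1 with 2m < n. Let b⁽¹⁾,…,b⁽ⁿ⁾ ∈ ℚᵐ be vectors each belonging to V_m. Then the vector whose k-th coordinate is tᴮₙ(b⁽¹⁾ₖ,…,b⁽ⁿ⁾ₖ) also belongs to V_m; that is, V_m is closed under the coordinatewise application of tᴮₙ. -/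
/-- The trimmed mean `tᴬₙ(x) = (x₍₂₎ + ⋯ + x₍ₙ₋₁₎)/(n−2)`, where
`x₍₁₎ ≤ … ≤ x₍ₙ₎` is the increasing rearrangement of `x` (here indexed from `0`,
so it sums the sorted entries with 0-based indices `1,…,n-2`). -/
noncomputable def tA (n : ℕ) (x : Fin n → ℚ) : ℚ :=
  (∑ i ∈ Finset.univ.filter (fun i : Fin n => 1 ≤ (i : ℕ) ∧ (i : ℕ) ≤ n - 2),
      x (Tuple.sort x i)) / ((n : ℚ) - 2)

/-- The trimmed mean `tᴮₙ(x) = (x₍₃₎ + ⋯ + x₍ₙ₋₂₎)/(n−4)`, where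
`x₍₁₎ ≤ … ≤ x₍ₙ₎` is the increasing rearrangement of `x` (here indexed from `0`,
so it sums the sorted entries with 0-based indices `2,…,n-3`). -/
noncomputable def tB (n : ℕ) (x : Fin n → ℚ) : ℚ :=
  (∑ i ∈ Finset.univ.filter (fun i : Fin n => 2 ≤ (i : ℕ) ∧ (i : ℕ) ≤ n - 3),
      x (Tuple.sort x i)) / ((n : ℚ) - 4)

/-- Membership in `V_m`: all coordinates are nonnegative and at least one is nonzero. -/
def Vmem (m : ℕ) (b : Fin m → ℚ) : Prop :=
  (∀ k, 0 ≤ b k) ∧ ∃ k, b k ≠ 0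

/-- Membership in `W_m`: either `a₁ + a₂ < 1` and all `bₖ ≥ 0`, or `a₁ + a₂ = 1` and
all `bₖ = 0`. -/
def Wmem (m : ℕ) (a₁ a₂ : ℚ) (b : Fin m → ℚ) : Prop :=
  (a₁ + a₂ < 1 ∧ ∀ k, 0 ≤ b k) ∨ (a₁ + a₂ = 1 ∧ ∀ k, b k = 0)

lemma tB_nonneg (n : ℕ) (hn : 5 ≤ n) (x : Fin n → ℚ) (hx : ∀ j, 0 ≤ x j) :
    0 ≤ tB n x := by
  apply div_nonneg
  · exact Finset.sum_nonneg fun i _ => hx _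
  · have : (5:ℚ) ≤ n := by exact_mod_cast hn
    linarith

lemma tB_pos (n : ℕ) (hn : 5 ≤ n) (x : Fin n → ℚ) (hx : ∀ j, 0 ≤ x j)
    (h3 : 3 ≤ (Finset.univ.filter fun j => x j ≠ 0).card) : 0 < tB n x := by
  have hden : (0:ℚ) < (n:ℚ) - 4 := by
    have : (5:ℚ) ≤ n := by exact_mod_cast hn
    linarith
  apply div_pos _ hden
  -- the index n-3 as an element of Fin n
  have hlt : n - 3 < n := by omega
  set i₀ : Fin n := ⟨n - 3, hlt⟩ with hi₀
  -- find some i in the fiber image with i ≤ i₀ and x (sort x i) ≠ 0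
  set T : Finset (Fin n) :=
    (Finset.univ.filter fun j => x j ≠ 0).map (Tuple.sort x).symm.toEmbedding with hT
  have hTcard : 3 ≤ T.card := by rwa [hT, Finset.card_map]
  have hex : ∃ i ∈ T, (i : ℕ) ≤ n - 3 := by
    by_contra hcon
    push_neg at hcon
    have hsub : T ⊆ {(⟨n-2, by omega⟩ : Fin n), ⟨n-1, by omega⟩} := by
      intro i hi
      have h1 := hcon i hi
      have h2 := i.isLt
      simp only [Finset.mem_insert, Finset.mem_singleton]
      rcases Nat.lt_or_ge (i : ℕ) (n-1) with h | h
      · left; exact Fin.ext (show (i:ℕ) = n - 2 by omega)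
      · right; exact Fin.ext (show (i:ℕ) = n - 1 by omega)
    have := Finset.card_le_card hsub
    have hc2 : ({(⟨n-2, by omega⟩ : Fin n), ⟨n-1, by omega⟩} : Finset (Fin n)).card ≤ 2 :=
      Finset.card_insert_le _ _ |>.trans (by simp)
    omega
  obtain ⟨i, hiT, hile⟩ := hex
  have hxi : x (Tuple.sort x i) ≠ 0 := by
    rw [hT] at hiT
    simp only [Finset.mem_map, Finset.mem_filter, Finset.mem_univ, true_and,
      Equiv.coe_toEmbedding] at hiT
    obtain ⟨j, hj, hji⟩ := hiT
    have : Tuple.sort x i = j := by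
      rw [← hji]; simp
    rwa [this]
  have hxi' : 0 < x (Tuple.sort x i) := lt_of_le_of_ne (hx _) (Ne.symm hxi)
  have hmono := Tuple.monotone_sort x
  have hval : 0 < x (Tuple.sort x i₀) := by
    have : x (Tuple.sort x i) ≤ x (Tuple.sort x i₀) := by
      exact hmono (show i ≤ i₀ from hile)
    linarith
  apply Finset.sum_pos'
  · intro j _; exact hx _
  · refine ⟨i₀, ?_, hval⟩
    simp only [Finset.mem_filter, Finset.mem_univ, true_and, hi₀]
    omega

theorem stmt_15 (n m : ℕ) (hn : 5 ≤ n) (hm : 1 ≤ m) (h2m : 2 * m < n)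
    (b : Fin n → Fin m → ℚ) (hb : ∀ j, Vmem m (b j)) :
    Vmem m (fun k => tB n (fun j => b j k)) := by
  constructor
  · intro k
    exact tB_nonneg n hn _ (fun j => (hb j).1 k)
  · -- choose for each j a coordinate where b j is nonzero
    choose f hf using fun j => (hb j).2
    have hcard : Fintype.card (Fin m) * 2 < Fintype.card (Fin n) := by
      simp [Fintype.card_fin]; omega
    obtain ⟨k, hk⟩ := Fintype.exists_lt_card_fiber_of_mul_lt_card f hcard
    refine ⟨k, ?_⟩
    have hsub : (Finset.univ.filter fun x => f x = k) ⊆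
        (Finset.univ.filter fun j => b j k ≠ 0) := by
      intro j hj
      simp only [Finset.mem_filter, Finset.mem_univ, true_and] at hj ⊢
      rw [← hj]; exact hf j
    have h3 : 3 ≤ (Finset.univ.filter fun j => b j k ≠ 0).card :=
      le_trans hk (Finset.card_le_card hsub)
    have := tB_pos n hn (fun j => b j k) (fun j => (hb j).1 k) h3
    exact ne_of_gt this
end

section
/- Let n ≥ 5 and m ≥ 1. Let x⁽¹⁾,…,x⁽ⁿ⁾ ∈ ℚ^(2+m) be tuples each belonging to W_m, writing x⁽ʲ⁾ = (a₁ⱼ, a₂ⱼ, b₁ⱼ,…,b_mⱼ). Then the tuple (tᴬₙ(a₁₁,…,a₁ₙ), tᴬₙ(a₂₁,…,a₂ₙ), tᴮₙ(b₁₁,…,b₁ₙ), …, tᴮₙ(b_m1,…,b_mn)) also belongs to W_m. -/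
section helpers

variable {n : ℕ}

private lemma sorted_mono (x : Fin n → ℚ) : Monotone (fun i => x (Tuple.sort x i)) :=
  Tuple.monotone_sort x

private lemma card_image_Ici (x : Fin n → ℚ) (k : Fin n) :
    ((Finset.Ici k).image (Tuple.sort x)).card = n - k := by
  rw [Finset.card_image_of_injective _ (Tuple.sort x).injective, Fin.card_Ici]

private lemma mem_image_Ici {x : Fin n → ℚ} {k j : Fin n}
    (hj : j ∈ (Finset.Ici k).image (Tuple.sort x)) :
    x (Tuple.sort x k) ≤ x j := by
  obtain ⟨i, hi, rfl⟩ := Finset.mem_image.1 hj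
  exact sorted_mono x (Finset.mem_Ici.1 hi)

private lemma orderstat {x y : Fin n → ℚ} (hxy : ∀ j, x j + y j ≤ 1)
    (k l : Fin n) (hkl : (k : ℕ) + (l : ℕ) ≤ n - 1) :
    x (Tuple.sort x k) + y (Tuple.sort y l) ≤ 1 := by
  have hAc := card_image_Ici x k
  have hBc := card_image_Ici y l
  have hnon : (((Finset.Ici k).image (Tuple.sort x)) ∩ ((Finset.Ici l).image (Tuple.sort y))).Nonempty := by
    rw [← Finset.card_pos]
    have h1 : (((Finset.Ici k).image (Tuple.sort x)) ∪ ((Finset.Ici l).image (Tuple.sort y))).card ≤ n :=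
      le_trans (Finset.card_le_univ _) (by simp)
    have h2 := Finset.card_union_add_card_inter ((Finset.Ici k).image (Tuple.sort x))
      ((Finset.Ici l).image (Tuple.sort y))
    have hk := k.isLt
    have hl := l.isLt
    omega
  obtain ⟨j, hj⟩ := hnon
  rw [Finset.mem_inter] at hj
  calc x (Tuple.sort x k) + y (Tuple.sort y l)
      ≤ x j + y j := add_le_add (mem_image_Ici hj.1) (mem_image_Ici hj.2)
    _ ≤ 1 := hxy j

private lemma sorted_zero_of_many_zeros (hn : 5 ≤ n) (c : Fin n → ℚ) (hc : ∀ j, 0 ≤ c j)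
    (hZ : n - 2 ≤ (Finset.univ.filter (fun j => c j = 0)).card)
    (i : Fin n) (hi : (i : ℕ) ≤ n - 3) : c (Tuple.sort c i) = 0 := by
  refine le_antisymm ?_ (hc _)
  have hPc : ((Finset.univ.filter (fun j => c j = 0)).image (Tuple.sort c).symm).card
      = (Finset.univ.filter (fun j => c j = 0)).card :=
    Finset.card_image_of_injective _ (Tuple.sort c).symm.injective
  have hnon : (((Finset.univ.filter (fun j => c j = 0)).image (Tuple.sort c).symm)
      ∩ Finset.Ici i).Nonempty := by
    rw [← Finset.card_pos]
    have h1 : (((Finset.univ.filter (fun j => c j = 0)).image (Tuple.sort c).symm)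
        ∪ Finset.Ici i).card ≤ n := le_trans (Finset.card_le_univ _) (by simp)
    have h2 := Finset.card_union_add_card_inter
      ((Finset.univ.filter (fun j => c j = 0)).image (Tuple.sort c).symm) (Finset.Ici i)
    have h3 : (Finset.Ici i).card = n - i := by rw [Fin.card_Ici]
    have hi2 := i.isLt
    omega
  obtain ⟨p, hp⟩ := hnon
  rw [Finset.mem_inter] at hp
  obtain ⟨z, hz, hzp⟩ := Finset.mem_image.1 hp.1
  have hz0 : c z = 0 := (Finset.mem_filter.1 hz).2
  have hle : c (Tuple.sort c i) ≤ c (Tuple.sort c p) := sorted_mono c (Finset.mem_Ici.1 hp.2)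
  rw [← hzp, Equiv.apply_symm_apply] at hle
  exact hle.trans_eq hz0

private lemma card_lt_sorted_one (hn : 5 ≤ n) (x : Fin n → ℚ) :
    (Finset.univ.filter (fun j => x j < x (Tuple.sort x ⟨1, by omega⟩))).card ≤ 1 := by
  rw [Finset.card_le_one]
  have key : ∀ j, x j < x (Tuple.sort x (⟨1, by omega⟩ : Fin n)) →
      (Tuple.sort x).symm j = ⟨0, by omega⟩ := by
    intro j hj
    by_contra hc
    have h1 : (1:ℕ) ≤ ((Tuple.sort x).symm j : ℕ) := by
      rcases Nat.eq_zero_or_pos ((Tuple.sort x).symm j : ℕ) with hh | hh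
      · exact absurd (Fin.ext hh) hc
      · exact hh
    have h2 : x (Tuple.sort x ⟨1, by omega⟩) ≤ x (Tuple.sort x ((Tuple.sort x).symm j)) :=
      sorted_mono x (by rw [Fin.le_def]; exact h1)
    rw [Equiv.apply_symm_apply] at h2
    linarith
  intro a ha b hb
  simp only [Finset.mem_filter] at ha hb
  have h3 : (Tuple.sort x).symm a = (Tuple.sort x).symm b := by
    rw [key a ha.2, key b hb.2]
  exact (Tuple.sort x).symm.injective h3

private lemma key_lemma (hn : 5 ≤ n) {x y : Fin n → ℚ} (hxy : ∀ j, x j + y j ≤ 1)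
    (heq : ∀ k : Fin n, 1 ≤ (k:ℕ) → (k:ℕ) ≤ n - 2 →
      x (Tuple.sort x k) + y (Tuple.sort y k.rev) = 1)
    (j₀ : Fin n) (hj₀ : x j₀ + y j₀ < 1) :
    x j₀ < x (Tuple.sort x ⟨1, by omega⟩) ∨ y j₀ < y (Tuple.sort y ⟨1, by omega⟩) := by
  by_contra hcon
  push_neg at hcon
  obtain ⟨hx1, hy1⟩ := hcon
  have hSne : (Finset.univ.filter
      (fun k : Fin n => 1 ≤ (k:ℕ) ∧ (k:ℕ) ≤ n - 2 ∧ x (Tuple.sort x k) ≤ x j₀)).Nonempty := by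
    refine ⟨⟨1, by omega⟩, Finset.mem_filter.2 ⟨Finset.mem_univ _, by norm_num, ?_, hx1⟩⟩
    show (1:ℕ) ≤ n - 2
    omega
  obtain ⟨-, hk1, hk2, hk3⟩ := Finset.mem_filter.1 (Finset.max'_mem _ hSne)
  set k' := (Finset.univ.filter
      (fun k : Fin n => 1 ≤ (k:ℕ) ∧ (k:ℕ) ≤ n - 2 ∧ x (Tuple.sort x k) ≤ x j₀)).max' hSne with hk'def
  have hklt := k'.isLt
  have hrev : (k'.rev : ℕ) = n - 1 - (k' : ℕ) := by rw [Fin.val_rev]; omega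
  have heqk := heq k' hk1 hk2
  have hyj : y j₀ < y (Tuple.sort y k'.rev) := by linarith
  have hrev2 : 2 ≤ (k'.rev : ℕ) := by
    by_contra hc2
    push_neg at hc2
    have h4 : y (Tuple.sort y k'.rev) ≤ y (Tuple.sort y ⟨1, by omega⟩) :=
      sorted_mono y (show ((k'.rev : ℕ) : ℕ) ≤ (1 : ℕ) by omega)
    linarith
  have hk2' : (k' : ℕ) ≤ n - 3 := by omega
  have hgk'' : x j₀ < x (Tuple.sort x ⟨(k' : ℕ) + 1, by omega⟩) := by
    by_contra hc3
    push_neg at hc3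
    have hmem : (⟨(k' : ℕ) + 1, by omega⟩ : Fin n) ∈ Finset.univ.filter
        (fun k : Fin n => 1 ≤ (k:ℕ) ∧ (k:ℕ) ≤ n - 2 ∧ x (Tuple.sort x k) ≤ x j₀) := by
      refine Finset.mem_filter.2 ⟨Finset.mem_univ _, ?_, ?_, hc3⟩
      · show (1:ℕ) ≤ (k' : ℕ) + 1; omega
      · show (k' : ℕ) + 1 ≤ n - 2; omega
    have hle := Finset.le_max' _ _ hmem
    have h5 : (k' : ℕ) + 1 ≤ (k' : ℕ) := hle
    omega
  have hAc : ((Finset.Ici (⟨(k' : ℕ) + 1, by omega⟩ : Fin n)).image (Tuple.sort x)).card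
      = n - ((k' : ℕ) + 1) := card_image_Ici x _
  have hBc : ((Finset.Ici k'.rev).image (Tuple.sort y)).card = n - (k'.rev : ℕ) :=
    card_image_Ici y _
  have hdisj : Disjoint ((Finset.Ici (⟨(k' : ℕ) + 1, by omega⟩ : Fin n)).image (Tuple.sort x))
      ((Finset.Ici k'.rev).image (Tuple.sort y)) := by
    rw [Finset.disjoint_left]
    intro j hjA hjB
    have h1 := mem_image_Ici hjA
    have h2 := mem_image_Ici hjB
    have h3 := hxy j
    linarith
  have hj₀A : j₀ ∉ (Finset.Ici (⟨(k' : ℕ) + 1, by omega⟩ : Fin n)).image (Tuple.sort x) :=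
    fun hc => absurd (mem_image_Ici hc) (not_le.2 hgk'')
  have hj₀B : j₀ ∉ (Finset.Ici k'.rev).image (Tuple.sort y) :=
    fun hc => absurd (mem_image_Ici hc) (not_le.2 hyj)
  have hcard : (insert j₀ (((Finset.Ici (⟨(k' : ℕ) + 1, by omega⟩ : Fin n)).image (Tuple.sort x))
      ∪ ((Finset.Ici k'.rev).image (Tuple.sort y)))).card ≤ n :=
    le_trans (Finset.card_le_univ _) (by simp)
  rw [Finset.card_insert_of_notMem (by simp [hj₀A, hj₀B]),
    Finset.card_union_of_disjoint hdisj, hAc, hBc] at hcard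
  omega

end helpers

theorem stmt_16 (n m : ℕ) (hn : 5 ≤ n) (hm : 1 ≤ m)
    (a₁ a₂ : Fin n → ℚ) (b : Fin n → Fin m → ℚ)
    (h : ∀ j, Wmem m (a₁ j) (a₂ j) (fun k => b j k)) :
    Wmem m (tA n a₁) (tA n a₂) (fun k => tB n (fun j => b j k)) := by
  have hxy : ∀ j, a₁ j + a₂ j ≤ 1 := fun j => by
    rcases h j with ⟨h1, _⟩ | ⟨h1, _⟩
    exacts [le_of_lt h1, le_of_eq h1]
  have hb : ∀ j k, 0 ≤ b j k := fun j k => by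
    rcases h j with ⟨_, h2⟩ | ⟨_, h2⟩
    exacts [h2 k, le_of_eq (h2 k).symm]
  have hb0 : ∀ j, a₁ j + a₂ j = 1 → ∀ k, b j k = 0 := fun j hj k => by
    rcases h j with ⟨h1, _⟩ | ⟨_, h2⟩
    exacts [absurd hj (ne_of_lt h1), h2 k]
  set I := Finset.univ.filter (fun i : Fin n => 1 ≤ (i : ℕ) ∧ (i : ℕ) ≤ n - 2) with hI
  have hIcard : I.card = n - 2 := by
    have hIeq : I = Finset.Icc (⟨1, by omega⟩ : Fin n) ⟨n - 2, by omega⟩ := by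
      ext i
      simp [hI, Finset.mem_Icc, Fin.le_def]
    rw [hIeq, Fin.card_Icc]
    simp
  -- reindexing by rev
  have hrevI : I.image Fin.rev = I := by
    ext i
    simp only [Finset.mem_image, hI, Finset.mem_filter, Finset.mem_univ, true_and]
    constructor
    · rintro ⟨a, ha, rfl⟩
      rw [Fin.val_rev]
      have := a.isLt
      omega
    · intro hi
      refine ⟨i.rev, ?_, Fin.rev_rev i⟩
      rw [Fin.val_rev]
      have := i.isLt
      omega
  have hrevsum : ∀ y : Fin n → ℚ,
      ∑ i ∈ I, y (Tuple.sort y i) = ∑ i ∈ I, y (Tuple.sort y i.rev) := by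
    intro y
    conv_lhs => rw [← hrevI]
    rw [Finset.sum_image (fun a _ c _ hac => Fin.rev_injective hac)]
  have hterm : ∀ i ∈ I, a₁ (Tuple.sort a₁ i) + a₂ (Tuple.sort a₂ i.rev) ≤ 1 := by
    intro i hi
    rw [hI, Finset.mem_filter] at hi
    refine orderstat hxy i i.rev ?_
    rw [Fin.val_rev]
    have := i.isLt
    omega
  have hsum : (∑ i ∈ I, a₁ (Tuple.sort a₁ i)) + (∑ i ∈ I, a₂ (Tuple.sort a₂ i)) ≤ (n : ℚ) - 2 := by
    rw [hrevsum a₂, ← Finset.sum_add_distrib]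
    calc ∑ i ∈ I, (a₁ (Tuple.sort a₁ i) + a₂ (Tuple.sort a₂ i.rev))
        ≤ ∑ _i ∈ I, (1 : ℚ) := Finset.sum_le_sum hterm
      _ = (I.card : ℚ) := by simp
      _ = (n : ℚ) - 2 := by rw [hIcard]; push_cast [Nat.cast_sub (by omega : 2 ≤ n)]; ring
  have hden : (0 : ℚ) < (n : ℚ) - 2 := by
    have : (5 : ℚ) ≤ (n : ℚ) := by exact_mod_cast hn
    linarith
  have hden4 : (0 : ℚ) < (n : ℚ) - 4 := by
    have : (5 : ℚ) ≤ (n : ℚ) := by exact_mod_cast hn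
    linarith
  have htA : tA n a₁ + tA n a₂
      = ((∑ i ∈ I, a₁ (Tuple.sort a₁ i)) + (∑ i ∈ I, a₂ (Tuple.sort a₂ i))) / ((n : ℚ) - 2) := by
    rw [tA, tA, ← add_div]
  rcases lt_or_eq_of_le hsum with hlt | heqs
  · -- strict case
    left
    constructor
    · rw [htA, div_lt_one hden]
      exact hlt
    · intro k
      show 0 ≤ tB n (fun j => b j k)
      rw [tB]
      apply div_nonneg _ (le_of_lt hden4)
      exact Finset.sum_nonneg fun i _ => hb _ _
  · -- equality case
    right
    have heach : ∀ i ∈ I, a₁ (Tuple.sort a₁ i) + a₂ (Tuple.sort a₂ i.rev) = 1 := by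
      by_contra hc
      push_neg at hc
      obtain ⟨i, hiI, hne⟩ := hc
      have hlt2 : ∑ i ∈ I, (a₁ (Tuple.sort a₁ i) + a₂ (Tuple.sort a₂ i.rev))
          < ∑ _i ∈ I, (1 : ℚ) :=
        Finset.sum_lt_sum hterm ⟨i, hiI, lt_of_le_of_ne (hterm i hiI) hne⟩
      rw [Finset.sum_add_distrib, ← hrevsum a₂] at hlt2
      have hcardq : (∑ _i ∈ I, (1 : ℚ)) = (n : ℚ) - 2 := by
        simp only [Finset.sum_const, nsmul_eq_mul, mul_one]
        rw [hIcard]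
        push_cast [Nat.cast_sub (by omega : 2 ≤ n)]
        ring
      rw [hcardq] at hlt2
      linarith
    have heq' : ∀ k : Fin n, 1 ≤ (k : ℕ) → (k : ℕ) ≤ n - 2 →
        a₁ (Tuple.sort a₁ k) + a₂ (Tuple.sort a₂ k.rev) = 1 := fun k h1 h2 =>
      heach k (by rw [hI, Finset.mem_filter]; exact ⟨Finset.mem_univ _, h1, h2⟩)
    -- the set of strict indices has card ≤ 2
    have hFsub : Finset.univ.filter (fun j => a₁ j + a₂ j < 1) ⊆
        (Finset.univ.filter (fun j => a₁ j < a₁ (Tuple.sort a₁ ⟨1, by omega⟩))) ∪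
        (Finset.univ.filter (fun j => a₂ j < a₂ (Tuple.sort a₂ ⟨1, by omega⟩))) := by
      intro j hj
      rcases key_lemma hn hxy heq' j (Finset.mem_filter.1 hj).2 with hc | hc
      · exact Finset.mem_union_left _ (Finset.mem_filter.2 ⟨Finset.mem_univ _, hc⟩)
      · exact Finset.mem_union_right _ (Finset.mem_filter.2 ⟨Finset.mem_univ _, hc⟩)
    have hFcard : (Finset.univ.filter (fun j => a₁ j + a₂ j < 1)).card ≤ 2 := by
      have h1 := card_lt_sorted_one hn a₁
      have h2 := card_lt_sorted_one hn a₂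
      have h3 := Finset.card_le_card hFsub
      have h4 := Finset.card_union_le
        (Finset.univ.filter (fun j => a₁ j < a₁ (Tuple.sort a₁ ⟨1, by omega⟩)))
        (Finset.univ.filter (fun j => a₂ j < a₂ (Tuple.sort a₂ ⟨1, by omega⟩)))
      omega
    have hZ : ∀ k, n - 2 ≤ (Finset.univ.filter (fun j => b j k = 0)).card := by
      intro k
      have hsub : Finset.univ \ (Finset.univ.filter (fun j => a₁ j + a₂ j < 1))
          ⊆ Finset.univ.filter (fun j => b j k = 0) := by
        intro j hj
        rw [Finset.mem_sdiff] at hj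
        have hj2 : ¬(a₁ j + a₂ j < 1) := fun hc =>
          hj.2 (Finset.mem_filter.2 ⟨Finset.mem_univ _, hc⟩)
        exact Finset.mem_filter.2 ⟨Finset.mem_univ _,
          hb0 j (le_antisymm (hxy j) (not_lt.1 hj2)) k⟩
      have h5 := Finset.card_le_card hsub
      rw [Finset.card_sdiff_of_subset (Finset.subset_univ _), Finset.card_univ, Fintype.card_fin] at h5
      omega
    constructor
    · rw [htA, heqs]
      exact div_self (ne_of_gt hden)
    · intro k
      show tB n (fun j => b j k) = 0
      rw [tB]
      rw [Finset.sum_eq_zero, zero_div]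
      intro i hi
      rw [Finset.mem_filter] at hi
      exact sorted_zero_of_many_zeros hn _ (fun j => hb j k) (hZ k) i hi.2.2
end

section
/- Fix n ≥ 5 and m ≥ 1 with 2m < n. Let L be the first-order language with a single n-ary function symbol, and let Cₙ be the L-structure with universe ℚ × ℚ in which the symbol is interpreted as the operation sending ((x₁,u₁),…,(xₙ,uₙ)) to (tᴬₙ(x₁,…,xₙ), tᴮₙ(u₁,…,uₙ)). Then: (i) this basic operation of Cₙ is a near-unanimity operation, i.e., its value on any n-tuple all of whose entries equal some c ∈ ℚ×ℚ except possibly one entry is c; and (ii) Cₙ has no (2+m)-terms. -/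
open FirstOrder Language

/-- The first-order language with a single `n`-ary function symbol (and no relation
symbols). -/
def LangN (n : ℕ) : Language :=
  ⟨fun k => ULift (PLift (k = n)), fun _ => Empty⟩

/-- The structure `Cₙ` on `ℚ × ℚ`: the unique `n`-ary function symbol acts as
`((x₁,u₁),…,(xₙ,uₙ)) ↦ (tᴬₙ(x₁,…,xₙ), tᴮₙ(u₁,…,uₙ))`. -/
noncomputable def CnStruct (n : ℕ) : (LangN n).Structure (ℚ × ℚ) where
  funMap {_k} f v :=
    (tA n (fun i => (v (Fin.cast f.down.down.symm i)).1),
     tB n (fun i => (v (Fin.cast f.down.down.symm i)).2))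
  RelMap {_k} r _ := Empty.elim r

/-- `M` has `(m₁+m₂)`-terms: an idempotent `(m₁+m₂)`-ary term operation `f`, an
idempotent `m₁`-ary term operation `g₁` and an idempotent `m₂`-ary term operation
`g₂` such that `f` with `y` at position `i ≤ m₁` (and `x` elsewhere) equals `g₁` with
`y` at position `i`, and `f` with `y` at position `m₁+i` equals `g₂` with `y` at
position `i`. -/
def HasPlusTerms (L : Language) (M : Type*) [L.Structure M] (m₁ m₂ : ℕ) : Prop :=
  ∃ (f : L.Term (Fin (m₁ + m₂))) (g₁ : L.Term (Fin m₁)) (g₂ : L.Term (Fin m₂)),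
    (∀ x : M, f.realize (fun _ => x) = x) ∧
    (∀ x : M, g₁.realize (fun _ => x) = x) ∧
    (∀ x : M, g₂.realize (fun _ => x) = x) ∧
    (∀ (i : Fin m₁) (x y : M),
      f.realize (fun p => if p = Fin.castAdd m₂ i then y else x) =
      g₁.realize (fun p => if p = i then y else x)) ∧
    (∀ (i : Fin m₂) (x y : M),
      f.realize (fun p => if p = Fin.natAdd m₁ i then y else x) =
      g₂.realize (fun p => if p = i then y else x))


namespace H17


variable {n : ℕ}

/-- numerator of tA -/
noncomputable def numA (n : ℕ) (x : Fin n → ℚ) : ℚ :=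
  ∑ i ∈ Finset.univ.filter (fun i : Fin n => 1 ≤ (i : ℕ) ∧ (i : ℕ) ≤ n - 2),
      x (Tuple.sort x i)

lemma tA_eq (x : Fin n → ℚ) : tA n x = numA n x / ((n : ℚ) - 2) := rfl

lemma cast_sub_two_pos (hn : 5 ≤ n) : (0:ℚ) < (n:ℚ) - 2 := by
  have : (5:ℚ) ≤ (n:ℚ) := by exact_mod_cast hn
  linarith

lemma cast_sub_four_pos (hn : 5 ≤ n) : (0:ℚ) < (n:ℚ) - 4 := by
  have : (5:ℚ) ≤ (n:ℚ) := by exact_mod_cast hn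
  linarith

/-- Bridge: the trimmed sum equals the full sum minus an (attained) max and min. -/
lemma numA_bridge (hn : 5 ≤ n) (v : Fin n → ℚ) :
    ∃ j l : Fin n, j ≠ l ∧ (∀ i, v i ≤ v j) ∧ (∀ i, v l ≤ v i) ∧
      numA n v = (∑ i, v i) - v j - v l := by
  have h0 : 0 < n := by omega
  set σ := Tuple.sort v with hσ
  have hmono : Monotone (v ∘ σ) := Tuple.monotone_sort v
  set z : Fin n := ⟨0, h0⟩ with hz
  set t : Fin n := ⟨n-1, by omega⟩ with ht
  refine ⟨σ t, σ z, ?_, ?_, ?_, ?_⟩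
  · intro h
    have := σ.injective h
    have : (t : ℕ) = (z : ℕ) := by rw [this]
    simp [ht, hz] at this
    omega
  · intro i
    have : v (σ (σ.symm i)) ≤ v (σ t) := by
      apply hmono
      show (σ.symm i : ℕ) ≤ (t : ℕ)
      have := (σ.symm i).isLt
      simp [ht]; omega
    simpa using this
  · intro i
    have : v (σ z) ≤ v (σ (σ.symm i)) := by
      apply hmono
      show (z : ℕ) ≤ (σ.symm i : ℕ)
      simp [hz]
    simpa using this
  · have hsum : ∑ i, v (σ i) = ∑ i, v i := Equiv.sum_comp σ v
    have hpart := Finset.sum_filter_add_sum_filter_not Finset.univ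
      (fun i : Fin n => 1 ≤ (i : ℕ) ∧ (i : ℕ) ≤ n - 2) (fun i => v (σ i))
    have hneg : Finset.univ.filter (fun i : Fin n => ¬(1 ≤ (i : ℕ) ∧ (i : ℕ) ≤ n - 2))
        = {z, t} := by
      ext i
      simp only [Finset.mem_filter, Finset.mem_univ, true_and, Finset.mem_insert,
        Finset.mem_singleton]
      constructor
      · intro h
        have := i.isLt
        rcases Nat.lt_or_ge (i : ℕ) 1 with h1 | h1
        · left; apply Fin.ext; simp [hz]; omega
        · right; apply Fin.ext; simp [ht]; omega
      · rintro (rfl | rfl) <;> simp [hz, ht] <;> omega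
    have hzt : z ≠ t := by
      intro h
      have : (z : ℕ) = (t : ℕ) := by rw [h]
      simp [hz, ht] at this; omega
    have hpair : ∑ i ∈ ({z, t} : Finset (Fin n)), v (σ i) = v (σ z) + v (σ t) :=
      Finset.sum_pair hzt
    rw [hneg, hpair] at hpart
    have : numA n v = (∑ i, v i) - (v (σ z) + v (σ t)) := by
      rw [← hsum, ← hpart]; ring_nf; rfl
    rw [this]; ring

/-- Monotonicity and rigidity of the tA-numerator. -/
lemma numA_mono_rigid (hn : 5 ≤ n) (u v : Fin n → ℚ) (huv : ∀ i, u i ≤ v i) :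
    numA n u ≤ numA n v ∧
      (numA n u = numA n v → ∃ j l : Fin n, ∀ i, i ≠ j → i ≠ l → u i = v i) := by
  obtain ⟨jv, lv, hjlv, hjvmax, hlvmin, hv⟩ := numA_bridge hn v
  obtain ⟨ju, lu, hjlu, hjumax, hlumin, hu⟩ := numA_bridge hn u
  -- find j ≠ l with (v jv + v lv) - (u ju + u lu) ≤ (v j - u j) + (v l - u l)
  have key : ∃ j l : Fin n, j ≠ l ∧
      (v jv + v lv) - (u ju + u lu) ≤ (v j - u j) + (v l - u l) := by
    by_cases h : lu = jv
    · -- degenerate: pick any l ≠ jv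
      obtain ⟨l, hl⟩ : ∃ l : Fin n, l ≠ jv := by
        rcases eq_or_ne lv jv with h' | h'
        · exact ⟨ju, fun hh => hjlu (hh.trans h.symm)⟩
        · exact ⟨lv, h'⟩
      refine ⟨jv, l, fun hh => hl hh.symm, ?_⟩
      have h1 : v lv ≤ v l := hlvmin l
      have h2 : u l ≤ u ju := hjumax l
      have h3 : u lu = u jv := by rw [h]
      linarith
    · refine ⟨jv, lu, fun hh => h hh.symm, ?_⟩
      have h1 : u jv ≤ u ju := hjumax jv
      have h2 : v lv ≤ v lu := hlvmin lu
      linarith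
  obtain ⟨j, l, hjl, hkey⟩ := key
  have hdecomp : ∑ i, (v i - u i) =
      (v j - u j) + ((v l - u l) + ∑ i ∈ (Finset.univ.erase j).erase l, (v i - u i)) := by
    rw [Finset.add_sum_erase _ (fun i => v i - u i)
        (Finset.mem_erase.2 ⟨hjl.symm, Finset.mem_univ l⟩),
      Finset.add_sum_erase _ (fun i => v i - u i) (Finset.mem_univ j)]
  have hrest_nonneg : (0:ℚ) ≤ ∑ i ∈ (Finset.univ.erase j).erase l, (v i - u i) :=
    Finset.sum_nonneg fun i _ => by linarith [huv i]
  have hsumuv : ∑ i, (v i - u i) = (∑ i, v i) - (∑ i, u i) := by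
    rw [Finset.sum_sub_distrib]
  have hdiff : numA n v - numA n u =
      (∑ i, (v i - u i)) - ((v jv + v lv) - (u ju + u lu)) := by
    rw [hsumuv, hv, hu]; ring
  constructor
  · nlinarith [hdiff, hdecomp, hrest_nonneg, hkey]
  · intro heq
    refine ⟨j, l, fun i hij hil => ?_⟩
    have hzero : ∑ i ∈ (Finset.univ.erase j).erase l, (v i - u i) = 0 := by
      nlinarith [hdiff, hdecomp, hrest_nonneg, hkey, heq]
    have := (Finset.sum_eq_zero_iff_of_nonneg
      (fun i _ => by linarith [huv i] : ∀ i ∈ (Finset.univ.erase j).erase l, (0:ℚ) ≤ v i - u i)).1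
      hzero i (Finset.mem_erase.2 ⟨hil, Finset.mem_erase.2 ⟨hij, Finset.mem_univ i⟩⟩)
    linarith

lemma tA_mono (hn : 5 ≤ n) (u v : Fin n → ℚ) (huv : ∀ i, u i ≤ v i) :
    tA n u ≤ tA n v := by
  rw [tA_eq, tA_eq]
  apply div_le_div_of_nonneg_right ?_ ?_
  · exact (numA_mono_rigid hn u v huv).1
  · exact le_of_lt (cast_sub_two_pos hn)

lemma tA_rigid (hn : 5 ≤ n) (u v : Fin n → ℚ) (huv : ∀ i, u i ≤ v i)
    (heq : tA n u = tA n v) :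
    ∃ j l : Fin n, ∀ i, i ≠ j → i ≠ l → u i = v i := by
  apply (numA_mono_rigid hn u v huv).2
  have h2 : ((n:ℚ) - 2) ≠ 0 := ne_of_gt (cast_sub_two_pos hn)
  rw [tA_eq, tA_eq] at heq
  field_simp at heq
  exact heq

lemma tA_dual (hn : 5 ≤ n) (v : Fin n → ℚ) :
    tA n (fun i => 1 - v i) = 1 - tA n v := by
  obtain ⟨jv, lv, _, hjvmax, hlvmin, hv⟩ := numA_bridge hn v
  obtain ⟨jw, lw, _, hjwmax, hlwmin, hw⟩ := numA_bridge hn (fun i => 1 - v i)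
  -- v jw is a min of v, v lw is a max of v
  have h1 : v jw = v lv := by
    have ha := hjwmax lv  -- 1 - v lv ≤ 1 - v jw
    have hb := hlvmin jw
    linarith
  have h2 : v lw = v jv := by
    have ha := hlwmin jv  -- 1 - v lw ≤ 1 - v jv
    have hb := hjvmax lw
    linarith
  have hsum : ∑ i, (1 - v i) = (n : ℚ) - ∑ i, v i := by
    rw [Finset.sum_sub_distrib]
    simp [Finset.card_univ]
  rw [tA_eq, tA_eq, hw, hv, hsum, h1, h2]
  have h2' : ((n:ℚ) - 2) ≠ 0 := ne_of_gt (cast_sub_two_pos hn)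
  field_simp
  ring



variable {n : ℕ}

lemma cast_sub_four_pos' (hn : 5 ≤ n) : (0:ℚ) < (n:ℚ) - 4 := by
  have : (5:ℚ) ≤ (n:ℚ) := by exact_mod_cast hn
  linarith

/-- tB of a nonnegative vector is nonnegative. -/
lemma tB_nonneg (hn : 5 ≤ n) (v : Fin n → ℚ) (hv : ∀ i, 0 ≤ v i) : 0 ≤ tB n v := by
  apply div_nonneg _ (le_of_lt (cast_sub_four_pos' hn))
  exact Finset.sum_nonneg fun i _ => hv _

/-- If a nonnegative vector has at most 2 positive entries, tB is 0. -/
lemma tB_eq_zero (hn : 5 ≤ n) (v : Fin n → ℚ) (hv : ∀ i, 0 ≤ v i)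
    (hcard : (Finset.univ.filter (fun i => 0 < v i)).card ≤ 2) : tB n v = 0 := by
  have hmono : Monotone (v ∘ Tuple.sort v) := Tuple.monotone_sort v
  set σ := Tuple.sort v with hσ
  rw [tB]
  convert zero_div _
  apply Finset.sum_eq_zero
  intro j hj
  simp only [Finset.mem_filter, Finset.mem_univ, true_and] at hj
  by_contra hne
  have hpos : 0 < v (σ j) := lt_of_le_of_ne (hv _) (Ne.symm hne)
  set a : Fin n := ⟨n-2, by omega⟩ with ha
  set b : Fin n := ⟨n-1, by omega⟩ with hb
  have hja : v (σ j) ≤ v (σ a) := hmono (by show (j:ℕ) ≤ (a:ℕ); simp [ha]; omega)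
  have hjb : v (σ j) ≤ v (σ b) := hmono (by show (j:ℕ) ≤ (b:ℕ); simp [hb]; omega)
  have hsub : ({σ j, σ a, σ b} : Finset (Fin n)) ⊆ Finset.univ.filter (fun i => 0 < v i) := by
    intro x hx
    simp only [Finset.mem_insert, Finset.mem_singleton] at hx
    simp only [Finset.mem_filter, Finset.mem_univ, true_and]
    rcases hx with rfl | rfl | rfl
    · exact hpos
    · linarith
    · linarith
  have hcard3 : ({σ j, σ a, σ b} : Finset (Fin n)).card = 3 := by
    rw [Finset.card_insert_of_notMem, Finset.card_insert_of_notMem, Finset.card_singleton]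
    · simp only [Finset.mem_singleton]
      intro h
      have : (a:ℕ) = (b:ℕ) := by rw [σ.injective h]
      simp [ha, hb] at this; omega
    · simp only [Finset.mem_insert, Finset.mem_singleton]
      rintro (h | h)
      · have : (j:ℕ) = (a:ℕ) := by rw [σ.injective h]
        simp [ha] at this; omega
      · have : (j:ℕ) = (b:ℕ) := by rw [σ.injective h]
        simp [hb] at this; omega
  have := Finset.card_le_card hsub
  omega

/-- If a nonnegative vector has at least 3 positive entries, tB is positive. -/
lemma tB_pos (hn : 5 ≤ n) (v : Fin n → ℚ) (hv : ∀ i, 0 ≤ v i)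
    (hcard : 3 ≤ (Finset.univ.filter (fun i => 0 < v i)).card) : 0 < tB n v := by
  have hmono : Monotone (v ∘ Tuple.sort v) := Tuple.monotone_sort v
  set σ := Tuple.sort v with hσ
  set c : Fin n := ⟨n-3, by omega⟩ with hc
  have hcmem : c ∈ Finset.univ.filter (fun i : Fin n => 2 ≤ (i : ℕ) ∧ (i : ℕ) ≤ n - 3) := by
    simp only [Finset.mem_filter, Finset.mem_univ, true_and, hc]
    omega
  have hcpos : 0 < v (σ c) := by
    by_contra hle
    push_neg at hle
    set a : Fin n := ⟨n-2, by omega⟩ with ha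
    set b : Fin n := ⟨n-1, by omega⟩ with hb
    have hsub : Finset.univ.filter (fun i => 0 < v i) ⊆ {σ a, σ b} := by
      intro x hx
      simp only [Finset.mem_filter, Finset.mem_univ, true_and] at hx
      simp only [Finset.mem_insert, Finset.mem_singleton]
      have hx' : x = σ (σ.symm x) := by simp
      rcases Nat.lt_or_ge ((σ.symm x : Fin n) : ℕ) (n-2) with h1 | h1
      · exfalso
        have : v (σ (σ.symm x)) ≤ v (σ c) := hmono (by show _ ≤ (c:ℕ); simp [hc]; omega)
        rw [← hx'] at this
        linarith
      · have := (σ.symm x).isLt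
        rcases Nat.lt_or_ge ((σ.symm x : Fin n) : ℕ) (n-1) with h2 | h2
        · left; rw [hx']; congr 1; apply Fin.ext; simp [ha]; omega
        · right; rw [hx']; congr 1; apply Fin.ext; simp [hb]; omega
    have := Finset.card_le_card hsub
    have : ({σ a, σ b} : Finset (Fin n)).card ≤ 2 := Finset.card_insert_le _ _ |>.trans (by simp)
    omega
  apply div_pos _ (cast_sub_four_pos' hn)
  apply Finset.sum_pos' (fun i _ => hv _) ⟨c, hcmem, hcpos⟩

/-- Near-unanimity: the sorted values in the middle range are all `x`. -/
lemma update_sorted_mid (hn : 5 ≤ n) (x u : ℚ) (p : Fin n) (j : Fin n)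
    (hj1 : 1 ≤ (j:ℕ)) (hj2 : (j:ℕ) ≤ n - 2) :
    (Function.update (fun _ => x) p u) (Tuple.sort (Function.update (fun _ => x) p u) j) = x := by
  set v := Function.update (fun _ => x) p u with hv
  by_cases hux : u = x
  · have hveq : v = fun _ => x := by
      funext i; by_cases h : i = p <;> simp [hv, h, hux]
    rw [hveq]
  have hmono : Monotone (v ∘ Tuple.sort v) := Tuple.monotone_sort v
  set σ := Tuple.sort v with hσ
  by_cases h : σ j = p
  · exfalso
    rcases lt_or_gt_of_ne hux with hlt | hgt
    · set z : Fin n := ⟨0, by omega⟩ with hz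
      have hzj : σ z ≠ p := by
        intro he
        have : z = j := σ.injective (he.trans h.symm)
        have : (z:ℕ) = (j:ℕ) := by rw [this]
        simp [hz] at this; omega
      have h1 : v (σ z) = x := by simp [hv, Function.update_of_ne hzj]
      have h2 : v (σ j) = u := by simp [hv, h]
      have : v (σ z) ≤ v (σ j) := hmono (by show (z:ℕ) ≤ (j:ℕ); simp [hz])
      rw [h1, h2] at this
      linarith
    · set t : Fin n := ⟨n-1, by omega⟩ with ht
      have htj : σ t ≠ p := by
        intro he
        have : t = j := σ.injective (he.trans h.symm)
        have : (t:ℕ) = (j:ℕ) := by rw [this]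
        simp [ht] at this; omega
      have h1 : v (σ t) = x := by simp [hv, Function.update_of_ne htj]
      have h2 : v (σ j) = u := by simp [hv, h]
      have : v (σ j) ≤ v (σ t) := hmono (by show (j:ℕ) ≤ (t:ℕ); simp [ht]; omega)
      rw [h1, h2] at this
      linarith
  · simp [hv, Function.update_of_ne h]

lemma cardA (hn : 5 ≤ n) :
    (Finset.univ.filter (fun i : Fin n => 1 ≤ (i : ℕ) ∧ (i : ℕ) ≤ n - 2)).card = n - 2 := by
  have h := Finset.card_filter_add_card_filter_not
    (s := (Finset.univ : Finset (Fin n))) (p := fun i : Fin n => 1 ≤ (i : ℕ) ∧ (i : ℕ) ≤ n - 2)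
  have hneg : Finset.univ.filter (fun i : Fin n => ¬(1 ≤ (i : ℕ) ∧ (i : ℕ) ≤ n - 2))
      = {(⟨0, by omega⟩ : Fin n), ⟨n-1, by omega⟩} := by
    ext i
    simp only [Finset.mem_filter, Finset.mem_univ, true_and, Finset.mem_insert,
      Finset.mem_singleton, Fin.ext_iff]
    have := i.isLt
    constructor
    · intro h; omega
    · intro h; omega
  have hcard2 : ({(⟨0, by omega⟩ : Fin n), ⟨n-1, by omega⟩} : Finset (Fin n)).card = 2 := by
    rw [Finset.card_insert_of_notMem, Finset.card_singleton]
    simp only [Finset.mem_singleton, Fin.ext_iff]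
    omega
  rw [hneg, hcard2] at h
  simp only [Finset.card_univ, Fintype.card_fin] at h
  omega

lemma cardB (hn : 5 ≤ n) :
    (Finset.univ.filter (fun i : Fin n => 2 ≤ (i : ℕ) ∧ (i : ℕ) ≤ n - 3)).card = n - 4 := by
  have h := Finset.card_filter_add_card_filter_not
    (s := (Finset.univ : Finset (Fin n))) (p := fun i : Fin n => 2 ≤ (i : ℕ) ∧ (i : ℕ) ≤ n - 3)
  have hneg : Finset.univ.filter (fun i : Fin n => ¬(2 ≤ (i : ℕ) ∧ (i : ℕ) ≤ n - 3))
      = {(⟨0, by omega⟩ : Fin n), ⟨1, by omega⟩, ⟨n-2, by omega⟩, ⟨n-1, by omega⟩} := by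
    ext i
    simp only [Finset.mem_filter, Finset.mem_univ, true_and, Finset.mem_insert,
      Finset.mem_singleton, Fin.ext_iff]
    have := i.isLt
    constructor
    · intro h; omega
    · intro h; omega
  have hcard4 : ({(⟨0, by omega⟩ : Fin n), ⟨1, by omega⟩, ⟨n-2, by omega⟩,
      ⟨n-1, by omega⟩} : Finset (Fin n)).card = 4 := by
    rw [Finset.card_insert_of_notMem, Finset.card_insert_of_notMem,
      Finset.card_insert_of_notMem, Finset.card_singleton]
    · simp only [Finset.mem_singleton, Fin.ext_iff]; omega
    · simp only [Finset.mem_insert, Finset.mem_singleton, Fin.ext_iff]; push_neg; omega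
    · simp only [Finset.mem_insert, Finset.mem_singleton, Fin.ext_iff]; push_neg; omega
  rw [hneg, hcard4] at h
  simp only [Finset.card_univ, Fintype.card_fin] at h
  omega

/-- tA is a near-unanimity operation. -/
lemma tA_update (hn : 5 ≤ n) (x u : ℚ) (p : Fin n) :
    tA n (Function.update (fun _ => x) p u) = x := by
  rw [tA]
  have hsum : ∑ i ∈ Finset.univ.filter (fun i : Fin n => 1 ≤ (i : ℕ) ∧ (i : ℕ) ≤ n - 2),
      (Function.update (fun _ => x) p u)
        (Tuple.sort (Function.update (fun _ => x) p u) i) =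
      ∑ _i ∈ Finset.univ.filter (fun i : Fin n => 1 ≤ (i : ℕ) ∧ (i : ℕ) ≤ n - 2), x := by
    apply Finset.sum_congr rfl
    intro j hj
    simp only [Finset.mem_filter, Finset.mem_univ, true_and] at hj
    exact update_sorted_mid hn x u p j hj.1 hj.2
  rw [hsum, Finset.sum_const, cardA hn, nsmul_eq_mul]
  have hcast : ((n - 2 : ℕ) : ℚ) = (n:ℚ) - 2 := by
    have : (2:ℕ) ≤ n := by omega
    push_cast [Nat.cast_sub this]
    ring
  rw [hcast]
  have h2 : ((n:ℚ) - 2) ≠ 0 := by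
    have : (5:ℚ) ≤ (n:ℚ) := by exact_mod_cast hn
    intro h; rw [sub_eq_zero] at h; linarith
  field_simp

/-- tB is a near-unanimity operation. -/
lemma tB_update (hn : 5 ≤ n) (x u : ℚ) (p : Fin n) :
    tB n (Function.update (fun _ => x) p u) = x := by
  rw [tB]
  have hsum : ∑ i ∈ Finset.univ.filter (fun i : Fin n => 2 ≤ (i : ℕ) ∧ (i : ℕ) ≤ n - 3),
      (Function.update (fun _ => x) p u)
        (Tuple.sort (Function.update (fun _ => x) p u) i) =
      ∑ _i ∈ Finset.univ.filter (fun i : Fin n => 2 ≤ (i : ℕ) ∧ (i : ℕ) ≤ n - 3), x := by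
    apply Finset.sum_congr rfl
    intro j hj
    simp only [Finset.mem_filter, Finset.mem_univ, true_and] at hj
    exact update_sorted_mid hn x u p j (by omega) (by omega)
  rw [hsum, Finset.sum_const, cardB hn, nsmul_eq_mul]
  have hcast : ((n - 4 : ℕ) : ℚ) = (n:ℚ) - 4 := by
    have : (4:ℕ) ≤ n := by omega
    push_cast [Nat.cast_sub this]
    ring
  rw [hcast]
  have h2 : ((n:ℚ) - 4) ≠ 0 := by
    have : (5:ℚ) ≤ (n:ℚ) := by exact_mod_cast hn
    intro h; rw [sub_eq_zero] at h; linarith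
  field_simp



/-- A-coordinate structure on ℚ. -/
noncomputable def SA (n : ℕ) : (LangN n).Structure ℚ where
  funMap {_k} f v := tA n (fun i => v (Fin.cast f.down.down.symm i))
  RelMap {_k} r _ := Empty.elim r

/-- B-coordinate structure on ℚ. -/
noncomputable def SB (n : ℕ) : (LangN n).Structure ℚ where
  funMap {_k} f v := tB n (fun i => v (Fin.cast f.down.down.symm i))
  RelMap {_k} r _ := Empty.elim r

noncomputable def realA (n : ℕ) {α : Type*} (w : α → ℚ) (t : (LangN n).Term α) : ℚ :=
  @Term.realize (LangN n) ℚ (SA n) α w t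

noncomputable def realB (n : ℕ) {α : Type*} (w : α → ℚ) (t : (LangN n).Term α) : ℚ :=
  @Term.realize (LangN n) ℚ (SB n) α w t

lemma realize_pair (n : ℕ) {α : Type*} (t : (LangN n).Term α) (v : α → ℚ × ℚ) :
    @Term.realize (LangN n) (ℚ × ℚ) (CnStruct n) α v t =
      (realA n (fun i => (v i).1) t, realB n (fun i => (v i).2) t) := by
  induction t with
  | var i => rfl
  | @func l f ts ih =>
    obtain ⟨⟨e⟩⟩ := f
    subst e
    simp only [Term.realize, realA, realB] at ih ⊢
    simp only [ih]
    rfl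

-- term lemmas --

variable {n : ℕ} {α : Type*}

lemma realA_func (n : ℕ) {l : ℕ} (e : l = n) (ts : Fin l → (LangN n).Term α) (w : α → ℚ) :
    realA n w (Term.func (L := LangN n) ⟨⟨e⟩⟩ ts) =
      tA n (fun i => realA n w (ts (Fin.cast e.symm i))) := by
  subst e
  rfl

lemma realB_func (n : ℕ) {l : ℕ} (e : l = n) (ts : Fin l → (LangN n).Term α) (w : α → ℚ) :
    realB n w (Term.func (L := LangN n) ⟨⟨e⟩⟩ ts) =
      tB n (fun i => realB n w (ts (Fin.cast e.symm i))) := by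
  subst e
  rfl

lemma realA_mono (hn : 5 ≤ n) (t : (LangN n).Term α) (u v : α → ℚ)
    (huv : ∀ i, u i ≤ v i) : realA n u t ≤ realA n v t := by
  induction t with
  | var i => exact huv i
  | @func l f ts ih =>
    obtain ⟨⟨e⟩⟩ := f
    rw [realA_func n e, realA_func n e]
    exact tA_mono hn _ _ (fun i => ih _)

lemma realA_dual (hn : 5 ≤ n) (t : (LangN n).Term α) (w : α → ℚ) :
    realA n (fun i => 1 - w i) t = 1 - realA n w t := by
  induction t with
  | var i => rfl
  | @func l f ts ih =>
    obtain ⟨⟨e⟩⟩ := f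
    rw [realA_func n e, realA_func n e, ← tA_dual hn]
    congr 1
    funext i
    exact ih _

lemma realB_nonneg (hn : 5 ≤ n) (t : (LangN n).Term α) (w : α → ℚ)
    (hw : ∀ i, 0 ≤ w i) : 0 ≤ realB n w t := by
  induction t with
  | var i => exact hw i
  | @func l f ts ih =>
    obtain ⟨⟨e⟩⟩ := f
    rw [realB_func n e]
    exact tB_nonneg hn _ (fun i => ih _)

/-- Main rigidity lemma: if a term's A-realization is frozen on a monotone pair
`u ≤ v`, then its B-realization vanishes on any nonnegative `χ` supported on
coordinates where `u < v` strictly. -/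
lemma main_rigidity (hn : 5 ≤ n) (t : (LangN n).Term α) (u v χ : α → ℚ)
    (huv : ∀ i, u i ≤ v i) (hχ0 : ∀ i, 0 ≤ χ i) (hχ : ∀ i, 0 < χ i → u i < v i)
    (hfrozen : realA n u t = realA n v t) : realB n χ t = 0 := by
  induction t with
  | var i =>
    show χ i = 0
    rcases lt_or_eq_of_le (hχ0 i) with h | h
    · exact absurd hfrozen (ne_of_lt (hχ i h)).elim
    · exact h.symm
  | @func l f ts ih =>
    obtain ⟨⟨e⟩⟩ := f
    rw [realA_func n e, realA_func n e] at hfrozen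
    rw [realB_func n e]
    obtain ⟨j, l', hjl⟩ := tA_rigid hn _ _ (fun i => realA_mono hn _ _ _ huv) hfrozen
    apply tB_eq_zero hn _ (fun i => realB_nonneg hn _ _ hχ0)
    have hsub : (Finset.univ.filter
        (fun i : Fin n => 0 < realB n χ (ts (Fin.cast e.symm i)))) ⊆ {j, l'} := by
      intro i hi
      simp only [Finset.mem_filter, Finset.mem_univ, true_and] at hi
      simp only [Finset.mem_insert, Finset.mem_singleton]
      by_contra hcon
      push_neg at hcon
      have hfroz_i := hjl i hcon.1 hcon.2
      have hzero := ih (Fin.cast e.symm i) hfroz_i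
      rw [hzero] at hi
      exact lt_irrefl _ hi
    calc (Finset.univ.filter
        (fun i : Fin n => 0 < realB n χ (ts (Fin.cast e.symm i)))).card
        ≤ ({j, l'} : Finset (Fin n)).card := Finset.card_le_card hsub
      _ ≤ 2 := Finset.card_insert_le _ _ |>.trans (by simp)



lemma fin_cast_rfl {l : ℕ} (i : Fin l) : Fin.cast rfl i = i := rfl

/-- Pigeonhole: any `m`-ary term with `2m < n` has a B-positive coordinate. -/
lemma support_pos {n m : ℕ} (hn : 5 ≤ n) (h2m : 2 * m < n) (t : (LangN n).Term (Fin m)) :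
    ∃ j : Fin m, 0 < realB n (fun i => if i = j then 1 else 0) t := by
  induction t with
  | var q => exact ⟨q, by simp [realB, Term.realize]⟩
  | @func l f ts ih =>
    obtain ⟨⟨e⟩⟩ := f
    subst e
    by_cases hex : ∃ j : Fin m, 3 ≤ (Finset.univ.filter
        (fun i : Fin l => 0 < realB l (fun i' => if i' = j then 1 else 0) (ts i))).card
    · obtain ⟨j, hj⟩ := hex
      refine ⟨j, ?_⟩
      rw [realB_func l rfl]
      simp only [fin_cast_rfl]
      apply tB_pos hn _ (fun i => realB_nonneg hn _ _ (fun i' => by positivity)) hj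
    · exfalso
      push_neg at hex
      have key : ∀ i : Fin l, (1:ℕ) ≤ ∑ j : Fin m,
          (if 0 < realB l (fun i' => if i' = j then 1 else 0) (ts i) then 1 else 0) := by
        intro i
        obtain ⟨j, hj⟩ := ih i
        calc (1:ℕ) = if 0 < realB l (fun i' => if i' = j then 1 else 0) (ts i) then 1 else 0 := by
              simp [hj]
          _ ≤ _ := Finset.single_le_sum (f := fun j => if 0 < realB l
              (fun i' => if i' = j then 1 else 0) (ts i) then 1 else 0)
              (fun _ _ => Nat.zero_le _) (Finset.mem_univ j)
      have h1 : (l:ℕ) ≤ ∑ i : Fin l, ∑ j : Fin m,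
          (if 0 < realB l (fun i' => if i' = j then 1 else 0) (ts i) then 1 else 0) := by
        calc (l:ℕ) = ∑ _i : Fin l, 1 := by simp
          _ ≤ _ := Finset.sum_le_sum (fun i _ => key i)
      rw [Finset.sum_comm] at h1
      have h2 : ∑ j : Fin m, ∑ i : Fin l,
          (if 0 < realB l (fun i' => if i' = j then 1 else 0) (ts i) then 1 else 0) ≤
          ∑ _j : Fin m, 2 := by
        apply Finset.sum_le_sum
        intro j _
        have := hex j
        rw [Finset.card_filter] at this
        omega
      simp only [Finset.sum_const, Finset.card_univ, Fintype.card_fin, smul_eq_mul] at h2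
      omega

end H17

open FirstOrder Language H17 in
theorem stmt_17 (n m : ℕ) (hn : 5 ≤ n) (hm : 1 ≤ m) (h2m : 2 * m < n) :
    -- (i) the basic operation of `Cₙ` is a near-unanimity operation
    (∀ (c d : ℚ × ℚ) (i : Fin n),
      (CnStruct n).funMap (⟨⟨rfl⟩⟩ : ULift (PLift (n = n)))
        (Function.update (fun _ => c) i d) = c) ∧
    -- (ii) `Cₙ` has no `(2+m)`-terms
    ¬ @HasPlusTerms (LangN n) (ℚ × ℚ) (CnStruct n) 2 m := by
  constructor
  · -- part (i)
    intro c d i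
    show (tA n _, tB n _) = c
    have h1 : (fun j => ((Function.update (fun _ => c) i d) (Fin.cast rfl j)).1) =
        Function.update (fun _ => c.1) i d.1 := by
      funext j
      by_cases h : j = i <;> simp [h, Function.update]
    have h2 : (fun j => ((Function.update (fun _ => c) i d) (Fin.cast rfl j)).2) =
        Function.update (fun _ => c.2) i d.2 := by
      funext j
      by_cases h : j = i <;> simp [h, Function.update]
    rw [h1, h2, tA_update hn, tB_update hn]
  · -- part (ii)
    rintro ⟨f, g₁, g₂, -, -, -, h₁, h₂⟩
    -- 0/1 test assignments
    set uu : Fin (2 + m) → ℚ := fun p => if p = Fin.castAdd m 0 then 1 else 0 with huu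
    set vv : Fin (2 + m) → ℚ := fun p => if p = Fin.castAdd m 1 then 0 else 1 with hvv
    have hcast01 : (Fin.castAdd m (0 : Fin 2)) ≠ Fin.castAdd m 1 := by
      simp [Fin.ext_iff]
    -- extract A-coordinate identities
    have eA0 : realA n uu f =
        realA n (fun p : Fin 2 => if p = 0 then 1 else 0) g₁ := by
      have := h₁ 0 ((0:ℚ), (0:ℚ)) ((1:ℚ), (1:ℚ))
      rw [realize_pair, realize_pair] at this
      have := congrArg Prod.fst this
      simpa [apply_ite Prod.fst, huu] using this
    have eA1 : realA n (fun p => if p = Fin.castAdd m 1 then (1:ℚ) else 0) f =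
        realA n (fun p : Fin 2 => if p = 1 then 1 else 0) g₁ := by
      have := h₁ 1 ((0:ℚ), (0:ℚ)) ((1:ℚ), (1:ℚ))
      rw [realize_pair, realize_pair] at this
      have := congrArg Prod.fst this
      simpa [apply_ite Prod.fst] using this
    -- A-saturation : realA uu f = realA vv f
    have hsat : realA n uu f = realA n vv f := by
      have hdual1 : vv = fun p => 1 - (fun p' => if p' = Fin.castAdd m 1 then (1:ℚ) else 0) p := by
        funext p
        by_cases h : p = Fin.castAdd m 1 <;> simp [hvv, h]
      have hdual2 : (fun p : Fin 2 => if p = 1 then (1:ℚ) else 0) =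
          fun p => 1 - (fun p' : Fin 2 => if p' = 0 then (1:ℚ) else 0) p := by
        funext p
        have : p = 0 ∨ p = 1 := by omega
        rcases this with rfl | rfl <;> norm_num
      rw [eA0, hdual1, realA_dual hn, eA1, hdual2, realA_dual hn]
      ring
    -- rigidity: B-realization of f vanishes on each block coordinate
    have hdead : ∀ j : Fin m,
        realB n (fun p => if p = Fin.natAdd 2 j then (1:ℚ) else 0) f = 0 := by
      intro j
      apply main_rigidity hn f uu vv _ _ (fun i => by positivity) _ hsat
      · intro p
        by_cases h0 : p = Fin.castAdd m 0
        · subst h0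
          simp [huu, hvv, hcast01]
        · by_cases h1 : p = Fin.castAdd m 1 <;> simp [huu, hvv, h0, h1]
      · intro p hp
        have hpj : p = Fin.natAdd 2 j := by
          by_contra hc
          simp [hc] at hp
        subst hpj
        have hne0 : Fin.natAdd 2 j ≠ Fin.castAdd m (0 : Fin 2) := by
          intro hc
          have := congrArg Fin.val hc
          simp only [Fin.coe_natAdd, Fin.coe_castAdd] at this
          omega
        have hne1 : Fin.natAdd 2 j ≠ Fin.castAdd m (1 : Fin 2) := by
          intro hc
          have := congrArg Fin.val hc
          simp only [Fin.coe_natAdd, Fin.coe_castAdd] at this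
          omega
        simp [huu, hvv, hne0, hne1]
    -- transfer to g₂ and contradict pigeonhole
    obtain ⟨j, hj⟩ := support_pos hn h2m g₂
    have : realB n (fun i : Fin m => if i = j then 1 else 0) g₂ = 0 := by
      have := h₂ j ((0:ℚ), (0:ℚ)) ((1:ℚ), (1:ℚ))
      rw [realize_pair, realize_pair] at this
      have := congrArg Prod.snd this
      have h' : realB n (fun p => if p = Fin.natAdd 2 j then (1:ℚ) else 0) f =
          realB n (fun i : Fin m => if i = j then 1 else 0) g₂ := by
        simpa [apply_ite Prod.snd] using this
      rw [← h', hdead j]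
    rw [this] at hj
    exact lt_irrefl _ hj
end

section
/- Let L be the first-order language with a single 4-ary function symbol, and let C' be the L-structure with universe ℚ × ℚ in which the symbol is interpreted as the operation sending ((x₁,u₁),(x₂,u₂),(x₃,u₃),(x₄,u₄)) to (tᴬ₆(x₁,x₂,x₃,x₄,x₄,x₄), tᴮ₆(u₁,u₂,u₃,u₄,u₄,u₄)). Then for every m ≥ 1, C' has no (2+m)-terms. -/
open FirstOrder Language

/-- The structure `C'` on `ℚ × ℚ`: the unique `4`-ary function symbol acts as
`((x₁,u₁),(x₂,u₂),(x₃,u₃),(x₄,u₄)) ↦ (tᴬ₆(x₁,x₂,x₃,x₄,x₄,x₄), tᴮ₆(u₁,u₂,u₃,u₄,u₄,u₄))`. -/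
noncomputable def CpStruct : (LangN 4).Structure (ℚ × ℚ) where
  funMap {_k} f v :=
    (tA 6 ![(v (Fin.cast f.down.down.symm 0)).1, (v (Fin.cast f.down.down.symm 1)).1,
            (v (Fin.cast f.down.down.symm 2)).1, (v (Fin.cast f.down.down.symm 3)).1,
            (v (Fin.cast f.down.down.symm 3)).1, (v (Fin.cast f.down.down.symm 3)).1],
     tB 6 ![(v (Fin.cast f.down.down.symm 0)).2, (v (Fin.cast f.down.down.symm 1)).2,
            (v (Fin.cast f.down.down.symm 2)).2, (v (Fin.cast f.down.down.symm 3)).2,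
            (v (Fin.cast f.down.down.symm 3)).2, (v (Fin.cast f.down.down.symm 3)).2])
  RelMap {_k} r _ := Empty.elim r

/-! ### Auxiliary arithmetic: four-variable min/max and the explicit forms of the
trimmed means on tuples of the shape `![a,b,c,d,d,d]`. -/

section arith
variable (a b c d : ℚ)
noncomputable def m4 : ℚ := min (min (min a b) c) d
noncomputable def M4 : ℚ := max (max (max a b) c) d
/-- The A-operation in explicit form. -/
noncomputable def A4' (a b c d : ℚ) : ℚ := (a + b + c + 3*d - m4 a b c d - M4 a b c d)/4

lemma m4_le₁ : m4 a b c d ≤ a := le_trans (min_le_left _ _) <| le_trans (min_le_left _ _) (min_le_left _ _)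
lemma m4_le₂ : m4 a b c d ≤ b := le_trans (min_le_left _ _) <| le_trans (min_le_left _ _) (min_le_right _ _)
lemma m4_le₃ : m4 a b c d ≤ c := le_trans (min_le_left _ _) (min_le_right _ _)
lemma m4_le₄ : m4 a b c d ≤ d := min_le_right _ _
lemma le_M4₁ : a ≤ M4 a b c d := le_trans (le_trans (le_max_left _ _) (le_max_left _ _)) (le_max_left _ _)
lemma le_M4₂ : b ≤ M4 a b c d := le_trans (le_trans (le_max_right _ _) (le_max_left _ _)) (le_max_left _ _)
lemma le_M4₃ : c ≤ M4 a b c d := le_trans (le_max_right _ _) (le_max_left _ _)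
lemma le_M4₄ : d ≤ M4 a b c d := le_max_right _ _
lemma m4_cases : m4 a b c d = a ∨ m4 a b c d = b ∨ m4 a b c d = c ∨ m4 a b c d = d := by
  unfold m4
  rcases min_choice (min (min a b) c) d with h | h
  · rcases min_choice (min a b) c with h2 | h2
    · rcases min_choice a b with h3 | h3
      · exact Or.inl (by rw [h, h2, h3])
      · exact Or.inr <| Or.inl (by rw [h, h2, h3])
    · exact Or.inr <| Or.inr <| Or.inl (by rw [h, h2])
  · exact Or.inr <| Or.inr <| Or.inr h
lemma M4_cases : M4 a b c d = a ∨ M4 a b c d = b ∨ M4 a b c d = c ∨ M4 a b c d = d := by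
  unfold M4
  rcases max_choice (max (max a b) c) d with h | h
  · rcases max_choice (max a b) c with h2 | h2
    · rcases max_choice a b with h3 | h3
      · exact Or.inl (by rw [h, h2, h3])
      · exact Or.inr <| Or.inl (by rw [h, h2, h3])
    · exact Or.inr <| Or.inr <| Or.inl (by rw [h, h2])
  · exact Or.inr <| Or.inr <| Or.inr h
end arith

lemma A4'_diag (c : ℚ) : A4' c c c c = c := by
  unfold A4' m4 M4
  simp [min_self, max_self]
  ring

lemma A4'_reflect (a b c d : ℚ) :
    A4' (1-a) (1-b) (1-c) (1-d) = 1 - A4' a b c d := by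
  unfold A4'
  have hm : m4 (1-a) (1-b) (1-c) (1-d) = 1 - M4 a b c d := by
    unfold m4 M4
    rw [min_sub_sub_left, min_sub_sub_left, min_sub_sub_left]
  have hM : M4 (1-a) (1-b) (1-c) (1-d) = 1 - m4 a b c d := by
    unfold m4 M4
    rw [max_sub_sub_left, max_sub_sub_left, max_sub_sub_left]
  rw [hm, hM]
  ring

lemma A4'_mono (u1 u2 u3 u4 v1 v2 v3 v4 : ℚ) (h1 : u1 ≤ v1) (h2 : u2 ≤ v2)
    (h3 : u3 ≤ v3) (h4 : u4 ≤ v4) : A4' u1 u2 u3 u4 ≤ A4' v1 v2 v3 v4 := by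
  unfold A4'
  rcases m4_cases u1 u2 u3 u4 with h | h | h | h <;>
    rcases M4_cases v1 v2 v3 v4 with h' | h' | h' | h' <;>
      linarith [m4_le₁ v1 v2 v3 v4, m4_le₂ v1 v2 v3 v4, m4_le₃ v1 v2 v3 v4, m4_le₄ v1 v2 v3 v4,
        le_M4₁ u1 u2 u3 u4, le_M4₂ u1 u2 u3 u4, le_M4₃ u1 u2 u3 u4, le_M4₄ u1 u2 u3 u4]

lemma A4'_slot4 (a b c q δ : ℚ) (hδ : 0 ≤ δ) :
    A4' a b c q + δ/4 ≤ A4' a b c (q + δ) := by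
  unfold A4'
  have hm : m4 a b c (q + δ) ≤ m4 a b c q + δ := by
    unfold m4
    calc min (min (min a b) c) (q + δ) ≤ min (min (min a b) c + δ) (q + δ) :=
          min_le_min (by linarith) le_rfl
    _ = min (min (min a b) c) q + δ := min_add_add_right _ _ _
  have hM : M4 a b c (q + δ) ≤ M4 a b c q + δ := by
    unfold M4
    calc max (max (max a b) c) (q + δ) ≤ max (max (max a b) c + δ) (q + δ) :=
          max_le_max (by linarith) le_rfl
    _ = max (max (max a b) c) q + δ := max_add_add_right _ _ _
  have hm' : m4 a b c q ≤ m4 a b c (q + δ) := by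
    unfold m4
    exact min_le_min le_rfl (by linarith)
  have hM' : M4 a b c q ≤ M4 a b c (q + δ) := by
    unfold M4
    exact max_le_max le_rfl (by linarith)
  linarith

lemma A4'_slack (u1 u2 u3 v1 v2 v3 E : ℚ) (h1 : u1 < v1) (h2 : u2 < v2) (h3 : u3 < v3) :
    A4' u1 u2 u3 E < A4' v1 v2 v3 E := by
  unfold A4'
  rcases m4_cases u1 u2 u3 E with h | h | h | h <;>
    rcases M4_cases v1 v2 v3 E with h' | h' | h' | h' <;>
      linarith [m4_le₁ v1 v2 v3 E, m4_le₂ v1 v2 v3 E, m4_le₃ v1 v2 v3 E, m4_le₄ v1 v2 v3 E,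
        le_M4₁ u1 u2 u3 E, le_M4₂ u1 u2 u3 E, le_M4₃ u1 u2 u3 E, le_M4₄ u1 u2 u3 E]

/-- The key equality analysis: if two "indicator evaluations" of the A-operation sum
to exactly `1`, then the fourth slot is tight and at least one of the first three
slots is tight. -/
lemma mainA (u1 u2 u3 u4 w1 w2 w3 w4 : ℚ)
    (p1 : u1 + w1 ≤ 1) (p2 : u2 + w2 ≤ 1) (p3 : u3 + w3 ≤ 1) (p4 : u4 + w4 ≤ 1)
    (heq : A4' u1 u2 u3 u4 + A4' w1 w2 w3 w4 = 1) :
    u4 + w4 = 1 ∧ (u1 + w1 = 1 ∨ u2 + w2 = 1 ∨ u3 + w3 = 1) := by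
  have hrefl : A4' (1-u1) (1-u2) (1-u3) (1-u4) = 1 - A4' u1 u2 u3 u4 := A4'_reflect _ _ _ _
  have hslot : u4 + w4 = 1 := by
    by_contra hne
    have hlt : w4 < 1 - u4 := lt_of_le_of_ne (by linarith) (fun h => hne (by linarith))
    set δ := (1 - u4) - w4 with hδ
    have h1 : A4' w1 w2 w3 w4 + δ/4 ≤ A4' w1 w2 w3 (w4 + δ) := A4'_slot4 _ _ _ _ _ (by linarith)
    have h2 : A4' w1 w2 w3 (w4 + δ) ≤ A4' (1-u1) (1-u2) (1-u3) (1-u4) := by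
      apply A4'_mono <;> linarith
    rw [hrefl] at h2
    have : 0 < δ := by linarith
    linarith
  refine ⟨hslot, ?_⟩
  by_contra hcon
  push_neg at hcon
  obtain ⟨c1, c2, c3⟩ := hcon
  have s1 : w1 < 1 - u1 := lt_of_le_of_ne (by linarith) (fun h => c1 (by linarith))
  have s2 : w2 < 1 - u2 := lt_of_le_of_ne (by linarith) (fun h => c2 (by linarith))
  have s3 : w3 < 1 - u3 := lt_of_le_of_ne (by linarith) (fun h => c3 (by linarith))
  have hE : w4 = 1 - u4 := by linarith
  have := A4'_slack w1 w2 w3 (1-u1) (1-u2) (1-u3) (1-u4) s1 s2 s3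
  rw [hrefl] at this
  rw [hE] at heq
  linarith

/-! ### Sorting computations for the two trimmed means on `![a,b,c,d,d,d]`. -/

lemma tA6_eq (a b c d : ℚ) :
    tA 6 ![a,b,c,d,d,d] = A4' a b c d := by
  set x : Fin 6 → ℚ := ![a,b,c,d,d,d] with hx
  set σ := Tuple.sort x with hσ
  have hmono : Monotone (x ∘ σ) := Tuple.monotone_sort x
  have hle : ∀ j : Fin 6, x (σ 0) ≤ x j := by
    intro j
    have h := hmono (Fin.zero_le (σ.symm j))
    simpa using h
  have hge : ∀ j : Fin 6, x j ≤ x (σ 5) := by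
    intro j
    have h := hmono (Fin.le_last (σ.symm j))
    simpa using h
  have hx0 : x 0 = a := rfl
  have hx1 : x 1 = b := rfl
  have hx2 : x 2 = c := rfl
  have hx3 : x 3 = d := rfl
  have hentry : ∀ j : Fin 6, x j = a ∨ x j = b ∨ x j = c ∨ x j = d := by
    intro j
    fin_cases j
    · exact Or.inl rfl
    · exact Or.inr (Or.inl rfl)
    · exact Or.inr (Or.inr (Or.inl rfl))
    · exact Or.inr (Or.inr (Or.inr rfl))
    · exact Or.inr (Or.inr (Or.inr rfl))
    · exact Or.inr (Or.inr (Or.inr rfl))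
  have hmin : x (σ 0) = m4 a b c d := by
    apply le_antisymm
    · refine le_min (le_min (le_min ?_ ?_) ?_) ?_
      · simpa [hx0] using hle 0
      · simpa [hx1] using hle 1
      · simpa [hx2] using hle 2
      · simpa [hx3] using hle 3
    · rcases hentry (σ 0) with h | h | h | h <;> rw [h]
      exacts [m4_le₁ a b c d, m4_le₂ a b c d, m4_le₃ a b c d, m4_le₄ a b c d]
  have hmax : x (σ 5) = M4 a b c d := by
    apply le_antisymm
    · rcases hentry (σ 5) with h | h | h | h <;> rw [h]
      exacts [le_M4₁ a b c d, le_M4₂ a b c d, le_M4₃ a b c d, le_M4₄ a b c d]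
    · refine max_le (max_le (max_le ?_ ?_) ?_) ?_
      · simpa [hx0] using hge 0
      · simpa [hx1] using hge 1
      · simpa [hx2] using hge 2
      · simpa [hx3] using hge 3
  have hsum : ∑ i : Fin 6, x (σ i) = a + b + c + 3*d := by
    rw [Equiv.sum_comp σ x, Fin.sum_univ_six]
    show a + b + c + d + d + d = _
    ring
  have hsum6 : ∑ i : Fin 6, x (σ i)
      = x (σ 0) + x (σ 1) + x (σ 2) + x (σ 3) + x (σ 4) + x (σ 5) :=
    Fin.sum_univ_six _
  have hfil : (Finset.univ.filter (fun i : Fin 6 => 1 ≤ (i : ℕ) ∧ (i : ℕ) ≤ 6 - 2))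
      = ({1,2,3,4} : Finset (Fin 6)) := by decide
  have hmid : ∑ i ∈ Finset.univ.filter (fun i : Fin 6 => 1 ≤ (i : ℕ) ∧ (i : ℕ) ≤ 6 - 2),
      x (σ i) = x (σ 1) + x (σ 2) + x (σ 3) + x (σ 4) := by
    rw [hfil]
    rw [Finset.sum_insert (by decide), Finset.sum_insert (by decide),
        Finset.sum_insert (by decide), Finset.sum_singleton]
    ring
  show (∑ i ∈ Finset.univ.filter (fun i : Fin 6 => 1 ≤ (i : ℕ) ∧ (i : ℕ) ≤ 6 - 2),
      x (σ i)) / ((6 : ℚ) - 2) = _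
  rw [hmid]
  have hfin : x (σ 1) + x (σ 2) + x (σ 3) + x (σ 4)
      = (a + b + c + 3*d) - m4 a b c d - M4 a b c d := by
    rw [← hmin, ← hmax]
    have := hsum6.symm.trans hsum
    linarith
  rw [hfin]
  unfold A4'
  norm_num

lemma tB6_pair (x : Fin 6 → ℚ) :
    tB 6 x = (x (Tuple.sort x 2) + x (Tuple.sort x 3)) / 2 := by
  have hfil : (Finset.univ.filter (fun i : Fin 6 => 2 ≤ (i : ℕ) ∧ (i : ℕ) ≤ 6 - 3))
      = ({2,3} : Finset (Fin 6)) := by decide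
  show (∑ i ∈ Finset.univ.filter (fun i : Fin 6 => 2 ≤ (i : ℕ) ∧ (i : ℕ) ≤ 6 - 3),
      x (Tuple.sort x i)) / ((6 : ℚ) - 4) = _
  rw [hfil, Finset.sum_insert (by decide), Finset.sum_singleton]
  norm_num

lemma pigeon3 (n0 n1 n2 n3 : ℕ) (h0 : n0 < 3) (h1 : n1 < 3) (h2 : n2 < 3) (h3 : n3 < 3)
    (d01 : n0 ≠ n1) (d02 : n0 ≠ n2) (d03 : n0 ≠ n3) (d12 : n1 ≠ n2) (d13 : n1 ≠ n3)
    (d23 : n2 ≠ n3) : False := by omega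

lemma tB6_nonneg (a b c d : ℚ) (ha : 0 ≤ a) (hb : 0 ≤ b) (hc : 0 ≤ c) (hd : 0 ≤ d) :
    0 ≤ tB 6 ![a,b,c,d,d,d] := by
  set x : Fin 6 → ℚ := ![a,b,c,d,d,d] with hx
  have hnn : ∀ j : Fin 6, 0 ≤ x j := by
    intro j; fin_cases j <;> assumption
  rw [tB6_pair]
  have h2 := hnn (Tuple.sort x 2)
  have h3 := hnn (Tuple.sort x 3)
  linarith

lemma tB6_zero (a b c d : ℚ) (ha : 0 ≤ a) (hb : 0 ≤ b) (hc : 0 ≤ c)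
    (hd : d = 0) (habc : a = 0 ∨ b = 0 ∨ c = 0) :
    tB 6 ![a,b,c,d,d,d] = 0 := by
  set x : Fin 6 → ℚ := ![a,b,c,d,d,d] with hx
  set σ := Tuple.sort x with hσ
  have hmono : Monotone (x ∘ σ) := Tuple.monotone_sort x
  have hnn : ∀ j : Fin 6, 0 ≤ x j := by
    intro j; fin_cases j
    exacts [ha, hb, hc, le_of_eq hd.symm, le_of_eq hd.symm, le_of_eq hd.symm]
  have h23 : x (σ 2) ≤ x (σ 3) := hmono (by decide : (2 : Fin 6) ≤ 3)
  have hle0 : x (σ 3) ≤ 0 := by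
    by_contra hcon
    push_neg at hcon
    have hkey : ∀ j : Fin 6, x j = 0 → ((σ.symm j : Fin 6) : ℕ) < 3 := by
      intro j hj
      by_contra h3
      push_neg at h3
      have hle : (3 : Fin 6) ≤ σ.symm j := by
        rw [Fin.le_def]; exact h3
      have := hmono hle
      simp only [Function.comp_apply, Equiv.apply_symm_apply] at this
      rw [hj] at this
      linarith
    have z3 : x 3 = 0 := hd
    have z4 : x 4 = 0 := hd
    have z5 : x 5 = 0 := hd
    have main : ∀ j0 : Fin 6, (j0 : ℕ) < 3 → x j0 = 0 → False := by
      intro j0 hj0 hxj0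
      have k0 := hkey j0 hxj0
      have k3 := hkey 3 z3
      have k4 := hkey 4 z4
      have k5 := hkey 5 z5
      have n03 : σ.symm j0 ≠ σ.symm 3 := fun h => by
        have := σ.symm.injective h
        rw [this] at hj0
        exact absurd hj0 (by omega)
      have n04 : σ.symm j0 ≠ σ.symm 4 := fun h => by
        have := σ.symm.injective h
        rw [this] at hj0
        exact absurd hj0 (by decide)
      have n05 : σ.symm j0 ≠ σ.symm 5 := fun h => by
        have := σ.symm.injective h
        rw [this] at hj0
        exact absurd hj0 (by decide)
      have n34 : σ.symm 3 ≠ σ.symm 4 := fun h => absurd (σ.symm.injective h) (by decide)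
      have n35 : σ.symm 3 ≠ σ.symm 5 := fun h => absurd (σ.symm.injective h) (by decide)
      have n45 : σ.symm 4 ≠ σ.symm 5 := fun h => absurd (σ.symm.injective h) (by decide)
      exact pigeon3 _ _ _ _ k0 k3 k4 k5
        (fun h => n03 (Fin.ext h)) (fun h => n04 (Fin.ext h)) (fun h => n05 (Fin.ext h))
        (fun h => n34 (Fin.ext h)) (fun h => n35 (Fin.ext h)) (fun h => n45 (Fin.ext h))
    rcases habc with h | h | h
    · exact main 0 (by norm_num) h
    · exact main 1 (by norm_num) h
    · exact main 2 (by norm_num) h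
  have h2' := hnn (σ 2)
  have h3' := hnn (σ 3)
  rw [tB6_pair]
  have e2 : x (σ 2) = 0 := by linarith
  have e3 : x (σ 3) = 0 := by linarith
  rw [hσ] at *
  linarith [e2, e3]

lemma tB6_d_zero (a b c d : ℚ) (ha : 0 ≤ a) (hb : 0 ≤ b) (hc : 0 ≤ c) (hd : 0 ≤ d)
    (h : tB 6 ![a,b,c,d,d,d] = 0) : d = 0 := by
  set x : Fin 6 → ℚ := ![a,b,c,d,d,d] with hx
  set σ := Tuple.sort x with hσ
  have hmono : Monotone (x ∘ σ) := Tuple.monotone_sort x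
  have hnn : ∀ j : Fin 6, 0 ≤ x j := by
    intro j; fin_cases j
    exacts [ha, hb, hc, hd, hd, hd]
  rw [tB6_pair] at h
  have h2 := hnn (σ 2)
  have h3 := hnn (σ 3)
  have hz3 : x (σ 3) = 0 := by
    rw [hσ] at *
    linarith
  have hz : ∀ i : Fin 6, i ≤ 3 → x (σ i) = 0 := by
    intro i hi
    have hmono' := hmono (show i ≤ (3 : Fin 6) from hi)
    simp only [Function.comp_apply] at hmono'
    have := hnn (σ i)
    linarith [hmono']
  by_contra hd0
  have hbig : ∀ j : Fin 6, 3 ≤ (j : ℕ) → x j = d := by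
    intro j hj
    fin_cases j
    · exact absurd hj (by decide)
    · exact absurd hj (by decide)
    · exact absurd hj (by decide)
    · rfl
    · rfl
    · rfl
  have hkey : ∀ i : Fin 6, x (σ i) = 0 → ((σ i : Fin 6) : ℕ) < 3 := by
    intro i hi
    by_contra hcon
    push_neg at hcon
    have := hbig (σ i) hcon
    rw [hi] at this
    exact hd0 this.symm
  have k0 := hkey 0 (hz 0 (by decide))
  have k1 := hkey 1 (hz 1 (by decide))
  have k2 := hkey 2 (hz 2 (by decide))
  have k3 := hkey 3 (hz 3 (by decide))
  have n01 : σ 0 ≠ σ 1 := fun h => absurd (σ.injective h) (by decide)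
  have n02 : σ 0 ≠ σ 2 := fun h => absurd (σ.injective h) (by decide)
  have n03 : σ 0 ≠ σ 3 := fun h => absurd (σ.injective h) (by decide)
  have n12 : σ 1 ≠ σ 2 := fun h => absurd (σ.injective h) (by decide)
  have n13 : σ 1 ≠ σ 3 := fun h => absurd (σ.injective h) (by decide)
  have n23 : σ 2 ≠ σ 3 := fun h => absurd (σ.injective h) (by decide)
  exact pigeon3 _ _ _ _ k0 k1 k2 k3
    (fun h => n01 (Fin.ext h)) (fun h => n02 (Fin.ext h)) (fun h => n03 (Fin.ext h))
    (fun h => n12 (Fin.ext h)) (fun h => n13 (Fin.ext h)) (fun h => n23 (Fin.ext h))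

/-! ### The two coordinate structures on `ℚ` and realization of terms. -/

noncomputable def AStruct : (LangN 4).Structure ℚ where
  funMap {_k} f v :=
    tA 6 ![v (Fin.cast f.down.down.symm 0), v (Fin.cast f.down.down.symm 1),
           v (Fin.cast f.down.down.symm 2), v (Fin.cast f.down.down.symm 3),
           v (Fin.cast f.down.down.symm 3), v (Fin.cast f.down.down.symm 3)]
  RelMap {_k} r _ := Empty.elim r

noncomputable def BStruct : (LangN 4).Structure ℚ where
  funMap {_k} f v :=
    tB 6 ![v (Fin.cast f.down.down.symm 0), v (Fin.cast f.down.down.symm 1),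
           v (Fin.cast f.down.down.symm 2), v (Fin.cast f.down.down.symm 3),
           v (Fin.cast f.down.down.symm 3), v (Fin.cast f.down.down.symm 3)]
  RelMap {_k} r _ := Empty.elim r

noncomputable def rA {n : ℕ} (t : (LangN 4).Term (Fin n)) (v : Fin n → ℚ) : ℚ :=
  @Term.realize (LangN 4) ℚ AStruct _ v t

noncomputable def rB {n : ℕ} (t : (LangN 4).Term (Fin n)) (v : Fin n → ℚ) : ℚ :=
  @Term.realize (LangN 4) ℚ BStruct _ v t

lemma rA_var {n : ℕ} (i : Fin n) (v : Fin n → ℚ) : rA (Term.var i) v = v i := rfl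
lemma rB_var {n : ℕ} (i : Fin n) (v : Fin n → ℚ) : rB (Term.var i) v = v i := rfl

lemma rA_func {n : ℕ} (F : (LangN 4).Functions 4) (ts : Fin 4 → (LangN 4).Term (Fin n))
    (v : Fin n → ℚ) :
    rA (Term.func F ts) v
      = tA 6 ![rA (ts 0) v, rA (ts 1) v, rA (ts 2) v, rA (ts 3) v, rA (ts 3) v, rA (ts 3) v] :=
  rfl

lemma rB_func {n : ℕ} (F : (LangN 4).Functions 4) (ts : Fin 4 → (LangN 4).Term (Fin n))
    (v : Fin n → ℚ) :
    rB (Term.func F ts) v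
      = tB 6 ![rB (ts 0) v, rB (ts 1) v, rB (ts 2) v, rB (ts 3) v, rB (ts 3) v, rB (ts 3) v] :=
  rfl

lemma rA_func' {n : ℕ} (F : (LangN 4).Functions 4) (ts : Fin 4 → (LangN 4).Term (Fin n))
    (v : Fin n → ℚ) :
    rA (Term.func F ts) v = A4' (rA (ts 0) v) (rA (ts 1) v) (rA (ts 2) v) (rA (ts 3) v) := by
  rw [rA_func, tA6_eq]

lemma rA_mono {n : ℕ} (t : (LangN 4).Term (Fin n)) {v w : Fin n → ℚ}
    (h : ∀ i, v i ≤ w i) : rA t v ≤ rA t w := by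
  induction t with
  | var i => exact h i
  | func F ts ih =>
      rcases F with ⟨⟨e⟩⟩
      subst e
      erw [rA_func', rA_func']
      exact A4'_mono _ _ _ _ _ _ _ _ (ih 0) (ih 1) (ih 2) (ih 3)

lemma rA_diag {n : ℕ} (t : (LangN 4).Term (Fin n)) (c : ℚ) :
    rA t (fun _ => c) = c := by
  induction t with
  | var i => rfl
  | func F ts ih =>
      rcases F with ⟨⟨e⟩⟩
      subst e
      erw [rA_func', ih 0, ih 1, ih 2, ih 3, A4'_diag]

lemma rA_reflect {n : ℕ} (t : (LangN 4).Term (Fin n)) (v : Fin n → ℚ) :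
    rA t (fun p => 1 - v p) = 1 - rA t v := by
  induction t with
  | var i => rfl
  | func F ts ih =>
      rcases F with ⟨⟨e⟩⟩
      subst e
      erw [rA_func', rA_func', ih 0, ih 1, ih 2, ih 3, A4'_reflect]

lemma rB_nonneg {n : ℕ} (t : (LangN 4).Term (Fin n)) {v : Fin n → ℚ}
    (h : ∀ i, 0 ≤ v i) : 0 ≤ rB t v := by
  induction t with
  | var i => exact h i
  | func F ts ih =>
      rcases F with ⟨⟨e⟩⟩
      subst e
      erw [rB_func]
      exact tB6_nonneg _ _ _ _ (ih 0) (ih 1) (ih 2) (ih 3)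

/-- The 0/1 indicator tuple of a coordinate. -/
def chi {n : ℕ} (i : Fin n) : Fin n → ℚ := fun p => if p = i then 1 else 0

lemma chi_nonneg {n : ℕ} (i : Fin n) : ∀ p, 0 ≤ chi i p := by
  intro p
  unfold chi
  split_ifs <;> norm_num

lemma rA_pair {n : ℕ} (t : (LangN 4).Term (Fin n)) {i j : Fin n} (hij : i ≠ j) :
    rA t (chi i) + rA t (chi j) ≤ 1 := by
  have hle : ∀ p, chi j p ≤ 1 - chi i p := by
    intro p
    unfold chi
    by_cases hpj : p = j
    · have hji : j ≠ i := Ne.symm hij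
      have hpi : p ≠ i := by rw [hpj]; exact hji
      simp [hpj, hpi, hji]
    · split_ifs <;> norm_num
  have := rA_mono t hle
  rw [rA_reflect] at this
  linarith

/-- Key lemma: if the A-singleton values at two distinct coordinates sum to `1`,
then the B-singleton value at every other coordinate vanishes. -/
lemma lemZ {n : ℕ} (t : (LangN 4).Term (Fin n)) :
    ∀ (i j k : Fin n), i ≠ j → k ≠ i → k ≠ j →
      rA t (chi i) + rA t (chi j) = 1 → rB t (chi k) = 0 := by
  induction t with
  | var p =>
      intro i j k hij hki hkj hsum
      rw [rA_var, rA_var] at hsum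
      rw [rB_var]
      unfold chi at *
      by_cases hpi : p = i
      · have : p ≠ k := fun h => hki (h.symm.trans hpi)
        simp [show p ≠ k from this]
      · by_cases hpj : p = j
        · have : p ≠ k := fun h => hkj (h.symm.trans hpj)
          simp [show p ≠ k from this]
        · simp [hpi, hpj] at hsum
  | func F ts ih =>
      intro i j k hij hki hkj hsum
      rcases F with ⟨⟨e⟩⟩
      subst e
      erw [rA_func', rA_func'] at hsum
      have hp0 := rA_pair (ts 0) hij
      have hp1 := rA_pair (ts 1) hij
      have hp2 := rA_pair (ts 2) hij
      have hp3 := rA_pair (ts 3) hij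
      obtain ⟨h4, hdisj⟩ := mainA _ _ _ _ _ _ _ _ hp0 hp1 hp2 hp3 (by linarith [hsum])
      have hb3 : rB (ts 3) (chi k) = 0 := ih 3 i j k hij hki hkj h4
      have hbnn : ∀ s : Fin 4, 0 ≤ rB (ts s) (chi k) :=
        fun s => rB_nonneg (ts s) (chi_nonneg k)
      erw [rB_func]
      rw [hb3]
      apply tB6_zero _ _ _ _ (hbnn 0) (hbnn 1) (hbnn 2) rfl
      rcases hdisj with h | h | h
      · exact Or.inl (ih 0 i j k hij hki hkj h)
      · exact Or.inr (Or.inl (ih 1 i j k hij hki hkj h))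
      · exact Or.inr (Or.inr (ih 2 i j k hij hki hkj h))

/-- The B-structure has no near-unanimity-like term: the B-singleton values of a
term cannot all vanish. -/
lemma noNU {n : ℕ} (t : (LangN 4).Term (Fin n))
    (h : ∀ p : Fin n, rB t (chi p) = 0) : False := by
  induction t with
  | var q =>
      have := h q
      rw [rB_var] at this
      unfold chi at this
      simp at this
  | func F ts ih =>
      rcases F with ⟨⟨e⟩⟩
      subst e
      apply ih 3
      intro p
      have hp := h p
      erw [rB_func] at hp
      have hbnn : ∀ s : Fin 4, 0 ≤ rB (ts s) (chi p) :=
        fun s => rB_nonneg (ts s) (chi_nonneg p)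
      exact tB6_d_zero _ _ _ _ (hbnn 0) (hbnn 1) (hbnn 2) (hbnn 3) hp

/-! ### Splitting realization in the product structure into the two coordinates. -/

lemma CpStruct_funMap {k : ℕ} (f : (LangN 4).Functions k) (v : Fin k → ℚ × ℚ) :
    @Structure.funMap (LangN 4) (ℚ × ℚ) CpStruct k f v
      = (@Structure.funMap (LangN 4) ℚ AStruct k f (fun i => (v i).1),
         @Structure.funMap (LangN 4) ℚ BStruct k f (fun i => (v i).2)) := rfl

lemma realize_prod {n : ℕ} (t : (LangN 4).Term (Fin n)) (v : Fin n → ℚ × ℚ) :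
    @Term.realize (LangN 4) (ℚ × ℚ) CpStruct _ v t
      = (rA t (fun i => (v i).1), rB t (fun i => (v i).2)) := by
  induction t with
  | var i => rfl
  | func F ts ih =>
      show @Structure.funMap (LangN 4) (ℚ × ℚ) CpStruct _ F
            (fun k => @Term.realize (LangN 4) (ℚ × ℚ) CpStruct _ v (ts k)) = _
      rw [CpStruct_funMap]
      congr 1
      · show @Structure.funMap (LangN 4) ℚ AStruct _ F
            (fun k => ((@Term.realize (LangN 4) (ℚ × ℚ) CpStruct _ v (ts k))).1) = _
        have : (fun k => ((@Term.realize (LangN 4) (ℚ × ℚ) CpStruct _ v (ts k))).1)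
            = fun k => rA (ts k) (fun i => (v i).1) := by
          funext k
          rw [ih k]
        rw [this]
        rfl
      · show @Structure.funMap (LangN 4) ℚ BStruct _ F
            (fun k => ((@Term.realize (LangN 4) (ℚ × ℚ) CpStruct _ v (ts k))).2) = _
        have : (fun k => ((@Term.realize (LangN 4) (ℚ × ℚ) CpStruct _ v (ts k))).2)
            = fun k => rB (ts k) (fun i => (v i).2) := by
          funext k
          rw [ih k]
        rw [this]
        rfl

theorem stmt_18 (m : ℕ) (hm : 1 ≤ m) :
    ¬ @HasPlusTerms (LangN 4) (ℚ × ℚ) CpStruct 2 m := by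
  rintro ⟨f, g1, g2, _hfI, _hg1I, _hg2I, h1, h2⟩
  classical
  -- indicator patterns in the product structure project to `chi` patterns
  have hproj1 : ∀ (c : Fin (2+m)),
      (fun p => ((if p = c then ((1:ℚ),(1:ℚ)) else ((0:ℚ),(0:ℚ))) : ℚ × ℚ).1) = chi c := by
    intro c
    funext p
    by_cases h : p = c <;> simp [chi, h]
  have hproj2 : ∀ (c : Fin (2+m)),
      (fun p => ((if p = c then ((1:ℚ),(1:ℚ)) else ((0:ℚ),(0:ℚ))) : ℚ × ℚ).2) = chi c := by
    intro c
    funext p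
    by_cases h : p = c <;> simp [chi, h]
  have hproj1' : ∀ (c : Fin 2),
      (fun p => ((if p = c then ((1:ℚ),(1:ℚ)) else ((0:ℚ),(0:ℚ))) : ℚ × ℚ).1) = chi c := by
    intro c
    funext p
    by_cases h : p = c <;> simp [chi, h]
  have hproj2' : ∀ (c : Fin m),
      (fun p => ((if p = c then ((1:ℚ),(1:ℚ)) else ((0:ℚ),(0:ℚ))) : ℚ × ℚ).2) = chi c := by
    intro c
    funext p
    by_cases h : p = c <;> simp [chi, h]
  -- the A-side values of f at the first two coordinates, via g1
  have hAeq : ∀ i : Fin 2,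
      rA f (chi (Fin.castAdd m i)) = rA g1 (chi i) := by
    intro i
    have h := h1 i ((0:ℚ),(0:ℚ)) ((1:ℚ),(1:ℚ))
    rw [realize_prod, realize_prod] at h
    have h' : rA f (fun p => ((if p = Fin.castAdd m i then ((1:ℚ),(1:ℚ)) else ((0:ℚ),(0:ℚ))) : ℚ × ℚ).1)
        = rA g1 (fun p => ((if p = i then ((1:ℚ),(1:ℚ)) else ((0:ℚ),(0:ℚ))) : ℚ × ℚ).1) :=
      congrArg Prod.fst h
    rw [hproj1 (Fin.castAdd m i), hproj1' i] at h'
    exact h'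
  -- g1 is binary, so its two A-singleton values sum to one
  have hg1sum : rA g1 (chi (0 : Fin 2)) + rA g1 (chi (1 : Fin 2)) = 1 := by
    have hchi : chi (1 : Fin 2) = fun p => 1 - chi (0 : Fin 2) p := by
      funext p
      fin_cases p <;> simp [chi]
    rw [hchi, rA_reflect]
    ring
  have hfsum : rA f (chi (Fin.castAdd m (0 : Fin 2)))
      + rA f (chi (Fin.castAdd m (1 : Fin 2))) = 1 := by
    rw [hAeq 0, hAeq 1]
    exact hg1sum
  -- distinctness of positions
  have hne01 : (Fin.castAdd m (0 : Fin 2)) ≠ (Fin.castAdd m (1 : Fin 2)) := by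
    intro h
    have := congrArg Fin.val h
    simp [Fin.coe_castAdd] at this
  have hnei : ∀ p : Fin m, (Fin.natAdd 2 p) ≠ (Fin.castAdd m (0 : Fin 2)) := by
    intro p h
    have := congrArg Fin.val h
    simp [Fin.coe_natAdd, Fin.coe_castAdd] at this
  have hnej : ∀ p : Fin m, (Fin.natAdd 2 p) ≠ (Fin.castAdd m (1 : Fin 2)) := by
    intro p h
    have := congrArg Fin.val h
    simp [Fin.coe_natAdd, Fin.coe_castAdd] at this
    omega
  -- B-side values of f at tail positions vanish
  have hBtail : ∀ p : Fin m, rB f (chi (Fin.natAdd 2 p)) = 0 := by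
    intro p
    exact lemZ f (Fin.castAdd m 0) (Fin.castAdd m 1) (Fin.natAdd 2 p)
      hne01 (hnei p) (hnej p) hfsum
  -- so all B-singleton values of g2 vanish
  have hg2zero : ∀ p : Fin m, rB g2 (chi p) = 0 := by
    intro p
    have h := h2 p ((0:ℚ),(0:ℚ)) ((1:ℚ),(1:ℚ))
    rw [realize_prod, realize_prod] at h
    have h' : rB f (fun q => ((if q = Fin.natAdd 2 p then ((1:ℚ),(1:ℚ)) else ((0:ℚ),(0:ℚ))) : ℚ × ℚ).2)
        = rB g2 (fun q => ((if q = p then ((1:ℚ),(1:ℚ)) else ((0:ℚ),(0:ℚ))) : ℚ × ℚ).2) :=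
      congrArg Prod.snd h
    rw [hproj2 (Fin.natAdd 2 p), hproj2' p] at h'
    rw [← h']
    exact hBtail p
  exact noNU g2 hg2zero
end

section
/- Let m ≥ 1 and let x, y, z, w ∈ ℚᵐ be vectors each belonging to V_m. Then the vector whose k-th coordinate is tᴮ₆(xₖ, yₖ, zₖ, wₖ, wₖ, wₖ) also belongs to V_m; that is, V_m is closed under the coordinatewise application of the 4-ary operation s(a,b,c,d) = tᴮ₆(a,b,c,d,d,d), for every m. -/
lemma tB6_eq (v : Fin 6 → ℚ) :
    tB 6 v = (v (Tuple.sort v 2) + v (Tuple.sort v 3)) / 2 := by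
  unfold tB
  norm_num [Finset.sum_filter, Fin.sum_univ_six]

lemma tB6_nonneg_s19 (v : Fin 6 → ℚ) (h : ∀ i, 0 ≤ v i) : 0 ≤ tB 6 v := by
  rw [tB6_eq]
  have := h (Tuple.sort v 2)
  have := h (Tuple.sort v 3)
  linarith

lemma sorted3_ge (v : Fin 6 → ℚ) (d : ℚ) (h3 : v 3 = d) (h4 : v 4 = d) (h5 : v 5 = d) :
    d ≤ v (Tuple.sort v 3) := by
  by_contra hlt
  push_neg at hlt
  have hm := Tuple.monotone_sort v
  have hall : ∀ i : Fin 6, i ≤ 3 → v (Tuple.sort v i) < d := fun i hi =>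
    lt_of_le_of_lt (hm hi) hlt
  have hmem : ∀ j : Fin 6, v j < d → j ∈ ({0,1,2} : Finset (Fin 6)) := by
    intro j hj
    fin_cases j <;> simp_all
  have hsub : ∀ i : Fin 6, i ≤ 3 → (Tuple.sort v i : Fin 6) ∈ ({0,1,2} : Finset (Fin 6)) :=
    fun i hi => hmem _ (hall i hi)
  have hinj : Set.InjOn (Tuple.sort v) ↑({0,1,2,3} : Finset (Fin 6)) :=
    fun a _ b _ h => (Tuple.sort v).injective h
  have hcard := Finset.card_le_card_of_injOn (Tuple.sort v)
    (fun a ha => by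
      have : a ≤ 3 := by rw [Finset.mem_coe] at ha; fin_cases ha <;> decide
      exact hsub a this) hinj
  simp at hcard

theorem stmt_19 (m : ℕ) (hm : 1 ≤ m) (x y z w : Fin m → ℚ)
    (hx : Vmem m x) (hy : Vmem m y) (hz : Vmem m z) (hw : Vmem m w) :
    Vmem m (fun k => tB 6 ![x k, y k, z k, w k, w k, w k]) := by
  have hnn : ∀ k (i : Fin 6), (0:ℚ) ≤ ![x k, y k, z k, w k, w k, w k] i := by
    intro k i
    fin_cases i <;> first | exact hx.1 k | exact hy.1 k | exact hz.1 k | exact hw.1 k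
  constructor
  · intro k
    exact tB6_nonneg_s19 _ (hnn k)
  · obtain ⟨k, hk⟩ := hw.2
    refine ⟨k, ?_⟩
    have hd : 0 < w k := lt_of_le_of_ne (hw.1 k) (Ne.symm hk)
    set v : Fin 6 → ℚ := ![x k, y k, z k, w k, w k, w k] with hv
    have h3 : w k ≤ v (Tuple.sort v 3) := sorted3_ge v (w k) rfl rfl rfl
    have h2 : (0:ℚ) ≤ v (Tuple.sort v 2) := hnn k _
    have : (0:ℚ) < tB 6 v := by
      rw [tB6_eq]; linarith
    simpa using this.ne'
end
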